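/- arXiv:2102.00810 — 12 statements merged into one kernel-verified Lean document; each statement's English description precedes it below -/
import Mathlib

section
/- For every x, y ∈ ℱ, every L ≥ L_F and every τ > 0, one has f₁(y) ≤ ψ_{x,L,τ}(y), i.e. ‖F̂(y)‖ ≤ τ/2 + ‖F̂(x) + F̂'(x)(y − x)‖²/(2τ) + (L/2)·‖y − x‖². (Lemma 1: the local model is an upper bound on the residual norm.) -/
/-- **Lemma 1.** For every `x, y ∈ 𝓕`, every `L ≥ L_F` and every `τ > 0`, the regularized
local model `ψ_{x,L,τ}` is an upper bound on the residual norm: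
`‖F̂(y)‖ ≤ τ/2 + ‖F̂(x) + F̂'(x)(y − x)‖²/(2τ) + (L/2)‖y − x‖²`. -/
theorem local_model_upper_bound
    {n m : ℕ}
    (F : EuclideanSpace ℝ (Fin n) → EuclideanSpace ℝ (Fin m))
    (F' : EuclideanSpace ℝ (Fin n) →
      EuclideanSpace ℝ (Fin n) →L[ℝ] EuclideanSpace ℝ (Fin m))
    (hF : ∀ x, HasFDerivAt F (F' x) x)
    (𝓕 : Set (EuclideanSpace ℝ (Fin n)))
    (h𝓕closed : IsClosed 𝓕) (h𝓕conv : Convex ℝ 𝓕)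
    (LF : ℝ) (hLF : 0 < LF)
    (hLip : ∀ x ∈ 𝓕, ∀ y ∈ 𝓕, ‖F' y - F' x‖ ≤ LF * ‖y - x‖)
    (x : EuclideanSpace ℝ (Fin n)) (hx : x ∈ 𝓕)
    (y : EuclideanSpace ℝ (Fin n)) (hy : y ∈ 𝓕)
    (L τ : ℝ) (hL : LF ≤ L) (hτ : 0 < τ) :
    ‖F y‖ ≤ τ / 2 + ‖F x + F' x (y - x)‖ ^ 2 / (2 * τ) + L / 2 * ‖y - x‖ ^ 2 := by
  set v := y - x with hv
  -- Taylor bound: ‖F y - F x - F' x v‖ ≤ LF/2 * ‖v‖^2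
  set g : ℝ → EuclideanSpace ℝ (Fin m) :=
    fun t => F (x + t • v) - F x - t • (F' x v) with hg
  set C : ℝ := LF * ‖v‖ ^ 2 with hC
  have hmem : ∀ t ∈ Set.Icc (0:ℝ) 1, x + t • v ∈ 𝓕 := by
    intro t ht
    have : x + t • v = (1 - t) • x + t • y := by
      rw [hv]; module
    rw [this]
    exact h𝓕conv hx hy (by linarith [ht.2]) ht.1 (by ring)
  have hgderiv : ∀ t : ℝ, HasDerivAt g (F' (x + t • v) v - F' x v) t := by
    intro t
    have h1 : HasDerivAt (fun t : ℝ => x + t • v) v t := by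
      simpa using ((hasDerivAt_id t).smul_const v).const_add x
    have h2 : HasDerivAt (fun t : ℝ => F (x + t • v)) (F' (x + t • v) v) t :=
      (hF (x + t • v)).comp_hasDerivAt t h1
    have h3 : HasDerivAt (fun t : ℝ => t • (F' x v)) (F' x v) t := by
      simpa using (hasDerivAt_id t).smul_const (F' x v)
    exact (h2.sub_const (F x)).sub h3
  have hbound : ∀ t ∈ Set.Ico (0:ℝ) 1, ‖F' (x + t • v) v - F' x v‖ ≤ C * t := by
    intro t ht
    have h1 : ‖F' (x + t • v) v - F' x v‖ ≤ ‖F' (x + t • v) - F' x‖ * ‖v‖ := by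
      have := (F' (x + t • v) - F' x).le_opNorm v
      simpa using this
    have h2 : ‖F' (x + t • v) - F' x‖ ≤ LF * ‖(x + t • v) - x‖ :=
      hLip x hx _ (hmem t ⟨ht.1, ht.2.le⟩)
    have h3 : ‖(x + t • v) - x‖ = t * ‖v‖ := by
      rw [add_sub_cancel_left, norm_smul, Real.norm_eq_abs, abs_of_nonneg ht.1]
    calc ‖F' (x + t • v) v - F' x v‖ ≤ (LF * (t * ‖v‖)) * ‖v‖ := by
          refine h1.trans ?_
          exact mul_le_mul_of_nonneg_right (h3 ▸ h2) (norm_nonneg v)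
      _ = C * t := by rw [hC]; ring
  have hB : ∀ t : ℝ, HasDerivAt (fun t : ℝ => C / 2 * t ^ 2) (C * t) t := by
    intro t
    have := (hasDerivAt_pow 2 t).const_mul (C / 2)
    refine this.congr_deriv ?_
    norm_num
    ring
  have key : ‖g 1‖ ≤ C / 2 * 1 ^ 2 := by
    have h0 : ‖g 0‖ ≤ C / 2 * (0:ℝ) ^ 2 := by simp [hg]
    exact image_norm_le_of_norm_deriv_right_le_deriv_boundary
      (fun t ht => (hgderiv t).continuousAt.continuousWithinAt)
      (fun t ht => (hgderiv t).hasDerivWithinAt)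
      h0 hB hbound (Set.right_mem_Icc.2 zero_le_one)
  have htaylor : ‖F y - (F x + F' x v)‖ ≤ LF / 2 * ‖v‖ ^ 2 := by
    have : g 1 = F y - (F x + F' x v) := by
      simp [hg, hv]
      abel
    rw [← this]
    calc ‖g 1‖ ≤ C / 2 * 1 ^ 2 := key
      _ = LF / 2 * ‖v‖ ^ 2 := by rw [hC]; ring
  have h1 : ‖F y‖ ≤ ‖F x + F' x v‖ + LF / 2 * ‖v‖ ^ 2 := by
    calc ‖F y‖ ≤ ‖F x + F' x v‖ + ‖F y - (F x + F' x v)‖ := by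
          simpa using norm_add_le (F x + F' x v) (F y - (F x + F' x v))
      _ ≤ ‖F x + F' x v‖ + LF / 2 * ‖v‖ ^ 2 := by linarith
  have hAM : ‖F x + F' x v‖ ≤ τ / 2 + ‖F x + F' x v‖ ^ 2 / (2 * τ) := by
    rw [← sub_nonneg]
    have heq : τ / 2 + ‖F x + F' x v‖ ^ 2 / (2 * τ) - ‖F x + F' x v‖
        = (‖F x + F' x v‖ - τ) ^ 2 / (2 * τ) := by
      field_simp
      ring
    rw [heq]
    positivity
  have hLL : LF / 2 * ‖v‖ ^ 2 ≤ L / 2 * ‖v‖ ^ 2 := by nlinarith [sq_nonneg ‖v‖]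
  linarith
end

section
/- Let τ > 0 and L ≥ L_F, and suppose x ∈ ℱ and T_{L,τ}(x) ∈ ℱ. Then τ/2 + f₂(x)/(2τ) − f₁(T_{L,τ}(x)) ≥ (L/2)·‖T_{L,τ}(x) − x‖². (Lemma 2: decrease of the residual measured by the proximal step length.) -/
set_option maxHeartbeats 1000000


/-- The regularized local model `ψ_{x,L,τ}(y)`. -/
noncomputable def psi {n m : ℕ}
    (F : EuclideanSpace ℝ (Fin n) → EuclideanSpace ℝ (Fin m))
    (F' : EuclideanSpace ℝ (Fin n) →
      EuclideanSpace ℝ (Fin n) →L[ℝ] EuclideanSpace ℝ (Fin m))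
    (x : EuclideanSpace ℝ (Fin n)) (L τ : ℝ) (y : EuclideanSpace ℝ (Fin n)) : ℝ :=
  τ / 2 + ‖F x + F' x (y - x)‖ ^ 2 / (2 * τ) + L / 2 * ‖y - x‖ ^ 2

/-- Taylor bound: if the derivative is Lipschitz on a convex set, then
`‖F T - F x - F' x (T - x)‖ ≤ LF / 2 * ‖T - x‖ ^ 2`. -/
theorem taylor_bound_aux
    {n m : ℕ}
    (F : EuclideanSpace ℝ (Fin n) → EuclideanSpace ℝ (Fin m))
    (F' : EuclideanSpace ℝ (Fin n) →
      EuclideanSpace ℝ (Fin n) →L[ℝ] EuclideanSpace ℝ (Fin m))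
    (hF : ∀ x, HasFDerivAt F (F' x) x)
    (𝓕 : Set (EuclideanSpace ℝ (Fin n))) (h𝓕conv : Convex ℝ 𝓕)
    (LF : ℝ)
    (hLip : ∀ x ∈ 𝓕, ∀ y ∈ 𝓕, ‖F' y - F' x‖ ≤ LF * ‖y - x‖)
    (x : EuclideanSpace ℝ (Fin n)) (hx : x ∈ 𝓕)
    (T : EuclideanSpace ℝ (Fin n)) (hT : T ∈ 𝓕) :
    ‖F T - F x - F' x (T - x)‖ ≤ LF / 2 * ‖T - x‖ ^ 2 := by
  set v : EuclideanSpace ℝ (Fin n) := T - x with hv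
  set w : EuclideanSpace ℝ (Fin m) := F' x v with hw
  set g : ℝ → EuclideanSpace ℝ (Fin m) := fun t => F (x + t • v) - F x - t • w with hg
  set g' : ℝ → EuclideanSpace ℝ (Fin m) :=
    fun t => F' (x + t • v) v - w with hg'
  have hline : ∀ t : ℝ, HasDerivAt (fun s : ℝ => x + s • v) v t := by
    intro t
    simpa using ((hasDerivAt_id t).smul_const v).const_add x
  have hgderiv : ∀ t : ℝ, HasDerivAt g (g' t) t := by
    intro t
    have h1 : HasDerivAt (fun s : ℝ => F (x + s • v)) (F' (x + t • v) v) t := by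
      exact (hF (x + t • v)).comp_hasDerivAt t (hline t)
    have h2 : HasDerivAt (fun s : ℝ => s • w) w t := by
      simpa using (hasDerivAt_id t).smul_const w
    exact (h1.sub_const (F x)).sub h2
  have hmem : ∀ t ∈ Set.Icc (0:ℝ) 1, x + t • v ∈ 𝓕 := by
    intro t ht
    have := h𝓕conv hx hT (by linarith [ht.1, ht.2] : (0:ℝ) ≤ 1 - t) ht.1 (by linarith)
    have heq : (1 - t) • x + t • T = x + t • v := by
      simp only [hv, smul_sub, sub_smul, one_smul]
      abel
    rwa [heq] at this
  set B : ℝ → ℝ := fun t => LF * ‖v‖ ^ 2 / 2 * t ^ 2 with hB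
  have hBderiv : ∀ t : ℝ, HasDerivAt B (LF * ‖v‖ ^ 2 * t) t := by
    intro t
    have := (hasDerivAt_pow 2 t).const_mul (LF * ‖v‖ ^ 2 / 2)
    simpa [B] using this.congr_deriv (by ring)
  have hbound : ∀ t ∈ Set.Ico (0:ℝ) 1, ‖g' t‖ ≤ LF * ‖v‖ ^ 2 * t := by
    intro t ht
    have hxt : x + t • v ∈ 𝓕 := hmem t ⟨ht.1, le_of_lt ht.2⟩
    have h1 : ‖g' t‖ ≤ ‖F' (x + t • v) - F' x‖ * ‖v‖ := by
      have := (F' (x + t • v) - F' x).le_opNorm v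
      simpa [g', hw] using this
    have h2 : ‖F' (x + t • v) - F' x‖ ≤ LF * ‖x + t • v - x‖ := hLip x hx _ hxt
    have h3 : ‖x + t • v - x‖ = t * ‖v‖ := by
      simp [norm_smul, abs_of_nonneg ht.1]
    have hv0 : (0:ℝ) ≤ ‖v‖ := norm_nonneg v
    calc ‖g' t‖ ≤ ‖F' (x + t • v) - F' x‖ * ‖v‖ := h1
      _ ≤ LF * (t * ‖v‖) * ‖v‖ := by
          rw [← h3]; exact mul_le_mul_of_nonneg_right h2 hv0
      _ = LF * ‖v‖ ^ 2 * t := by ring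
  have key := image_norm_le_of_norm_deriv_right_le_deriv_boundary
    (f := g) (f' := g') (a := 0) (b := 1)
    (fun t _ => (hgderiv t).continuousAt.continuousWithinAt)
    (fun t _ => (hgderiv t).hasDerivWithinAt)
    (B := B) (B' := fun t => LF * ‖v‖ ^ 2 * t)
    (by simp [g, B]) hBderiv hbound
  have h1 := key (Set.right_mem_Icc.2 zero_le_one)
  have hgT : g 1 = F T - F x - F' x (T - x) := by
    simp [g, hv, hw]
  rw [hgT] at h1
  calc ‖F T - F x - F' x (T - x)‖ ≤ B 1 := h1
    _ = LF / 2 * ‖T - x‖ ^ 2 := by simp [B, hv]; ring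

/-- **Lemma 2.** Decrease of the residual measured by the proximal step length:
`τ/2 + f₂(x)/(2τ) − f₁(T_{L,τ}(x)) ≥ (L/2)‖T_{L,τ}(x) − x‖²`, where `T_{L,τ}(x)`
is the (unique) minimizer of `ψ_{x,L,τ}` over `E₁`. -/
theorem decrease_by_prox_step_length
    {n m : ℕ}
    (F : EuclideanSpace ℝ (Fin n) → EuclideanSpace ℝ (Fin m))
    (F' : EuclideanSpace ℝ (Fin n) →
      EuclideanSpace ℝ (Fin n) →L[ℝ] EuclideanSpace ℝ (Fin m))
    (hF : ∀ x, HasFDerivAt F (F' x) x)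
    (𝓕 : Set (EuclideanSpace ℝ (Fin n)))
    (h𝓕closed : IsClosed 𝓕) (h𝓕conv : Convex ℝ 𝓕)
    (LF : ℝ) (hLF : 0 < LF)
    (hLip : ∀ x ∈ 𝓕, ∀ y ∈ 𝓕, ‖F' y - F' x‖ ≤ LF * ‖y - x‖)
    (x : EuclideanSpace ℝ (Fin n)) (hx : x ∈ 𝓕)
    (L τ : ℝ) (hτ : 0 < τ) (hL : LF ≤ L)
    (T : EuclideanSpace ℝ (Fin n))
    (hTmin : ∀ y, psi F F' x L τ T ≤ psi F F' x L τ y)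
    (hT : T ∈ 𝓕) :
    L / 2 * ‖T - x‖ ^ 2 ≤ τ / 2 + ‖F x‖ ^ 2 / (2 * τ) - ‖F T‖ := by
  set u : EuclideanSpace ℝ (Fin m) := F x with hu
  set v : EuclideanSpace ℝ (Fin m) := F' x (T - x) with hv
  set d : ℝ := ‖T - x‖ with hd
  have hLpos : 0 < L := lt_of_lt_of_le hLF hL
  -- Step 1: Taylor bound
  have htaylor : ‖F T‖ ≤ ‖u + v‖ + LF / 2 * d ^ 2 := by
    have h1 := taylor_bound_aux F F' hF 𝓕 h𝓕conv LF hLip x hx T hT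
    have heq : F T - (u + v) = F T - F x - F' x (T - x) := by
      rw [hu, hv]; abel
    have h2' := norm_sub_norm_le (F T) (u + v)
    rw [heq] at h2'
    have h2 : ‖F T‖ ≤ ‖u + v‖ + ‖F T - F x - F' x (T - x)‖ := by linarith
    calc ‖F T‖ ≤ ‖u + v‖ + ‖F T - F x - F' x (T - x)‖ := h2
      _ ≤ ‖u + v‖ + LF / 2 * d ^ 2 := by linarith
  -- Step 2: strong convexity consequence (multiplied by 2τ):
  have h2τ : (0:ℝ) < 2 * τ := by linarith
  have hstrong : ‖u + v‖ ^ 2 + 2 * L * d ^ 2 * τ ≤ ‖u‖ ^ 2 := by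
    -- test the minimality at y_t = x + (1-t) • (T - x), t ∈ (0,1]
    have hkey : ∀ t : ℝ, 0 < t → t ≤ 1 →
        ‖u + v‖ ^ 2 + L * (2 - t) * d ^ 2 * τ ≤ ‖u‖ ^ 2 := by
      intro t ht0 ht1
      have hmin := hTmin (x + (1 - t) • (T - x))
      have hyx : (x + (1 - t) • (T - x)) - x = (1 - t) • (T - x) := by abel
      have hFy : F' x ((x + (1 - t) • (T - x)) - x) = (1 - t) • v := by
        rw [hyx, map_smul]
      have hnyx : ‖(x + (1 - t) • (T - x)) - x‖ ^ 2 = (1 - t) ^ 2 * d ^ 2 := by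
        rw [hyx, norm_smul, mul_pow]
        congr 1
        rw [Real.norm_eq_abs, sq_abs]
      set I : ℝ := inner ℝ (u + v) v with hI
      have hpsiT : psi F F' x L τ T = τ / 2 + ‖u + v‖ ^ 2 / (2 * τ) + L / 2 * d ^ 2 := by
        simp [psi, hu, hv, hd]
      have hexp : ‖u + (1 - t) • v‖ ^ 2
          = ‖u + v‖ ^ 2 - 2 * t * I + t ^ 2 * ‖v‖ ^ 2 := by
        have h1 : u + (1 - t) • v = (u + v) - t • v := by
          rw [sub_smul, one_smul]; abel
        rw [h1, norm_sub_sq_real]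
        simp only [real_inner_smul_right, norm_smul, Real.norm_eq_abs, mul_pow, sq_abs]
        try rw [hI]
        try ring
      have hnu : ‖u‖ ^ 2 = ‖u + v‖ ^ 2 - 2 * I + ‖v‖ ^ 2 := by
        have h1 : ‖(u + v) - v‖ ^ 2 = ‖u + v‖ ^ 2 - 2 * I + ‖v‖ ^ 2 := by
          rw [norm_sub_sq_real]
          try rw [hI]
          try ring
        simpa using h1
      have hpsiY : psi F F' x L τ (x + (1 - t) • (T - x))
          = τ / 2 + ‖u + (1 - t) • v‖ ^ 2 / (2 * τ) + L / 2 * ((1 - t) ^ 2 * d ^ 2) := by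
        simp only [psi, hFy, hnyx, hu]
      rw [hpsiT, hpsiY, hexp] at hmin
      -- clear denominators
      have hmin' := mul_le_mul_of_nonneg_left hmin (le_of_lt h2τ)
      have hτne : τ ≠ 0 := ne_of_gt hτ
      have hmin'' : ‖u + v‖ ^ 2 + L * d ^ 2 * τ
          ≤ (‖u + v‖ ^ 2 - 2 * t * I + t ^ 2 * ‖v‖ ^ 2) + L * ((1 - t) ^ 2 * d ^ 2) * τ := by
        have e1 : 2 * τ * (‖u + v‖ ^ 2 / (2 * τ)) = ‖u + v‖ ^ 2 := by
          field_simp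
        have e2 : 2 * τ * ((‖u + v‖ ^ 2 - 2 * t * I + t ^ 2 * ‖v‖ ^ 2) / (2 * τ))
            = ‖u + v‖ ^ 2 - 2 * t * I + t ^ 2 * ‖v‖ ^ 2 := by
          field_simp
        nlinarith [hmin', e1, e2]
      -- divide by t
      have hstep : 0 ≤ t * ‖v‖ ^ 2 + τ * L * d ^ 2 * (t - 2) - 2 * I := by
        have h6 : 0 ≤ t * (t * ‖v‖ ^ 2 + τ * L * d ^ 2 * (t - 2) - 2 * I) := by
          nlinarith [hmin'']
        by_contra hneg
        push_neg at hneg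
        nlinarith [mul_pos ht0 (neg_pos.mpr hneg)]
      have hvsq : (0:ℝ) ≤ ‖v‖ ^ 2 := sq_nonneg _
      nlinarith [hstep, mul_nonneg (sub_nonneg.mpr ht1) hvsq]
    -- pass to the limit t → 0⁺
    by_contra hcon
    push_neg at hcon
    set A : ℝ := ‖u‖ ^ 2 - (‖u + v‖ ^ 2 + 2 * L * d ^ 2 * τ) with hA
    have hAneg : A < 0 := by simp only [hA]; linarith
    have hd2pos : 0 < d ^ 2 := by
      rcases (sq_nonneg d).lt_or_eq with h | h
      · exact h
      · exfalso
        have hk1 := hkey 1 one_pos le_rfl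
        rw [← h] at hk1
        simp only [hA, ← h] at hAneg
        nlinarith [hk1]
    have hdenpos : 0 < L * d ^ 2 * τ := by positivity
    set t : ℝ := min 1 (-A / (2 * (L * d ^ 2 * τ))) with htdef
    have ht0 : 0 < t := lt_min one_pos (div_pos (by linarith) (by linarith))
    have ht1 : t ≤ 1 := min_le_left _ _
    have ht2 : t ≤ -A / (2 * (L * d ^ 2 * τ)) := min_le_right _ _
    have ht3 : t * (2 * (L * d ^ 2 * τ)) ≤ -A := by
      exact (le_div_iff₀ (by positivity)).mp ht2
    have hk := hkey t ht0 ht1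
    -- hk : ‖u+v‖² + L(2−t)d²τ ≤ ‖u‖², i.e. −L t d² τ ≤ A
    have : L * t * d ^ 2 * τ < -A := by nlinarith
    simp only [hA] at this hk
    nlinarith
  have hstrongdiv : ‖u + v‖ ^ 2 / (2 * τ) + L * d ^ 2 ≤ ‖u‖ ^ 2 / (2 * τ) := by
    have h' : (‖u + v‖ ^ 2 + 2 * L * d ^ 2 * τ) / (2 * τ) ≤ ‖u‖ ^ 2 / (2 * τ) := by
      gcongr
    have heq2 : (‖u + v‖ ^ 2 + 2 * L * d ^ 2 * τ) / (2 * τ)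
        = ‖u + v‖ ^ 2 / (2 * τ) + L * d ^ 2 := by
      field_simp
    linarith
  -- Step 3: AM-GM
  have hamgm : ‖u + v‖ ≤ τ / 2 + ‖u + v‖ ^ 2 / (2 * τ) := by
    rw [← sub_nonneg]
    have heq3 : τ / 2 + ‖u + v‖ ^ 2 / (2 * τ) - ‖u + v‖ = (‖u + v‖ - τ) ^ 2 / (2 * τ) := by
      field_simp
      ring
    rw [heq3]
    positivity
  -- Combine
  have hLF2 : LF / 2 * d ^ 2 ≤ L / 2 * d ^ 2 := by
    have := sq_nonneg d
    nlinarith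
  calc L / 2 * ‖T - x‖ ^ 2 = L / 2 * d ^ 2 := by rw [hd]
    _ ≤ τ / 2 + ‖u‖ ^ 2 / (2 * τ) - ‖F T‖ := by
        have h1 : ‖F T‖ + L / 2 * d ^ 2 ≤ ‖u + v‖ + LF / 2 * d ^ 2 + L / 2 * d ^ 2 := by
          linarith
        have h2 : ‖u + v‖ + LF / 2 * d ^ 2 + L / 2 * d ^ 2
            ≤ τ / 2 + ‖u + v‖ ^ 2 / (2 * τ) + L * d ^ 2 := by
          linarith
        have h3 : τ / 2 + ‖u + v‖ ^ 2 / (2 * τ) + L * d ^ 2 ≤ τ / 2 + ‖u‖ ^ 2 / (2 * τ) := by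
          linarith [hstrongdiv]
        linarith
end

section
/- Let L > 0, τ > 0, and suppose x ∈ ℱ and T_{L,τ}(x) ∈ ℱ. Then for every y ∈ ℱ, ψ_{x,L,τ}(T_{L,τ}(x)) ≤ τ/2 + (L/2)·‖y − x‖² + f₂(y)/(2τ) + f₁(y)·L_F·‖y − x‖²/(2τ) + L_F²·‖y − x‖⁴/(8τ). (Lemma 4: upper bound on the minimal value of the local model.) -/
/-- **Lemma 4.** Upper bound on the minimal value of the local model:
for every `y ∈ 𝓕`,
`ψ_{x,L,τ}(T_{L,τ}(x)) ≤ τ/2 + (L/2)‖y−x‖² + f₂(y)/(2τ) + f₁(y)L_F‖y−x‖²/(2τ) + L_F²‖y−x‖⁴/(8τ)`. -/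
theorem min_local_model_upper_bound
    {n m : ℕ}
    (F : EuclideanSpace ℝ (Fin n) → EuclideanSpace ℝ (Fin m))
    (F' : EuclideanSpace ℝ (Fin n) →
      EuclideanSpace ℝ (Fin n) →L[ℝ] EuclideanSpace ℝ (Fin m))
    (hF : ∀ x, HasFDerivAt F (F' x) x)
    (𝓕 : Set (EuclideanSpace ℝ (Fin n)))
    (h𝓕closed : IsClosed 𝓕) (h𝓕conv : Convex ℝ 𝓕)
    (LF : ℝ) (hLF : 0 < LF)
    (hLip : ∀ x ∈ 𝓕, ∀ y ∈ 𝓕, ‖F' y - F' x‖ ≤ LF * ‖y - x‖)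
    (x : EuclideanSpace ℝ (Fin n)) (hx : x ∈ 𝓕)
    (L τ : ℝ) (hL : 0 < L) (hτ : 0 < τ)
    (T : EuclideanSpace ℝ (Fin n))
    (hTmin : ∀ y, psi F F' x L τ T ≤ psi F F' x L τ y)
    (hT : T ∈ 𝓕) :
    ∀ y ∈ 𝓕, psi F F' x L τ T
      ≤ τ / 2 + L / 2 * ‖y - x‖ ^ 2 + ‖F y‖ ^ 2 / (2 * τ)
        + ‖F y‖ * LF * ‖y - x‖ ^ 2 / (2 * τ) + LF ^ 2 * ‖y - x‖ ^ 4 / (8 * τ) := by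
  intro y hy
  set v : EuclideanSpace ℝ (Fin n) := y - x with hv
  -- the segment from x to y stays in 𝓕
  have hseg : ∀ t : ℝ, t ∈ Set.Icc (0:ℝ) 1 → x + t • v ∈ 𝓕 := by
    intro t ht
    have h := h𝓕conv hx hy (by linarith [ht.2] : (0:ℝ) ≤ 1 - t) ht.1 (by ring)
    have : (1 - t) • x + t • y = x + t • v := by
      rw [hv]; module
    rwa [this] at h
  -- derivative along the segment
  have hderiv : ∀ t : ℝ, HasDerivAt (fun s : ℝ => F (x + s • v)) (F' (x + t • v) v) t := by
    intro t
    have h1 : HasDerivAt (fun s : ℝ => x + s • v) v t := by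
      simpa using ((hasDerivAt_id t).smul_const v).const_add x
    exact (hF (x + t • v)).comp_hasDerivAt t h1
  -- continuity of the derivative path on [0,1]
  have hcont : ContinuousOn (fun t : ℝ => F' (x + t • v) v) (Set.Icc (0:ℝ) 1) := by
    refine (LipschitzOnWith.of_dist_le_mul (K := (LF * ‖v‖ * ‖v‖).toNNReal) ?_).continuousOn
    intro s hs t ht
    have h1 : ‖F' (x + s • v) - F' (x + t • v)‖ ≤ LF * ‖(x + s • v) - (x + t • v)‖ :=
      hLip _ (hseg t ht) _ (hseg s hs)
    have h2 : (x + s • v) - (x + t • v) = (s - t) • v := by module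
    rw [dist_eq_norm, dist_eq_norm]
    have h3 : F' (x + s • v) v - F' (x + t • v) v = (F' (x + s • v) - F' (x + t • v)) v := by
      simp
    rw [h3]
    calc ‖(F' (x + s • v) - F' (x + t • v)) v‖
        ≤ ‖F' (x + s • v) - F' (x + t • v)‖ * ‖v‖ :=
          ContinuousLinearMap.le_opNorm _ _
      _ ≤ (LF * ‖(s - t) • v‖) * ‖v‖ := by
          rw [← h2]; exact mul_le_mul_of_nonneg_right h1 (norm_nonneg _)
      _ ≤ (LF * ‖v‖ * ‖v‖).toNNReal * ‖s - t‖ := by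
          rw [norm_smul]
          have : (0:ℝ) ≤ LF * ‖v‖ * ‖v‖ := by positivity
          rw [Real.coe_toNNReal _ this]
          simp [Real.norm_eq_abs]; ring_nf; rfl
  -- FTC along the segment
  have huicc : Set.uIcc (0:ℝ) 1 = Set.Icc (0:ℝ) 1 := Set.uIcc_of_le zero_le_one
  have hint : IntervalIntegrable (fun t : ℝ => F' (x + t • v) v - F' x v)
      MeasureTheory.volume 0 1 := by
    apply ContinuousOn.intervalIntegrable
    rw [huicc]
    exact hcont.sub continuousOn_const
  have hg : ∀ t ∈ Set.uIcc (0:ℝ) 1,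
      HasDerivAt (fun s : ℝ => F (x + s • v) - s • (F' x v))
        (F' (x + t • v) v - F' x v) t := by
    intro t _
    have h2 : HasDerivAt (fun s : ℝ => s • (F' x v)) (F' x v) t := by
      simpa using (hasDerivAt_id t).smul_const (F' x v)
    exact (hderiv t).sub h2
  have hFTC := intervalIntegral.integral_eq_sub_of_hasDerivAt hg hint
  have hxv : x + v = y := by rw [hv]; module
  have hFTC' : (∫ t in (0:ℝ)..1, (F' (x + t • v) v - F' x v))
      = F y - F' x v - F x := by
    rw [hFTC]
    simp [hxv]
  -- norm bound on the remainder
  have hrem : ‖F y - F' x v - F x‖ ≤ LF * ‖v‖ ^ 2 / 2 := by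
    rw [← hFTC']
    have hb : ∀ᵐ t ∂MeasureTheory.volume.restrict (Set.uIoc (0:ℝ) 1),
        ‖F' (x + t • v) v - F' x v‖ ≤ LF * ‖v‖ ^ 2 * t := by
      refine MeasureTheory.ae_restrict_of_forall_mem measurableSet_uIoc ?_
      intro t ht
      rw [Set.uIoc_of_le zero_le_one] at ht
      have htI : t ∈ Set.Icc (0:ℝ) 1 := ⟨le_of_lt ht.1, ht.2⟩
      have h1 : ‖F' (x + t • v) - F' x‖ ≤ LF * ‖(x + t • v) - x‖ :=
        hLip _ hx _ (hseg t htI)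
      have h2 : ‖(x + t • v) - x‖ = t * ‖v‖ := by
        have : (x + t • v) - x = t • v := by module
        rw [this, norm_smul, Real.norm_eq_abs, abs_of_nonneg (le_of_lt ht.1)]
      have h3 : F' (x + t • v) v - F' x v = (F' (x + t • v) - F' x) v := by simp
      rw [h3]
      calc ‖(F' (x + t • v) - F' x) v‖
          ≤ ‖F' (x + t • v) - F' x‖ * ‖v‖ := ContinuousLinearMap.le_opNorm _ _
        _ ≤ (LF * ‖(x + t • v) - x‖) * ‖v‖ :=
            mul_le_mul_of_nonneg_right h1 (norm_nonneg _)
        _ = LF * ‖v‖ ^ 2 * t := by rw [h2]; ring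
    calc ‖∫ t in (0:ℝ)..1, (F' (x + t • v) v - F' x v)‖
        ≤ |∫ t in (0:ℝ)..1, LF * ‖v‖ ^ 2 * t| :=
          intervalIntegral.norm_integral_le_abs_of_norm_le hb
            (by apply ContinuousOn.intervalIntegrable; fun_prop)
      _ = LF * ‖v‖ ^ 2 / 2 := by
          rw [intervalIntegral.integral_const_mul, integral_id]
          rw [abs_of_nonneg (by positivity)]
          ring
  -- main chain
  have hkey : ‖F x + F' x v‖ ≤ ‖F y‖ + LF * ‖v‖ ^ 2 / 2 := by
    have : F x + F' x v = F y - (F y - F' x v - F x) := by abel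
    rw [this]
    exact le_trans (norm_sub_le _ _) (by linarith [hrem])
  have hmain := hTmin y
  have hpsiy : psi F F' x L τ y = τ / 2 + ‖F x + F' x v‖ ^ 2 / (2 * τ) + L / 2 * ‖v‖ ^ 2 := by
    rw [psi, hv]
  refine le_trans hmain ?_
  rw [hpsiy]
  have ha : (0:ℝ) ≤ ‖F x + F' x v‖ := norm_nonneg _
  have hFy : (0:ℝ) ≤ ‖F y‖ := norm_nonneg _
  have hsq : ‖F x + F' x v‖ ^ 2 ≤ (‖F y‖ + LF * ‖v‖ ^ 2 / 2) ^ 2 := by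
    nlinarith [hkey, ha]
  have h2τ : (0:ℝ) < 2 * τ := by linarith
  have hdiv : ‖F x + F' x v‖ ^ 2 / (2 * τ) ≤ (‖F y‖ + LF * ‖v‖ ^ 2 / 2) ^ 2 / (2 * τ) :=
    (div_le_div_iff_of_pos_right h2τ).mpr hsq
  have hexp : (‖F y‖ + LF * ‖v‖ ^ 2 / 2) ^ 2 / (2 * τ)
      = ‖F y‖ ^ 2 / (2 * τ) + ‖F y‖ * LF * ‖v‖ ^ 2 / (2 * τ) + LF ^ 2 * ‖v‖ ^ 4 / (8 * τ) := by
    field_simp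
    ring
  show _ ≤ τ / 2 + L / 2 * ‖v‖ ^ 2 + ‖F y‖ ^ 2 / (2 * τ)
      + ‖F y‖ * LF * ‖v‖ ^ 2 / (2 * τ) + LF ^ 2 * ‖v‖ ^ 4 / (8 * τ)
  linarith [hdiv, hexp.le, hexp.ge]
end

section
/- Let m ≤ n be positive integers, μ > 0, and let A be a real m×n matrix such that A·Aᵀ ⪰ μ·I_m in the Loewner order. Then for every ξ > 0 and every t ∈ [0,1], A·(ξ·I_n + Aᵀ·A)^(−t)·Aᵀ ⪰ (μ/(ξ + μ)^t)·I_m, where (ξ·I_n + Aᵀ·A)^(−t) denotes the matrix obtained by applying the function r ↦ r^(−t) to the eigenvalues in a spectral decomposition of the symmetric positive-definite matrix ξ·I_n + Aᵀ·A (Hermitian functional calculus). (Lemma 5.) -/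
open Matrix

lemma loewner_scalar_aux {ξ μ t s : ℝ} (hξ : 0 < ξ) (hμ : 0 < μ) (ht0 : 0 ≤ t) (ht1 : t ≤ 1)
    (hs : ξ + μ ≤ s) : μ / (ξ + μ) ^ t ≤ (s - ξ) * s ^ (-t) := by
  have hξμ : (0:ℝ) < ξ + μ := by linarith
  have hs0 : (0:ℝ) < s := by linarith
  have hbt : (0:ℝ) < (ξ + μ) ^ t := Real.rpow_pos_of_pos hξμ t
  have hst : (0:ℝ) < s ^ t := Real.rpow_pos_of_pos hs0 t
  rw [Real.rpow_neg hs0.le, ← div_eq_mul_inv, div_le_div_iff₀ hbt hst]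
  have hb1 : (1:ℝ) ≤ s / (ξ + μ) := (one_le_div hξμ).mpr hs
  have h1 : (s / (ξ + μ)) ^ t ≤ s / (ξ + μ) := by
    calc (s / (ξ + μ)) ^ t ≤ (s / (ξ + μ)) ^ (1:ℝ) :=
          Real.rpow_le_rpow_of_exponent_le hb1 ht1
      _ = s / (ξ + μ) := Real.rpow_one _
  have h2 : s ^ t = (ξ + μ) ^ t * (s / (ξ + μ)) ^ t := by
    rw [← Real.mul_rpow hξμ.le (by positivity), mul_div_cancel₀ _ hξμ.ne']
  have h3 : μ * (s / (ξ + μ)) ≤ s - ξ := by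
    rw [div_eq_mul_inv, ← mul_assoc, ← div_eq_mul_inv, div_le_iff₀ hξμ]
    nlinarith
  calc μ * s ^ t = (ξ + μ) ^ t * (μ * (s / (ξ + μ)) ^ t) := by rw [h2]; ring
    _ ≤ (ξ + μ) ^ t * (μ * (s / (ξ + μ))) := by
        apply mul_le_mul_of_nonneg_left _ hbt.le
        exact mul_le_mul_of_nonneg_left h1 hμ.le
    _ ≤ (ξ + μ) ^ t * (s - ξ) := mul_le_mul_of_nonneg_left h3 hbt.le
    _ = (s - ξ) * (ξ + μ) ^ t := mul_comm _ _

/-- **Lemma 5.** If `A Aᵀ ⪰ μ I_m` then for any `ξ > 0` and `t ∈ [0,1]`,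
`A (ξ I_n + Aᵀ A)^(−t) Aᵀ ⪰ (μ/(ξ+μ)^t) I_m`, the power being taken through any
spectral decomposition `ξ I_n + Aᵀ A = U (diagonal d) Uᵀ` with `U` orthogonal and `d > 0`. -/
theorem loewner_bound_regularized_power
    (m n : ℕ) (hm : 0 < m) (hmn : m ≤ n) (μ : ℝ) (hμ : 0 < μ)
    (A : Matrix (Fin m) (Fin n) ℝ)
    (hA : (A * Aᵀ - μ • (1 : Matrix (Fin m) (Fin m) ℝ)).PosSemidef)
    (ξ : ℝ) (hξ : 0 < ξ) (t : ℝ) (ht : t ∈ Set.Icc (0 : ℝ) 1)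
    (U : Matrix (Fin n) (Fin n) ℝ) (hU : Uᵀ * U = 1)
    (d : Fin n → ℝ) (hd : ∀ i, 0 < d i)
    (hdec : ξ • (1 : Matrix (Fin n) (Fin n) ℝ) + Aᵀ * A = U * Matrix.diagonal d * Uᵀ) :
    (A * (U * Matrix.diagonal (fun i => d i ^ (-t)) * Uᵀ) * Aᵀ
      - (μ / (ξ + μ) ^ t) • (1 : Matrix (Fin m) (Fin m) ℝ)).PosSemidef := by
  obtain ⟨ht0, ht1⟩ := ht
  set c : ℝ := μ / (ξ + μ) ^ t with hc
  have hUU : U * Uᵀ = 1 := mul_eq_one_comm.mp hU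
  set B : Matrix (Fin m) (Fin n) ℝ := A * U with hB
  have hBt : Bᵀ = Uᵀ * Aᵀ := by rw [hB, transpose_mul]
  have hBBt : B * Bᵀ = A * Aᵀ := by
    rw [hBt, hB, Matrix.mul_assoc, ← Matrix.mul_assoc U, hUU, Matrix.one_mul]
  have hAtA : Aᵀ * A = U * Matrix.diagonal d * Uᵀ - ξ • 1 := by
    rw [← hdec]; abel
  have hsub : U * Matrix.diagonal d * Uᵀ - ξ • (1 : Matrix (Fin n) (Fin n) ℝ)
      = U * (Matrix.diagonal (fun i => d i - ξ)) * Uᵀ := by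
    have h1 : Matrix.diagonal (fun i => d i - ξ)
        = Matrix.diagonal d - ξ • (1 : Matrix (Fin n) (Fin n) ℝ) := by
      ext i j
      by_cases h : i = j <;>
        simp [Matrix.diagonal_apply, h, Matrix.one_apply, Matrix.sub_apply, Matrix.smul_apply]
    rw [h1, Matrix.mul_sub, Matrix.sub_mul, Matrix.mul_smul, Matrix.mul_one,
      Matrix.smul_mul, hUU]
  have hBtB : Bᵀ * B = Matrix.diagonal (fun i => d i - ξ) := by
    rw [hBt, hB, Matrix.mul_assoc, ← Matrix.mul_assoc Aᵀ, hAtA, hsub,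
      Matrix.mul_assoc (U * Matrix.diagonal fun i => d i - ξ), hU, Matrix.mul_one,
      ← Matrix.mul_assoc, hU, Matrix.one_mul]
  have hcol : ∀ i, (∑ j, B j i * B j i) = d i - ξ := by
    intro i
    have h := (Matrix.ext_iff.2 hBtB) i i
    simpa [Matrix.mul_apply, Matrix.transpose_apply, Matrix.diagonal_apply_eq] using h
  have hdge : ∀ i, ξ ≤ d i := by
    intro i
    have h := hcol i
    have h2 : (0:ℝ) ≤ ∑ j, B j i * B j i := Finset.sum_nonneg fun j _ => mul_self_nonneg _
    linarith [h ▸ h2]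
  have hzero : ∀ i, d i = ξ → ∀ j, B j i = 0 := by
    intro i hi j
    have h := hcol i
    rw [hi, sub_self] at h
    have h2 := (Finset.sum_eq_zero_iff_of_nonneg
      (fun j _ => mul_self_nonneg (B j i))).mp h j (Finset.mem_univ j)
    exact mul_self_eq_zero.mp h2
  -- conjugate hA by B to get the eigenvalue lower bound
  have hconj : (Bᵀ * (A * Aᵀ - μ • 1) * B).PosSemidef := by
    have h := hA.mul_mul_conjTranspose_same Bᵀ
    rwa [conjTranspose_eq_transpose_of_trivial, transpose_transpose] at h
  have hconj' : Bᵀ * (A * Aᵀ - μ • 1) * B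
      = Matrix.diagonal (fun i => (d i - ξ) * (d i - ξ) - μ * (d i - ξ)) := by
    rw [← hBBt, Matrix.mul_sub, Matrix.sub_mul, Matrix.mul_smul, Matrix.mul_one,
      Matrix.smul_mul, ← Matrix.mul_assoc Bᵀ B Bᵀ,
      Matrix.mul_assoc (Bᵀ * B) Bᵀ B, hBtB, diagonal_mul_diagonal]
    ext i j
    by_cases h : i = j <;>
      simp [Matrix.diagonal_apply, h, Matrix.sub_apply, Matrix.smul_apply, mul_comm]
  have hkey : ∀ i, d i = ξ ∨ ξ + μ ≤ d i := by
    intro i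
    have h := (posSemidef_diagonal_iff.mp (hconj' ▸ hconj)) i
    rcases eq_or_lt_of_le (hdge i) with h0 | h0
    · exact Or.inl h0.symm
    · right
      have hs : 0 < d i - ξ := by linarith
      nlinarith [h, hs]
  -- pseudo-inverse diagonal and projector Q
  set g : Fin n → ℝ := fun i => if d i = ξ then 0 else (d i - ξ)⁻¹ with hg
  have hBgd : B * Matrix.diagonal (fun i => g i * (d i - ξ)) = B := by
    ext j i
    rw [Matrix.mul_diagonal]
    by_cases h : d i = ξ
    · simp [hg, h, hzero i h j]
    · have hne : d i - ξ ≠ 0 := sub_ne_zero_of_ne h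
      simp [hg, h, inv_mul_cancel₀ hne]
  set Q : Matrix (Fin m) (Fin m) ℝ := B * Matrix.diagonal g * Bᵀ with hQdef
  have hQsym : Qᵀ = Q := by
    rw [hQdef, transpose_mul (B * Matrix.diagonal g) Bᵀ,
      transpose_mul B (Matrix.diagonal g), transpose_transpose, diagonal_transpose]
    rw [hB, Matrix.mul_assoc, Matrix.mul_assoc, Matrix.mul_assoc A U]
  have hQB : Q * B = B := by
    rw [hQdef, Matrix.mul_assoc (B * Matrix.diagonal g) Bᵀ B, hBtB,
      Matrix.mul_assoc B (Matrix.diagonal g), diagonal_mul_diagonal, hBgd]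
  have hQBBt : Q * (B * Bᵀ) = B * Bᵀ := by
    rw [← Matrix.mul_assoc Q B Bᵀ, hQB]
  have hQQ : Q * Q = Q := by
    nth_rewrite 2 [hQdef]
    rw [← Matrix.mul_assoc Q (B * Matrix.diagonal g) Bᵀ,
      ← Matrix.mul_assoc Q B (Matrix.diagonal g), hQB, ← hQdef]
  -- show Q = 1
  have hR2 : (1 - Q) * (1 - Q) = 1 - Q := by
    rw [Matrix.sub_mul, Matrix.mul_sub, Matrix.mul_sub, hQQ]
    simp only [one_mul, mul_one]
    abel
  have hRt : (1 - Q)ᵀ = 1 - Q := by rw [transpose_sub, transpose_one, hQsym]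
  have hQ1 : Q = 1 := by
    have hRconj : ((1 - Q) * (A * Aᵀ - μ • 1) * (1 - Q)ᵀ).PosSemidef := by
      have h := hA.mul_mul_conjTranspose_same (1 - Q)
      rwa [conjTranspose_eq_transpose_of_trivial] at h
    have hcomp : (1 - Q) * (A * Aᵀ - μ • 1) * (1 - Q)ᵀ = (-μ) • (1 - Q) := by
      rw [hRt, ← hBBt]
      have h1 : (1 - Q) * (B * Bᵀ - μ • 1) = (-μ) • (1 - Q) := by
        rw [Matrix.mul_sub, Matrix.sub_mul, one_mul, hQBBt, sub_self, zero_sub,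
          Matrix.mul_smul, mul_one, neg_smul]
      rw [h1, Matrix.smul_mul, hR2]
    rw [hcomp] at hRconj
    have hPzero : ∀ x : Fin m → ℝ, (1 - Q) *ᵥ x = 0 := by
      intro x
      have h := hRconj.dotProduct_mulVec_nonneg x
      rw [smul_mulVec, dotProduct_smul] at h
      have hdp : x ⬝ᵥ ((1 - Q) *ᵥ x) = ((1 - Q) *ᵥ x) ⬝ᵥ ((1 - Q) *ᵥ x) := by
        conv_lhs => rw [← hR2]
        rw [← mulVec_mulVec, dotProduct_mulVec, ← vecMul_transpose, hRt]
      simp only [star_trivial] at h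
      rw [hdp, smul_eq_mul] at h
      have h2 : ((1 - Q) *ᵥ x) ⬝ᵥ ((1 - Q) *ᵥ x) ≤ 0 := by nlinarith
      have h3 : (0:ℝ) ≤ ((1 - Q) *ᵥ x) ⬝ᵥ ((1 - Q) *ᵥ x) := by
        simpa [dotProduct] using Finset.sum_nonneg fun j _ =>
          mul_self_nonneg (((1 - Q) *ᵥ x) j)
      exact dotProduct_self_eq_zero.mp (le_antisymm h2 h3)
    have hsub0 : (1 : Matrix (Fin m) (Fin m) ℝ) - Q = 0 := by
      ext i j
      have h := congrFun (hPzero (Pi.single j 1)) i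
      simpa using h
    exact (sub_eq_zero.mp hsub0).symm
  -- assemble the final matrix identity
  have hM : A * (U * Matrix.diagonal (fun i => d i ^ (-t)) * Uᵀ) * Aᵀ - c • 1
      = B * Matrix.diagonal (fun i => d i ^ (-t) - c * g i) * Bᵀ := by
    have e1 : Matrix.diagonal (fun i => d i ^ (-t) - c * g i)
        = Matrix.diagonal (fun i => d i ^ (-t)) - c • Matrix.diagonal g := by
      ext i j
      by_cases h : i = j <;>
        simp [Matrix.diagonal_apply, h, Matrix.sub_apply, Matrix.smul_apply]
    rw [e1, Matrix.mul_sub, Matrix.sub_mul, Matrix.mul_smul, Matrix.smul_mul, ← hQdef,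
      hQ1]
    rw [← Matrix.mul_assoc A (U * Matrix.diagonal fun i => d i ^ (-t)) Uᵀ,
      ← Matrix.mul_assoc A U (Matrix.diagonal fun i => d i ^ (-t)), ← hB,
      Matrix.mul_assoc (B * Matrix.diagonal fun i => d i ^ (-t)) Uᵀ Aᵀ, ← hBt]
  rw [hM]
  have hent : ∀ i, 0 ≤ d i ^ (-t) - c * g i := by
    intro i
    rcases hkey i with h | h
    · simp only [hg, h, eq_self_iff_true, if_true, mul_zero, sub_zero]
      exact (Real.rpow_pos_of_pos hξ _).le
    · have hne : d i ≠ ξ := by intro hh; rw [hh] at h; linarith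
      have hdi : 0 < d i - ξ := sub_pos.mpr (lt_of_le_of_ne (hdge i) (Ne.symm hne))
      simp only [hg, if_neg hne]
      rw [sub_nonneg, ← div_eq_mul_inv, div_le_iff₀ hdi]
      calc c ≤ (d i - ξ) * d i ^ (-t) := loewner_scalar_aux hξ hμ ht0 ht1 h
        _ = d i ^ (-t) * (d i - ξ) := mul_comm _ _
  have hdpsd : (Matrix.diagonal (fun i => d i ^ (-t) - c * g i)).PosSemidef :=
    posSemidef_diagonal_iff.mpr hent
  have h := hdpsd.mul_mul_conjTranspose_same B
  rwa [conjTranspose_eq_transpose_of_trivial] at h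
end

section
/- Let x ∈ ℱ with f₁(x) > 0 and 0 < ‖x − x*‖ ≤ min{ 2ς/(5L_F), (1/(12L_F))·( (3M_F + 5ς) − √((3M_F + 5ς)² − 24ς²) ) }. Let 0 < L ≤ 2L_F, put t = ‖x − x*‖ and x⁺ = T_{L, f₁(x)}(x). Then ‖x⁺ − x*‖ ≤ ( (3L_F·t²)/2 + t·√( f₁(x)·L + L_F²·t²/4 ) ) / (ς − L_F·t) < t. (Lemma 6: contraction region for the exact step with τ = f₁(x).) -/
open scoped RealInnerProductSpace

lemma lin_coeff_zero (a b : ℝ) (ha : 0 ≤ a) (h : ∀ ε : ℝ, 0 ≤ b * ε + a * ε ^ 2) : b = 0 := by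
  have h1 : (0:ℝ) < a + 1 := by linarith
  have hb : b = b / (a + 1) * (a + 1) := (div_mul_cancel₀ b (by positivity)).symm
  set c := b / (a + 1) with hc
  have h2 := h (-c)
  rw [hb] at h2
  have hc0 : c = 0 := by nlinarith
  rw [hb, hc0, zero_mul]


set_option maxHeartbeats 2000000 in
lemma arith_main (ς MF LF t τ L a u ρ : ℝ) (hς : 0 < ς) (hMF : 0 < MF) (hLF : 0 < LF)
    (htpos : 0 < t) (hτpos : 0 < τ) (hL0 : 0 < L) (hL : L ≤ 2 * LF)
    (hrad1 : t ≤ 2 * ς / (5 * LF))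
    (hrad2 : t ≤ 1 / (12 * LF) * ((3 * MF + 5 * ς)
      - Real.sqrt ((3 * MF + 5 * ς) ^ 2 - 24 * ς ^ 2)))
    (hτle : τ ≤ MF * t) (hρ : ρ ≤ LF * t ^ 2) (hρ0 : 0 ≤ ρ) (ha0 : 0 ≤ a) (hu0 : 0 ≤ u)
    (hJs : (ς - LF * t) * u ≤ a)
    (hkey : a ^ 2 + τ * L * u ^ 2 ≤ ρ * a + τ * L * (t * u)) :
    u ≤ (3 * LF * t ^ 2 / 2 + t * Real.sqrt (τ * L + LF ^ 2 * t ^ 2 / 4)) / (ς - LF * t)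
    ∧ (3 * LF * t ^ 2 / 2 + t * Real.sqrt (τ * L + LF ^ 2 * t ^ 2 / 4)) / (ς - LF * t) < t := by
  set S : ℝ := Real.sqrt (τ * L + LF ^ 2 * t ^ 2 / 4) with hSdef
  have hτL : 0 < τ * L := mul_pos hτpos hL0
  have hS0 : 0 ≤ S := Real.sqrt_nonneg _
  have hSsq : S ^ 2 = τ * L + LF ^ 2 * t ^ 2 / 4 := Real.sq_sqrt (by positivity)
  have hq : 0 ≤ ς ^ 2 - (3 * MF + 5 * ς) * (LF * t) + 6 * LF ^ 2 * t ^ 2 := by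
    have hD0 : (0:ℝ) ≤ (3 * MF + 5 * ς) ^ 2 - 24 * ς ^ 2 := by
      linarith [mul_pos hMF hς, sq_nonneg MF, sq_nonneg ς]
    set D := (3 * MF + 5 * ς) ^ 2 - 24 * ς ^ 2 with hDdef
    have hsD : Real.sqrt D ^ 2 = D := Real.sq_sqrt hD0
    have hsD0 : 0 ≤ Real.sqrt D := Real.sqrt_nonneg _
    have h12p : (0:ℝ) < 12 * LF := by linarith
    have h12 : 12 * LF * t ≤ (3 * MF + 5 * ς) - Real.sqrt D := by
      have hmm := mul_le_mul_of_nonneg_left hrad2 h12p.le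
      have heq : 12 * LF * (1 / (12 * LF) * ((3 * MF + 5 * ς) - Real.sqrt D))
          = (3 * MF + 5 * ς) - Real.sqrt D := by
        field_simp
      linarith [hmm, heq.le, heq.ge]
    have hB0 : 0 ≤ (3 * MF + 5 * ς) - 12 * LF * t := by linarith
    have hsq : D ≤ ((3 * MF + 5 * ς) - 12 * LF * t) ^ 2 := by
      calc D = Real.sqrt D ^ 2 := hsD.symm
        _ ≤ ((3 * MF + 5 * ς) - 12 * LF * t) ^ 2 := by
            apply pow_le_pow_left₀ hsD0
            linarith
    linarith [hsq]
  have ht5 : 5 * LF * t ≤ 2 * ς := by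
    have h5 : (0:ℝ) < 5 * LF := by linarith
    rw [le_div_iff₀ h5] at hrad1
    nlinarith
  have hMFt : 0 < MF * (LF * t) := by positivity
  have hstrict : τ * L + LF ^ 2 * t ^ 2 / 4 < (ς - 5 * LF * t / 2) ^ 2 := by
    have hτL2 : τ * L ≤ 2 * LF * MF * t := by
      nlinarith [hτle, hL, hL0.le, mul_nonneg hMF.le htpos.le]
    linarith [hτL2, hq, hMFt]
  have hcpos : 0 < ς - 5 * LF * t / 2 := by
    have hsq : 0 < (ς - 5 * LF * t / 2) ^ 2 := by
      linarith [hstrict, hτL, sq_nonneg (LF * t)]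
    have h0 : 0 ≤ ς - 5 * LF * t / 2 := by linarith
    rcases h0.lt_or_eq with h | h
    · exact h
    · exfalso; rw [← h] at hsq; norm_num at hsq
  have hc : 0 < ς - LF * t := by linarith [hcpos, mul_pos hLF htpos]
  have hSlt : S < ς - 5 * LF * t / 2 := by
    rw [hSdef]
    exact (Real.sqrt_lt' hcpos).mpr hstrict
  have part2 : (3 * LF * t ^ 2 / 2 + t * S) / (ς - LF * t) < t := by
    rw [div_lt_iff₀ hc]
    linarith [mul_lt_mul_of_pos_left hSlt htpos]
  have hbq : a ^ 2 - ρ * a ≤ τ * L * t ^ 2 / 4 := by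
    linarith [hkey, mul_nonneg hτL.le (sq_nonneg (t - 2 * u))]
  have ht2S : (t * S) ^ 2 = τ * L * t ^ 2 + LF ^ 2 * t ^ 2 / 4 * t ^ 2 := by
    rw [mul_pow, hSsq]; ring
  have hρsq : ρ * ρ ≤ LF * t ^ 2 * (LF * t ^ 2) :=
    mul_le_mul hρ hρ hρ0 (by positivity)
  have h1 : (a - ρ / 2) ^ 2 ≤ (t * S) ^ 2 := by
    linarith [hbq, ht2S, hρsq, mul_nonneg hτL.le (sq_nonneg t)]
  have h2 : a - ρ / 2 ≤ t * S := by
    nlinarith [h1, mul_nonneg htpos.le hS0]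
  have haB : a ≤ 3 * LF * t ^ 2 / 2 + t * S := by
    linarith [h2, hρ, mul_pos hLF (mul_pos htpos htpos)]
  have part1 : u ≤ (3 * LF * t ^ 2 / 2 + t * S) / (ς - LF * t) := by
    rw [le_div_iff₀ hc]
    linarith [hJs, haB]
  exact ⟨part1, part2⟩

set_option maxHeartbeats 2000000 in
/-- **Lemma 6.** Contraction region for the exact step with `τ = f₁(x)`. -/
theorem contraction_region_exact_step
    {n m : ℕ}
    (F : EuclideanSpace ℝ (Fin n) → EuclideanSpace ℝ (Fin m))
    (F' : EuclideanSpace ℝ (Fin n) →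
      EuclideanSpace ℝ (Fin n) →L[ℝ] EuclideanSpace ℝ (Fin m))
    (hF : ∀ x, HasFDerivAt F (F' x) x)
    (𝓕 : Set (EuclideanSpace ℝ (Fin n)))
    (h𝓕closed : IsClosed 𝓕) (h𝓕conv : Convex ℝ 𝓕)
    (LF : ℝ) (hLF : 0 < LF)
    (hLip : ∀ x ∈ 𝓕, ∀ y ∈ 𝓕, ‖F' y - F' x‖ ≤ LF * ‖y - x‖)
    (xstar : EuclideanSpace ℝ (Fin n)) (hxstar : xstar ∈ 𝓕)
    (ς : ℝ) (hς : 0 < ς) (MF : ℝ) (hMF : 0 < MF)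
    (hsol : F xstar = 0)
    (hςbound : ∀ h : EuclideanSpace ℝ (Fin n), ς * ‖h‖ ≤ ‖F' xstar h‖)
    (hMFbound : ∀ x ∈ 𝓕, ‖F' x‖ ≤ MF)
    (x : EuclideanSpace ℝ (Fin n)) (hx : x ∈ 𝓕) (hfx : 0 < ‖F x‖)
    (hlow : 0 < ‖x - xstar‖)
    (hrad : ‖x - xstar‖ ≤ min (2 * ς / (5 * LF))
      (1 / (12 * LF) * ((3 * MF + 5 * ς)
        - Real.sqrt ((3 * MF + 5 * ς) ^ 2 - 24 * ς ^ 2))))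
    (L : ℝ) (hL0 : 0 < L) (hL : L ≤ 2 * LF)
    (xp : EuclideanSpace ℝ (Fin n))
    (hxp : ∀ y, psi F F' x L ‖F x‖ xp ≤ psi F F' x L ‖F x‖ y) :
    ‖xp - xstar‖ ≤ (3 * LF * ‖x - xstar‖ ^ 2 / 2
        + ‖x - xstar‖ * Real.sqrt (‖F x‖ * L + LF ^ 2 * ‖x - xstar‖ ^ 2 / 4))
        / (ς - LF * ‖x - xstar‖)
    ∧ (3 * LF * ‖x - xstar‖ ^ 2 / 2
        + ‖x - xstar‖ * Real.sqrt (‖F x‖ * L + LF ^ 2 * ‖x - xstar‖ ^ 2 / 4))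
        / (ς - LF * ‖x - xstar‖) < ‖x - xstar‖ := by
  set J := F' x with hJdef
  set t : ℝ := ‖x - xstar‖ with htdef
  set τ : ℝ := ‖F x‖ with hτdef
  set d : EuclideanSpace ℝ (Fin n) := xp - x with hddef
  set s : EuclideanSpace ℝ (Fin n) := xp - xstar with hsdef
  set e : EuclideanSpace ℝ (Fin n) := x - xstar with hedef
  have htpos : 0 < t := hlow
  have hτpos : 0 < τ := hfx
  have hτne : τ ≠ 0 := ne_of_gt hτpos
  -- first-order optimality
  have hfoc : ∀ v : EuclideanSpace ℝ (Fin n),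
      ⟪F x + J d, J v⟫ + τ * L * ⟪d, v⟫ = 0 := by
    intro v
    have key : ∀ ε : ℝ, 0 ≤ (⟪F x + J d, J v⟫ / τ + L * ⟪d, v⟫) * ε
        + (‖J v‖ ^ 2 / (2 * τ) + L / 2 * ‖v‖ ^ 2) * ε ^ 2 := by
      intro ε
      have h0 := hxp (xp + ε • v)
      simp only [psi] at h0
      have e1 : xp + ε • v - x = d + ε • v := by
        rw [hddef]; abel
      have e2 : F x + J (d + ε • v) = (F x + J d) + ε • J v := by
        rw [map_add, map_smul]; abel
      rw [e1, e2] at h0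
      have hw : ‖(F x + J d) + ε • J v‖ ^ 2
          = ‖F x + J d‖ ^ 2 + 2 * (ε * ⟪F x + J d, J v⟫) + ε ^ 2 * ‖J v‖ ^ 2 := by
        rw [norm_add_sq_real, real_inner_smul_right, norm_smul, Real.norm_eq_abs,
          mul_pow, sq_abs]
      have hd2 : ‖d + ε • v‖ ^ 2
          = ‖d‖ ^ 2 + 2 * (ε * ⟪d, v⟫) + ε ^ 2 * ‖v‖ ^ 2 := by
        rw [norm_add_sq_real, real_inner_smul_right, norm_smul, Real.norm_eq_abs,
          mul_pow, sq_abs]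
      rw [hw, hd2] at h0
      have heq : (⟪F x + J d, J v⟫ / τ + L * ⟪d, v⟫) * ε
          + (‖J v‖ ^ 2 / (2 * τ) + L / 2 * ‖v‖ ^ 2) * ε ^ 2
          = (τ / 2 + (‖F x + J d‖ ^ 2 + 2 * (ε * ⟪F x + J d, J v⟫)
              + ε ^ 2 * ‖J v‖ ^ 2) / (2 * τ)
              + L / 2 * (‖d‖ ^ 2 + 2 * (ε * ⟪d, v⟫) + ε ^ 2 * ‖v‖ ^ 2))
            - (τ / 2 + ‖F x + J d‖ ^ 2 / (2 * τ) + L / 2 * ‖d‖ ^ 2) := by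
        field_simp
        ring
      rw [heq]
      linarith [h0]
    have hz := lin_coeff_zero _ _ (by positivity) key
    have h1 : ⟪F x + J d, J v⟫ / τ = -(L * ⟪d, v⟫) := by linarith
    rw [div_eq_iff hτne] at h1
    linear_combination h1
  -- Taylor / mean value bounds
  have hMVset : Convex ℝ (𝓕 ∩ Metric.closedBall x t) :=
    h𝓕conv.inter (convex_closedBall x t)
  have hxS : x ∈ 𝓕 ∩ Metric.closedBall x t :=
    ⟨hx, Metric.mem_closedBall_self (le_of_lt htpos)⟩
  have hxstarS : xstar ∈ 𝓕 ∩ Metric.closedBall x t := by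
    refine ⟨hxstar, ?_⟩
    rw [Metric.mem_closedBall, dist_eq_norm,
      show xstar - x = -e by rw [hedef]; abel, norm_neg]
  have hnsx : ‖xstar - x‖ = t := by
    rw [htdef, hedef]
    exact norm_sub_rev _ _
  have hρ : ‖F x - J e‖ ≤ LF * t ^ 2 := by
    have hmv := Convex.norm_image_sub_le_of_norm_hasFDerivWithin_le
      (f := fun z => F z - J z) (f' := fun z => F' z - J)
      (fun z _ => ((hF z).sub J.hasFDerivAt).hasFDerivWithinAt)
      (fun z hz => by
        calc ‖F' z - J‖ ≤ LF * ‖z - x‖ := hLip x hx z hz.1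
        _ ≤ LF * t := by
            have hzx := hz.2
            rw [Metric.mem_closedBall, dist_eq_norm] at hzx
            exact mul_le_mul_of_nonneg_left hzx hLF.le)
      hMVset hxS hxstarS
    have hrw : (F xstar - J xstar) - (F x - J x) = -(F x - J e) := by
      rw [hsol, hedef, map_sub]
      abel
    rw [hrw, norm_neg, hnsx] at hmv
    linarith [hmv, sq_nonneg t, (by ring : LF * t * t = LF * t ^ 2)]
  have hτle : τ ≤ MF * t := by
    have hmv := Convex.norm_image_sub_le_of_norm_hasFDerivWithin_le
      (f := F) (f' := F')
      (fun z hz => (hF z).hasFDerivWithinAt)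
      (fun z hz => hMFbound z hz) h𝓕conv hxstar hx
    rw [hsol, sub_zero] at hmv
    rw [hτdef, htdef, hedef]
    exact hmv
  -- lower bound on ‖J s‖
  have hJs : (ς - LF * t) * ‖s‖ ≤ ‖J s‖ := by
    have h1 := hςbound s
    have h2 : ‖F' xstar s - J s‖ ≤ LF * t * ‖s‖ := by
      calc ‖F' xstar s - J s‖ = ‖(F' xstar - J) s‖ := by
            rw [ContinuousLinearMap.sub_apply]
        _ ≤ ‖F' xstar - J‖ * ‖s‖ := (F' xstar - J).le_opNorm s
        _ ≤ (LF * ‖xstar - x‖) * ‖s‖ := by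
            have hlip := hLip x hx xstar hxstar
            rw [← hJdef] at hlip
            exact mul_le_mul_of_nonneg_right hlip (norm_nonneg _)
        _ = LF * t * ‖s‖ := by rw [hnsx]
    have h3 : ‖F' xstar s‖ ≤ ‖F' xstar s - J s‖ + ‖J s‖ := by
      calc ‖F' xstar s‖ = ‖(F' xstar s - J s) + J s‖ := by
            congr 1
            abel
        _ ≤ ‖F' xstar s - J s‖ + ‖J s‖ := norm_add_le _ _
    linarith [h1, h2, h3]
  -- key inequality
  have hds : d = s - e := by rw [hddef, hsdef, hedef]; abel
  have hkey : ‖J s‖ ^ 2 + τ * L * ‖s‖ ^ 2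
      ≤ ‖F x - J e‖ * ‖J s‖ + τ * L * (t * ‖s‖) := by
    have h0 := hfoc s
    rw [hds, map_sub] at h0
    have hinner1 : ⟪F x + (J s - J e), J s⟫
        = ⟪F x - J e, J s⟫ + ‖J s‖ ^ 2 := by
      rw [← real_inner_self_eq_norm_sq, ← inner_add_left]
      congr 1
      abel
    have hinner2 : ⟪s - e, s⟫ = ‖s‖ ^ 2 - ⟪e, s⟫ := by
      rw [inner_sub_left, real_inner_self_eq_norm_sq]
    rw [hinner1, hinner2] at h0
    have hcs1 : ⟪F x - J e, J s⟫ ≥ -(‖F x - J e‖ * ‖J s‖) := by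
      have := real_inner_le_norm (F x - J e) (-(J s))
      rw [inner_neg_right, norm_neg] at this
      linarith
    have hcs2 : ⟪e, s⟫ ≤ ‖e‖ * ‖s‖ := real_inner_le_norm e s
    have hne : ‖e‖ = t := htdef.symm
    rw [hne] at hcs2
    have hmul := mul_le_mul_of_nonneg_left hcs2 (mul_pos hτpos hL0).le
    linarith [h0, hcs1, hmul]
  exact arith_main ς MF LF t τ L ‖J s‖ ‖s‖ ‖F x - J e‖ hς hMF hLF htpos hτpos hL0 hL
    (le_trans hrad (min_le_left _ _)) (le_trans hrad (min_le_right _ _))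
    hτle hρ (norm_nonneg _) (norm_nonneg _) (norm_nonneg _) hJs hkey
end

section
/- Let L ∈ (0, L_F], ε ≥ 0, let k ≥ 1 be an integer and r > 0. Suppose points x₀, x₁, …, x_k ∈ E₁ and numbers L₀, …, L_{k−1} satisfy, for every 0 ≤ i < k: f₁(x_i) > 0, L ≤ L_i ≤ 2L_F, ψ_{x_i,L_i,f₁(x_i)}(x_{i+1}) − ψ_{x_i,L_i,f₁(x_i)}(T_{L_i,f₁(x_i)}(x_i)) ≤ ε, f₁(x_i) ≥ ψ_{x_i,L_i,f₁(x_i)}(x_{i+1}), and f₁(x_{i+1}) ≤ ψ_{x_i,L_i,f₁(x_i)}(x_{i+1}). Then (8L_F²/L)·( ε + (f₁(x₀) − f₁(x_k))/k ) ≥ min_{0≤i<k} ‖2L_F·(T_{2L_F, f₁(x_i)}(x_i) − x_i)‖², and L_F·( ε + (f₁(x₀) − f₁(x_k))/k ) ≥ min_{0≤i<k} 2·(L_F·r)²·κ( Δ_r(x_i)/(4·f₁(x_i)·L_F·r²) ). (Theorem 1: global sublinear convergence of the inexact normalized-squares method.) -/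
/-- `κ(t) = t²/2` for `0 ≤ t ≤ 1`, `κ(t) = t − 1/2` for `t > 1`. -/
noncomputable def kappa (t : ℝ) : ℝ := if t ≤ 1 then t ^ 2 / 2 else t - 1 / 2

/-- `Δ_r(x) = f₂(x) − inf {φ(x,y)² : ‖y − x‖ ≤ r}`. -/
noncomputable def Delta {n m : ℕ}
    (F : EuclideanSpace ℝ (Fin n) → EuclideanSpace ℝ (Fin m))
    (F' : EuclideanSpace ℝ (Fin n) →
      EuclideanSpace ℝ (Fin n) →L[ℝ] EuclideanSpace ℝ (Fin m))
    (r : ℝ) (x : EuclideanSpace ℝ (Fin n)) : ℝ :=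
  ‖F x‖ ^ 2 - sInf ((fun y => ‖F x + F' x (y - x)‖ ^ 2) '' Metric.closedBall x r)

private lemma key1 {n m : ℕ}
    (F : EuclideanSpace ℝ (Fin n) → EuclideanSpace ℝ (Fin m))
    (F' : EuclideanSpace ℝ (Fin n) →
      EuclideanSpace ℝ (Fin n) →L[ℝ] EuclideanSpace ℝ (Fin m))
    (x : EuclideanSpace ℝ (Fin n)) (LF τ : ℝ) (hLF : 0 < LF) (hτ : 0 < τ)
    (hτF : ‖F x‖ = τ) (Tp : EuclideanSpace ℝ (Fin n))
    (hTp : ∀ y, psi F F' x (2 * LF) τ Tp ≤ psi F F' x (2 * LF) τ y) :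
    LF / 2 * ‖Tp - x‖ ^ 2 ≤ τ - psi F F' x (2 * LF) τ Tp := by
  have h := hTp (x + (2⁻¹ : ℝ) • (Tp - x))
  have e1 : x + (2⁻¹ : ℝ) • (Tp - x) - x = (2⁻¹ : ℝ) • (Tp - x) := add_sub_cancel_left x _
  simp only [psi, e1, map_smul] at h ⊢
  set v := F x with hv
  set w := F' x (Tp - x) with hw
  have hW : (0:ℝ) ≤ ‖w‖ ^ 2 := by positivity
  have hvw : ‖v + w‖ ^ 2 = τ ^ 2 + 2 * (inner ℝ v w : ℝ) + ‖w‖ ^ 2 := by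
    rw [norm_add_sq_real, hτF]
  have hvw2 : ‖v + (2⁻¹:ℝ) • w‖ ^ 2 = τ ^ 2 + (inner ℝ v w : ℝ) + 4⁻¹ * ‖w‖ ^ 2 := by
    rw [norm_add_sq_real, hτF, real_inner_smul_right, norm_smul]
    simp [Real.norm_eq_abs]
    ring
  have hd2 : ‖(2⁻¹:ℝ) • (Tp - x)‖ ^ 2 = 4⁻¹ * ‖Tp - x‖ ^ 2 := by
    rw [norm_smul]
    simp [Real.norm_eq_abs]
    ring
  rw [hvw, hvw2, hd2] at h
  rw [hvw]
  have h2τ : (0:ℝ) < 2 * τ := by linarith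
  set p := (inner ℝ v w : ℝ) with hp
  set D := ‖Tp - x‖ ^ 2 with hD
  set W := ‖w‖ ^ 2 with hWdef
  have key : (τ ^ 2 + 2 * p + W) / (2 * τ) ≤ τ / 2 - 3 / 2 * LF * D := by
    rw [div_le_iff₀ h2τ]
    have h' : (τ ^ 2 + 2 * p + W) / (2 * τ) - (τ ^ 2 + p + 4⁻¹ * W) / (2 * τ)
        = (p + 3 / 4 * W) / (2 * τ) := by ring
    have h3 : (p + 3 / 4 * W) / (2 * τ) ≤ -(3 / 4) * (LF * D) := by
      rw [← h']
      linarith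
    have h4 : p + 3 / 4 * W ≤ -(3 / 4) * (LF * D) * (2 * τ) := (div_le_iff₀ h2τ).mp h3
    nlinarith [h4, hW]
  linarith

private lemma key2 {n m : ℕ}
    (F : EuclideanSpace ℝ (Fin n) → EuclideanSpace ℝ (Fin m))
    (F' : EuclideanSpace ℝ (Fin n) →
      EuclideanSpace ℝ (Fin n) →L[ℝ] EuclideanSpace ℝ (Fin m))
    (x : EuclideanSpace ℝ (Fin n)) (LF τ r L' : ℝ)
    (hLF : 0 < LF) (hτ : 0 < τ) (hτF : ‖F x‖ = τ) (hr : 0 < r)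
    (hL'0 : 0 ≤ L') (hL'2 : L' ≤ 2 * LF) (Tp : EuclideanSpace ℝ (Fin n))
    (hTp : ∀ y, psi F F' x L' τ Tp ≤ psi F F' x L' τ y) :
    2 * LF * r ^ 2 * kappa (Delta F F' r x / (4 * τ * LF * r ^ 2))
      ≤ τ - psi F F' x L' τ Tp := by
  -- attain the infimum on the compact ball
  have hgc : Continuous fun y : EuclideanSpace ℝ (Fin n) => ‖F x + F' x (y - x)‖ ^ 2 := by
    fun_prop
  have hK : IsCompact (Metric.closedBall x r) := isCompact_closedBall x r
  have hxmem : x ∈ Metric.closedBall x r := Metric.mem_closedBall_self hr.le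
  have himg : IsCompact ((fun y : EuclideanSpace ℝ (Fin n) => ‖F x + F' x (y - x)‖ ^ 2)
      '' Metric.closedBall x r) := hK.image hgc
  have hmem := himg.sInf_mem (Set.Nonempty.image _ ⟨x, hxmem⟩)
  obtain ⟨y0, hy0, hy0v⟩ := hmem
  simp only at hy0v
  have hΔ' : Delta F F' r x = τ ^ 2 - ‖F x + F' x (y0 - x)‖ ^ 2 := by
    rw [Delta, hτF, ← hy0v]
  set s := ‖F x + F' x (y0 - x)‖ with hsdef
  clear_value s
  have hs0 : 0 ≤ s := hsdef ▸ norm_nonneg _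
  have hy0r : ‖y0 - x‖ ≤ r := by
    have := Metric.mem_closedBall.mp hy0
    rwa [dist_eq_norm] at this
  have hs2 : s ^ 2 ≤ τ ^ 2 := by
    have hgx : (fun y : EuclideanSpace ℝ (Fin n) => ‖F x + F' x (y - x)‖ ^ 2) x = τ ^ 2 := by
      simp [hτF]
    have h1 : sInf ((fun y : EuclideanSpace ℝ (Fin n) => ‖F x + F' x (y - x)‖ ^ 2)
        '' Metric.closedBall x r) ≤ τ ^ 2 :=
      csInf_le himg.bddBelow ⟨x, hxmem, hgx⟩
    rw [hy0v]
    exact h1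
  have hsτ : s ≤ τ := by nlinarith
  set δ := Delta F F' r x / (4 * τ * LF * r ^ 2) with hδdef
  clear_value δ
  have hden : (0:ℝ) < 4 * τ * LF * r ^ 2 := by positivity
  have hδ : δ * (4 * τ * LF * r ^ 2) = τ ^ 2 - s ^ 2 := by
    rw [hδdef, div_mul_cancel₀ _ (ne_of_gt hden), hΔ']
  have hδ0 : 0 ≤ δ := by
    rw [hδdef]
    apply div_nonneg _ hden.le
    rw [hΔ']
    nlinarith
  set α := min δ 1 with hαdef
  clear_value α
  have hα0 : 0 ≤ α := by rw [hαdef]; exact le_min hδ0 zero_le_one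
  have hα1 : α ≤ 1 := by rw [hαdef]; exact min_le_right _ _
  have h2τ : (0:ℝ) < 2 * τ := by linarith
  -- evaluate the model at the trial point
  have h := hTp (x + α • (y0 - x))
  have e1 : x + α • (y0 - x) - x = α • (y0 - x) := add_sub_cancel_left x _
  simp only [psi, e1] at h
  have hcomb : F x + F' x (α • (y0 - x))
      = (1 - α) • F x + α • (F x + F' x (y0 - x)) := by
    rw [map_smul]
    module
  have hn : ‖F x + F' x (α • (y0 - x))‖ ≤ (1 - α) * τ + α * s := by
    rw [hcomb]
    calc ‖(1 - α) • F x + α • (F x + F' x (y0 - x))‖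
        ≤ ‖(1 - α) • F x‖ + ‖α • (F x + F' x (y0 - x))‖ := norm_add_le _ _
      _ = (1 - α) * τ + α * s := by
          rw [norm_smul, norm_smul, Real.norm_eq_abs, Real.norm_eq_abs,
            abs_of_nonneg (by linarith), abs_of_nonneg hα0, hτF, hsdef]
  have hn2 : ‖F x + F' x (α • (y0 - x))‖ ^ 2 ≤ ((1 - α) * τ + α * s) ^ 2 :=
    pow_le_pow_left₀ (norm_nonneg _) hn 2
  have hm : ‖α • (y0 - x)‖ ^ 2 ≤ α ^ 2 * r ^ 2 := by
    rw [norm_smul, Real.norm_eq_abs, abs_of_nonneg hα0, mul_pow]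
    exact mul_le_mul_of_nonneg_left (pow_le_pow_left₀ (norm_nonneg _) hy0r 2) (by positivity)
  have d1 : ‖F x + F' x (α • (y0 - x))‖ ^ 2 / (2 * τ) ≤ ((1 - α) * τ + α * s) ^ 2 / (2 * τ) :=
    (div_le_div_iff_of_pos_right h2τ).mpr hn2
  have d2 : L' / 2 * ‖α • (y0 - x)‖ ^ 2 ≤ LF * (α ^ 2 * r ^ 2) := by
    apply mul_le_mul (by linarith) hm (by positivity) hLF.le
  have hA : τ / 2 - ((1 - α) * τ + α * s) ^ 2 / (2 * τ) - LF * (α ^ 2 * r ^ 2)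
      ≤ τ - psi F F' x L' τ Tp := by
    simp only [psi] at h ⊢
    linarith
  have hB : τ / 2 - ((1 - α) * τ + α * s) ^ 2 / (2 * τ)
      = (τ ^ 2 - ((1 - α) * τ + α * s) ^ 2) / (2 * τ) := by
    field_simp
  have hδα : α * (δ * (4 * τ * LF * r ^ 2)) = α * (τ ^ 2 - s ^ 2) := by rw [hδ]
  have hnum : 4 * τ * LF * r ^ 2 * (α * δ) ≤ τ ^ 2 - ((1 - α) * τ + α * s) ^ 2 := by
    linarith only [hδα, mul_nonneg (mul_nonneg hα0 (sub_nonneg.mpr hα1)) (sq_nonneg (τ - s))]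
  have hdiv : 4 * τ * LF * r ^ 2 * (α * δ) / (2 * τ)
      ≤ (τ ^ 2 - ((1 - α) * τ + α * s) ^ 2) / (2 * τ) :=
    (div_le_div_iff_of_pos_right h2τ).mpr hnum
  have heq : 4 * τ * LF * r ^ 2 * (α * δ) / (2 * τ) = 2 * LF * r ^ 2 * (α * δ) := by
    field_simp
    ring
  have hGap : 2 * LF * r ^ 2 * (α * δ) - LF * (α ^ 2 * r ^ 2) ≤ τ - psi F F' x L' τ Tp := by
    linarith
  rcases le_or_gt δ 1 with hcase | hcase
  · have hα : α = δ := by rw [hαdef]; exact min_eq_left hcase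
    simp only [kappa]
    rw [if_pos hcase]
    rw [hα] at hGap
    linarith
  · have hα : α = 1 := by rw [hαdef]; exact min_eq_right hcase.le
    simp only [kappa]
    rw [if_neg (not_le.mpr hcase)]
    rw [hα] at hGap
    linarith

/-- **Theorem 1.** Global sublinear convergence of the inexact normalized-squares method.
Here `T L τ x` is characterized as the minimizer of `ψ_{x,L,τ}` over `E₁`. -/
theorem global_sublinear_convergence
    {n m : ℕ}
    (F : EuclideanSpace ℝ (Fin n) → EuclideanSpace ℝ (Fin m))
    (F' : EuclideanSpace ℝ (Fin n) →
      EuclideanSpace ℝ (Fin n) →L[ℝ] EuclideanSpace ℝ (Fin m))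
    (hF : ∀ x, HasFDerivAt F (F' x) x)
    (LF : ℝ) (hLF : 0 < LF)
    (hLip : ∀ x y, ‖F' y - F' x‖ ≤ LF * ‖y - x‖)
    (T : ℝ → ℝ → EuclideanSpace ℝ (Fin n) → EuclideanSpace ℝ (Fin n))
    (hT : ∀ L τ x, 0 < L → 0 < τ → ∀ y, psi F F' x L τ (T L τ x) ≤ psi F F' x L τ y)
    (L ε : ℝ) (hL0 : 0 < L) (hLLF : L ≤ LF) (hε : 0 ≤ ε)
    (k : ℕ) (hk : 1 ≤ k) (r : ℝ) (hr : 0 < r)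
    (x : ℕ → EuclideanSpace ℝ (Fin n)) (Lk : ℕ → ℝ)
    (hpos : ∀ i < k, 0 < ‖F (x i)‖)
    (hLk : ∀ i < k, L ≤ Lk i ∧ Lk i ≤ 2 * LF)
    (hstep : ∀ i < k, psi F F' (x i) (Lk i) ‖F (x i)‖ (x (i + 1))
        - psi F F' (x i) (Lk i) ‖F (x i)‖ (T (Lk i) ‖F (x i)‖ (x i)) ≤ ε)
    (hmono : ∀ i < k, psi F F' (x i) (Lk i) ‖F (x i)‖ (x (i + 1)) ≤ ‖F (x i)‖)
    (hub : ∀ i < k, ‖F (x (i + 1))‖ ≤ psi F F' (x i) (Lk i) ‖F (x i)‖ (x (i + 1))) :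
    (Finset.range k).inf' (Finset.nonempty_range_iff.mpr (Nat.one_le_iff_ne_zero.mp hk))
        (fun i => ‖(2 * LF) • (T (2 * LF) ‖F (x i)‖ (x i) - x i)‖ ^ 2)
      ≤ 8 * LF ^ 2 / L * (ε + (‖F (x 0)‖ - ‖F (x k)‖) / (k : ℝ))
    ∧ (Finset.range k).inf' (Finset.nonempty_range_iff.mpr (Nat.one_le_iff_ne_zero.mp hk))
        (fun i => 2 * (LF * r) ^ 2
          * kappa (Delta F F' r (x i) / (4 * ‖F (x i)‖ * LF * r ^ 2)))
      ≤ LF * (ε + (‖F (x 0)‖ - ‖F (x k)‖) / (k : ℝ)) := by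
  classical
  have hkpos : 0 < k := hk
  have hkR : (0:ℝ) < (k:ℝ) := by exact_mod_cast hkpos
  set S : ℝ := ε + (‖F (x 0)‖ - ‖F (x k)‖) / (k : ℝ) with hSdef
  set gap : ℕ → ℝ := fun i =>
    ‖F (x i)‖ - psi F F' (x i) (Lk i) ‖F (x i)‖ (T (Lk i) ‖F (x i)‖ (x i)) with hgapdef
  have hgaple : ∀ i < k, gap i ≤ ε + (‖F (x i)‖ - ‖F (x (i + 1))‖) := by
    intro i hi
    have h1 := hstep i hi
    have h2 := hub i hi
    simp only [hgapdef]
    linarith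
  obtain ⟨i0, hi0k, hi0⟩ : ∃ i0 < k, gap i0 ≤ S := by
    by_contra hcon
    push_neg at hcon
    have hsum1 : ∑ i ∈ Finset.range k, (ε + (‖F (x i)‖ - ‖F (x (i + 1))‖))
        = (k : ℝ) * ε + (‖F (x 0)‖ - ‖F (x k)‖) := by
      rw [Finset.sum_add_distrib, Finset.sum_const, Finset.card_range,
        Finset.sum_range_sub' (fun i => ‖F (x i)‖), nsmul_eq_mul]
    have hsum2 : ∑ i ∈ Finset.range k, gap i
        ≤ (k : ℝ) * ε + (‖F (x 0)‖ - ‖F (x k)‖) := by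
      rw [← hsum1]
      exact Finset.sum_le_sum fun i hi => hgaple i (Finset.mem_range.mp hi)
    have hsum3 : (k : ℝ) * S < ∑ i ∈ Finset.range k, gap i := by
      calc (k : ℝ) * S = ∑ _i ∈ Finset.range k, S := by
            rw [Finset.sum_const, Finset.card_range, nsmul_eq_mul]
        _ < ∑ i ∈ Finset.range k, gap i :=
            Finset.sum_lt_sum_of_nonempty (Finset.nonempty_range_iff.mpr (by omega))
              (fun i hi => hcon i (Finset.mem_range.mp hi))
    have hkS : (k : ℝ) * S = (k : ℝ) * ε + (‖F (x 0)‖ - ‖F (x k)‖) := by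
      rw [hSdef]
      field_simp
    linarith
  have hτ : 0 < ‖F (x i0)‖ := hpos i0 hi0k
  obtain ⟨hLk1, hLk2⟩ := hLk i0 hi0k
  have hLkpos : 0 < Lk i0 := lt_of_lt_of_le hL0 hLk1
  have hgapval : gap i0 = ‖F (x i0)‖
      - psi F F' (x i0) (Lk i0) ‖F (x i0)‖ (T (Lk i0) ‖F (x i0)‖ (x i0)) := rfl
  constructor
  · -- part 1
    have hT2 := hT (2 * LF) ‖F (x i0)‖ (x i0) (by positivity) hτ
    have hkey1 := key1 F F' (x i0) LF ‖F (x i0)‖ hLF hτ rfl _ hT2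
    have hchain1 : psi F F' (x i0) (Lk i0) ‖F (x i0)‖ (T (Lk i0) ‖F (x i0)‖ (x i0))
        ≤ psi F F' (x i0) (Lk i0) ‖F (x i0)‖ (T (2 * LF) ‖F (x i0)‖ (x i0)) :=
      hT (Lk i0) ‖F (x i0)‖ (x i0) hLkpos hτ _
    have hchain2 : psi F F' (x i0) (Lk i0) ‖F (x i0)‖ (T (2 * LF) ‖F (x i0)‖ (x i0))
        ≤ psi F F' (x i0) (2 * LF) ‖F (x i0)‖ (T (2 * LF) ‖F (x i0)‖ (x i0)) := by
      simp only [psi]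
      have hDn : (0:ℝ) ≤ ‖T (2 * LF) ‖F (x i0)‖ (x i0) - x i0‖ ^ 2 := by positivity
      nlinarith [hDn]
    have hd : LF / 2 * ‖T (2 * LF) ‖F (x i0)‖ (x i0) - x i0‖ ^ 2 ≤ S := by
      rw [hgapval] at hi0
      exact hkey1.trans ((sub_le_sub_left (hchain1.trans hchain2) ‖F (x i0)‖).trans hi0)
    have hD0 : (0:ℝ) ≤ ‖T (2 * LF) ‖F (x i0)‖ (x i0) - x i0‖ ^ 2 := by positivity
    have hS0 : 0 ≤ S := le_trans (by positivity) hd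
    refine le_trans (Finset.inf'_le _ (Finset.mem_range.mpr hi0k)) ?_
    have hnorm : ‖(2 * LF) • (T (2 * LF) ‖F (x i0)‖ (x i0) - x i0)‖ ^ 2
        = (2 * LF) ^ 2 * ‖T (2 * LF) ‖F (x i0)‖ (x i0) - x i0‖ ^ 2 := by
      rw [norm_smul, Real.norm_eq_abs, abs_of_pos (by positivity), mul_pow]
    rw [hnorm, div_mul_eq_mul_div, le_div_iff₀ hL0]
    set D := ‖T (2 * LF) ‖F (x i0)‖ (x i0) - x i0‖ ^ 2
    nlinarith [hd, hS0, hD0, mul_nonneg (mul_nonneg (sub_nonneg.mpr hLLF) hD0) (sq_nonneg LF),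
      mul_le_mul_of_nonneg_left hd (by positivity : (0:ℝ) ≤ 8 * LF ^ 2),
      mul_nonneg hS0 (sub_nonneg.mpr hLLF)]
  · -- part 2
    have hTL := hT (Lk i0) ‖F (x i0)‖ (x i0) hLkpos hτ
    have hkey2 := key2 F F' (x i0) LF ‖F (x i0)‖ r (Lk i0) hLF hτ rfl hr hLkpos.le hLk2 _ hTL
    refine le_trans (Finset.inf'_le _ (Finset.mem_range.mpr hi0k)) ?_
    have hle : 2 * LF * r ^ 2
        * kappa (Delta F F' r (x i0) / (4 * ‖F (x i0)‖ * LF * r ^ 2)) ≤ S := by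
      rw [hgapval] at hi0
      exact hkey2.trans hi0
    calc 2 * (LF * r) ^ 2 * kappa (Delta F F' r (x i0) / (4 * ‖F (x i0)‖ * LF * r ^ 2))
        = LF * (2 * LF * r ^ 2
            * kappa (Delta F F' r (x i0) / (4 * ‖F (x i0)‖ * LF * r ^ 2))) := by ring
      _ ≤ LF * S := mul_le_mul_of_nonneg_left hle hLF.le
end

section
/- Let α ∈ (0,1) with ς > 2L_F/α. Let x ∈ ℱ with t := ‖x − x*‖ < ς/L_F − 2/α, let ε ≥ 0 and L > 0, and let τ satisfy 0 < τ ≤ ( (α·(ς − L_F·t) − 3L_F/2)² − L_F²/4 )·t⁴ / ( t²·L + 2ε ). Let x⁺ ∈ E₁ be any point with ψ_{x,L,τ}(x⁺) − ψ_{x,L,τ}(T_{L,τ}(x)) ≤ ε. Then ‖x⁺ − x*‖ ≤ ( (3L_F·t²)/2 + √( t²·(τ·L + L_F²·t²/4) + 2τε ) ) / (ς − L_F·t) ≤ α·t². (Theorem 2: local quadratic convergence of the inexact method.) -/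
open Set

/-- Quadratic Taylor remainder bound for a function with Lipschitz derivative on a convex set. -/
lemma taylor_quad_bound {n m : ℕ}
    (F : EuclideanSpace ℝ (Fin n) → EuclideanSpace ℝ (Fin m))
    (F' : EuclideanSpace ℝ (Fin n) →
      EuclideanSpace ℝ (Fin n) →L[ℝ] EuclideanSpace ℝ (Fin m))
    (hF : ∀ x, HasFDerivAt F (F' x) x)
    (𝓕 : Set (EuclideanSpace ℝ (Fin n))) (h𝓕conv : Convex ℝ 𝓕)
    (LF : ℝ)
    (hLip : ∀ x ∈ 𝓕, ∀ y ∈ 𝓕, ‖F' y - F' x‖ ≤ LF * ‖y - x‖)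
    (x : EuclideanSpace ℝ (Fin n)) (hx : x ∈ 𝓕)
    (y : EuclideanSpace ℝ (Fin n)) (hy : y ∈ 𝓕) :
    ‖F y - F x - F' x (y - x)‖ ≤ LF / 2 * ‖y - x‖ ^ 2 := by
  set v := y - x with hv
  set g : ℝ → EuclideanSpace ℝ (Fin m) := fun s => F (x + s • v) - F x - s • (F' x v) with hg
  have hmem : ∀ s ∈ Icc (0:ℝ) 1, x + s • v ∈ 𝓕 := by
    intro s hs
    have := h𝓕conv hx hy (by linarith [hs.2] : (0:ℝ) ≤ 1 - s) hs.1 (by ring)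
    have heq : (1 - s) • x + s • y = x + s • v := by
      simp only [hv]; module
    rwa [heq] at this
  have hderiv : ∀ s : ℝ, HasDerivAt g (F' (x + s • v) v - F' x v) s := by
    intro s
    have h1 : HasDerivAt (fun s : ℝ => x + s • v) v s := by
      simpa using ((hasDerivAt_id s).smul_const v).const_add x
    have h2 : HasDerivAt (fun s : ℝ => F (x + s • v)) (F' (x + s • v) v) s := by
      exact (hF (x + s • v)).comp_hasDerivAt s h1
    have h3 : HasDerivAt (fun s : ℝ => s • F' x v) (F' x v) s := by
      simpa using (hasDerivAt_id s).smul_const (F' x v)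
    exact (h2.sub_const (F x)).sub h3
  have hB : ∀ s : ℝ, HasDerivAt (fun s => LF / 2 * ‖v‖ ^ 2 * s ^ 2) (LF * ‖v‖ ^ 2 * s) s := by
    intro s
    have := (hasDerivAt_pow 2 s).const_mul (LF / 2 * ‖v‖ ^ 2)
    refine this.congr_deriv ?_
    push_cast
    ring
  have key := image_norm_le_of_norm_deriv_right_le_deriv_boundary
    (f := g) (f' := fun s => F' (x + s • v) v - F' x v) (a := 0) (b := 1)
    (fun s _ => (hderiv s).continuousAt.continuousWithinAt)
    (fun s _ => (hderiv s).hasDerivWithinAt)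
    (B := fun s => LF / 2 * ‖v‖ ^ 2 * s ^ 2) (B' := fun s => LF * ‖v‖ ^ 2 * s)
    (by simp [hg]) hB
    (by
      intro s hs
      have hsmem := hmem s ⟨hs.1, hs.2.le⟩
      have h1 : ‖F' (x + s • v) v - F' x v‖ ≤ ‖F' (x + s • v) - F' x‖ * ‖v‖ := by
        have := (F' (x + s • v) - F' x).le_opNorm v
        simpa using this
      have h2 : ‖F' (x + s • v) - F' x‖ ≤ LF * ‖x + s • v - x‖ := hLip x hx _ hsmem
      have h3 : ‖x + s • v - x‖ = s * ‖v‖ := by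
        rw [add_sub_cancel_left, norm_smul, Real.norm_eq_abs, abs_of_nonneg hs.1]
      calc ‖F' (x + s • v) v - F' x v‖ ≤ ‖F' (x + s • v) - F' x‖ * ‖v‖ := h1
        _ ≤ LF * (s * ‖v‖) * ‖v‖ := by
            apply mul_le_mul_of_nonneg_right _ (norm_nonneg v)
            rw [← h3]; exact h2
        _ = LF * ‖v‖ ^ 2 * s := by ring)
  have := key (x := 1) ⟨zero_le_one, le_refl 1⟩
  simp only [hg, one_smul, mul_one, one_pow] at this
  have hxy : x + v = y := by rw [hv]; abel
  rwa [hxy] at this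

/-- The scalar inequality at the heart of Theorem 2. -/
lemma key_scalar_ineq (LF ς α t τ L ε P Q R : ℝ)
    (hLF : 0 < LF) (hα0 : 0 < α) (htpos : 0 < t) (hτ0 : 0 < τ) (hL : 0 < L) (hε : 0 ≤ ε)
    (hσα : 2 * LF / α < ς - LF * t)
    (hτ : τ ≤ ((α * (ς - LF * t) - 3 * LF / 2) ^ 2 - LF ^ 2 / 4) * t ^ 4
        / (t ^ 2 * L + 2 * ε))
    (hQ0 : 0 ≤ Q) (hR0 : 0 ≤ R)
    (htay : Q ≤ LF / 2 * t ^ 2)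
    (hP2 : P ^ 2 ≤ Q ^ 2 + τ * L * t ^ 2 + 2 * τ * ε)
    (hP0 : 0 ≤ P)
    (hmain : (ς - LF * t) * R ≤ P + Q) :
    R ≤ (3 * LF * t ^ 2 / 2
        + Real.sqrt (t ^ 2 * (τ * L + LF ^ 2 * t ^ 2 / 4) + 2 * τ * ε)) / (ς - LF * t)
    ∧ (3 * LF * t ^ 2 / 2
        + Real.sqrt (t ^ 2 * (τ * L + LF ^ 2 * t ^ 2 / 4) + 2 * τ * ε)) / (ς - LF * t)
        ≤ α * t ^ 2 := by
  have hσpos : 0 < ς - LF * t := lt_trans (by positivity) hσα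
  have hασ : 2 * LF < α * (ς - LF * t) := by
    have e3 : α * (2 * LF / α) = 2 * LF := by field_simp
    linarith [e3 ▸ mul_lt_mul_of_pos_left hσα hα0]
  have hPD2 : P ^ 2 ≤ t ^ 2 * (τ * L + LF ^ 2 * t ^ 2 / 4) + 2 * τ * ε := by
    linarith [hP2, mul_self_le_mul_self hQ0 htay, sq_abs Q]
  have hPD : P ≤ Real.sqrt (t ^ 2 * (τ * L + LF ^ 2 * t ^ 2 / 4) + 2 * τ * ε) := by
    have := Real.sqrt_le_sqrt hPD2
    rwa [Real.sqrt_sq hP0] at this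
  have hden : 0 < t ^ 2 * L + 2 * ε := by positivity
  have hτ' : τ * (t ^ 2 * L + 2 * ε)
      ≤ ((α * (ς - LF * t) - 3 * LF / 2) ^ 2 - LF ^ 2 / 4) * t ^ 4 :=
    (le_div_iff₀ hden).mp hτ
  have hA : LF / 2 < α * (ς - LF * t) - 3 * LF / 2 := by linarith
  have hDA : t ^ 2 * (τ * L + LF ^ 2 * t ^ 2 / 4) + 2 * τ * ε
      ≤ ((α * (ς - LF * t) - 3 * LF / 2) * t ^ 2) ^ 2 := by
    linarith [hτ']
  have hsq : Real.sqrt (t ^ 2 * (τ * L + LF ^ 2 * t ^ 2 / 4) + 2 * τ * ε)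
      ≤ (α * (ς - LF * t) - 3 * LF / 2) * t ^ 2 := by
    have hAt : 0 ≤ (α * (ς - LF * t) - 3 * LF / 2) * t ^ 2 := mul_nonneg (by linarith) (sq_nonneg t)
    calc Real.sqrt (t ^ 2 * (τ * L + LF ^ 2 * t ^ 2 / 4) + 2 * τ * ε)
        ≤ Real.sqrt (((α * (ς - LF * t) - 3 * LF / 2) * t ^ 2) ^ 2) := Real.sqrt_le_sqrt hDA
      _ = (α * (ς - LF * t) - 3 * LF / 2) * t ^ 2 := Real.sqrt_sq hAt
  constructor
  · rw [le_div_iff₀ hσpos]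
    linarith [hmain, hPD, htay, mul_nonneg hLF.le (sq_nonneg t)]
  · rw [div_le_iff₀ hσpos]
    linarith [hsq]

/-- **Theorem 2.** Local quadratic convergence of the inexact method. -/
theorem local_quadratic_convergence
    {n m : ℕ}
    (F : EuclideanSpace ℝ (Fin n) → EuclideanSpace ℝ (Fin m))
    (F' : EuclideanSpace ℝ (Fin n) →
      EuclideanSpace ℝ (Fin n) →L[ℝ] EuclideanSpace ℝ (Fin m))
    (hF : ∀ x, HasFDerivAt F (F' x) x)
    (𝓕 : Set (EuclideanSpace ℝ (Fin n)))
    (h𝓕closed : IsClosed 𝓕) (h𝓕conv : Convex ℝ 𝓕)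
    (LF : ℝ) (hLF : 0 < LF)
    (hLip : ∀ x ∈ 𝓕, ∀ y ∈ 𝓕, ‖F' y - F' x‖ ≤ LF * ‖y - x‖)
    (xstar : EuclideanSpace ℝ (Fin n)) (hxstar : xstar ∈ 𝓕)
    (ς : ℝ) (hς : 0 < ς)
    (hsol : F xstar = 0)
    (hςbound : ∀ h : EuclideanSpace ℝ (Fin n), ς * ‖h‖ ≤ ‖F' xstar h‖)
    (α : ℝ) (hα : α ∈ Set.Ioo (0 : ℝ) 1) (hςα : 2 * LF / α < ς)
    (x : EuclideanSpace ℝ (Fin n)) (hx : x ∈ 𝓕)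
    (hrad : ‖x - xstar‖ < ς / LF - 2 / α)
    (ε : ℝ) (hε : 0 ≤ ε) (L : ℝ) (hL : 0 < L)
    (τ : ℝ) (hτ0 : 0 < τ)
    (hτ : τ ≤ ((α * (ς - LF * ‖x - xstar‖) - 3 * LF / 2) ^ 2 - LF ^ 2 / 4)
        * ‖x - xstar‖ ^ 4 / (‖x - xstar‖ ^ 2 * L + 2 * ε))
    (T : EuclideanSpace ℝ (Fin n))
    (hTmin : ∀ y, psi F F' x L τ T ≤ psi F F' x L τ y)
    (xp : EuclideanSpace ℝ (Fin n))
    (hxp : psi F F' x L τ xp - psi F F' x L τ T ≤ ε) :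
    ‖xp - xstar‖ ≤ (3 * LF * ‖x - xstar‖ ^ 2 / 2
        + Real.sqrt (‖x - xstar‖ ^ 2 * (τ * L + LF ^ 2 * ‖x - xstar‖ ^ 2 / 4) + 2 * τ * ε))
        / (ς - LF * ‖x - xstar‖)
    ∧ (3 * LF * ‖x - xstar‖ ^ 2 / 2
        + Real.sqrt (‖x - xstar‖ ^ 2 * (τ * L + LF ^ 2 * ‖x - xstar‖ ^ 2 / 4) + 2 * τ * ε))
        / (ς - LF * ‖x - xstar‖) ≤ α * ‖x - xstar‖ ^ 2 := by
  obtain ⟨hα0, hα1⟩ := hα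
  have ht0 : (0:ℝ) ≤ ‖x - xstar‖ := norm_nonneg _
  have htpos : 0 < ‖x - xstar‖ := by
    rcases ht0.eq_or_lt with h | h
    · exfalso
      rw [← h] at hτ
      simp at hτ
      linarith
    · exact h
  have hσα : 2 * LF / α < ς - LF * ‖x - xstar‖ := by
    have e1 : ς / LF * LF = ς := div_mul_cancel₀ _ hLF.ne'
    have e2 : 2 / α * α = 2 := div_mul_cancel₀ _ hα0.ne'
    have e3 : 2 * LF / α * α = 2 * LF := div_mul_cancel₀ _ hα0.ne'
    nlinarith [mul_lt_mul_of_pos_right hrad (mul_pos hLF hα0)]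
  -- Taylor bound
  have htay : ‖F x + F' x (xstar - x)‖ ≤ LF / 2 * ‖x - xstar‖ ^ 2 := by
    have h := taylor_quad_bound F F' hF 𝓕 h𝓕conv LF hLip x hx xstar hxstar
    have heq : F xstar - F x - F' x (xstar - x) = -(F x + F' x (xstar - x)) := by
      rw [hsol]; abel
    rw [heq, norm_neg, norm_sub_rev xstar x] at h
    exact h
  -- lower bound on F' x
  have hlow : (ς - LF * ‖x - xstar‖) * ‖xp - xstar‖ ≤ ‖F' x (xp - xstar)‖ := by
    have h1 := hςbound (xp - xstar)
    have h2 : ‖F' xstar (xp - xstar) - F' x (xp - xstar)‖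
        ≤ LF * ‖x - xstar‖ * ‖xp - xstar‖ := by
      have ha : ‖(F' xstar - F' x) (xp - xstar)‖ ≤ ‖F' xstar - F' x‖ * ‖xp - xstar‖ :=
        (F' xstar - F' x).le_opNorm _
      have hb : ‖F' xstar - F' x‖ ≤ LF * ‖xstar - x‖ := hLip x hx xstar hxstar
      rw [norm_sub_rev xstar x] at hb
      simp only [ContinuousLinearMap.sub_apply] at ha
      exact le_trans ha (mul_le_mul_of_nonneg_right hb (norm_nonneg _))
    have h3 := norm_sub_norm_le (F' xstar (xp - xstar)) (F' x (xp - xstar))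
    linarith
  -- psi chain
  have hψ : psi F F' x L τ xp ≤ psi F F' x L τ xstar + ε := by
    linarith [hTmin xstar]
  have hψ' : τ / 2 + ‖F x + F' x (xp - x)‖ ^ 2 / (2 * τ) + L / 2 * ‖xp - x‖ ^ 2
      ≤ τ / 2 + ‖F x + F' x (xstar - x)‖ ^ 2 / (2 * τ) + L / 2 * ‖x - xstar‖ ^ 2 + ε := by
    have hns : ‖xstar - x‖ = ‖x - xstar‖ := norm_sub_rev xstar x
    simpa only [psi, hns] using hψ
  have h2τ : (0:ℝ) < 2 * τ := by linarith
  have hP2 : ‖F x + F' x (xp - x)‖ ^ 2 ≤ ‖F x + F' x (xstar - x)‖ ^ 2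
      + τ * L * ‖x - xstar‖ ^ 2 + 2 * τ * ε := by
    have hP1 : ‖F x + F' x (xp - x)‖ ^ 2 / (2 * τ)
        ≤ ‖F x + F' x (xstar - x)‖ ^ 2 / (2 * τ) + L / 2 * ‖x - xstar‖ ^ 2 + ε := by
      have hnn : 0 ≤ L / 2 * ‖xp - x‖ ^ 2 := by positivity
      linarith
    have h3 := (div_le_iff₀ h2τ).mp hP1
    have eQ : (‖F x + F' x (xstar - x)‖ ^ 2 / (2 * τ) + L / 2 * ‖x - xstar‖ ^ 2 + ε) * (2 * τ)
        = ‖F x + F' x (xstar - x)‖ ^ 2 + τ * L * ‖x - xstar‖ ^ 2 + 2 * τ * ε := by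
      field_simp
    linarith [eQ ▸ h3]
  -- splitting
  have hmain : (ς - LF * ‖x - xstar‖) * ‖xp - xstar‖
      ≤ ‖F x + F' x (xp - x)‖ + ‖F x + F' x (xstar - x)‖ := by
    have heq : F' x (xp - xstar) = (F x + F' x (xp - x)) - (F x + F' x (xstar - x)) := by
      have h1 : xp - xstar = (xp - x) - (xstar - x) := by abel
      rw [h1, map_sub]
      abel
    refine le_trans hlow ?_
    rw [heq]
    exact norm_sub_le _ _
  exact key_scalar_ineq LF ς α ‖x - xstar‖ τ L ε
    ‖F x + F' x (xp - x)‖ ‖F x + F' x (xstar - x)‖ ‖xp - xstar‖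
    hLF hα0 htpos hτ0 hL hε hσα hτ (norm_nonneg _) (norm_nonneg _)
    htay hP2 (norm_nonneg _) hmain
end

section
/- Let x ∈ E₁ with f₁(x) > 0, let ε ≥ 0 and 0 < L ≤ 2L_F, and let x⁺ ∈ E₁ satisfy ψ_{x,L,f₁(x)}(x⁺) − ψ_{x,L,f₁(x)}(T_{L,f₁(x)}(x)) ≤ ε and f₁(x⁺) ≤ ψ_{x,L,f₁(x)}(x⁺). Then: if f₁(x) ≤ μ/(4L_F), f₁(x⁺) ≤ ε + f₁(x)/2 + (L_F/μ)·f₂(x) ≤ ε + (3/4)·f₁(x); otherwise f₁(x⁺) ≤ ε + f₁(x) − μ/(16L_F). If moreover L = L_F, then: if f₁(x) ≤ μ/(2L_F), f₁(x⁺) ≤ ε + f₁(x)/2 + (L_F/(2μ))·f₂(x) ≤ ε + (3/4)·f₁(x); otherwise f₁(x⁺) ≤ ε + f₁(x) − μ/(8L_F). (Theorem 3: per-iteration decrease under the Polyak–Łojasiewicz condition.) -/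
set_option maxHeartbeats 1000000 in
/-- **Theorem 3.** Per-iteration decrease under the Polyak–Łojasiewicz condition. -/
theorem per_iteration_decrease_PL
    {n m : ℕ}
    (F : EuclideanSpace ℝ (Fin n) → EuclideanSpace ℝ (Fin m))
    (F' : EuclideanSpace ℝ (Fin n) →
      EuclideanSpace ℝ (Fin n) →L[ℝ] EuclideanSpace ℝ (Fin m))
    (hF : ∀ x, HasFDerivAt F (F' x) x)
    (LF : ℝ) (hLF : 0 < LF)
    (hLip : ∀ x y, ‖F' y - F' x‖ ≤ LF * ‖y - x‖)
    (μ : ℝ) (hμ : 0 < μ)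
    (hPL : ∀ (x : EuclideanSpace ℝ (Fin n)) (u : EuclideanSpace ℝ (Fin m)),
      μ * ‖u‖ ^ 2 ≤ ‖(ContinuousLinearMap.adjoint (F' x)) u‖ ^ 2)
    (x : EuclideanSpace ℝ (Fin n)) (hfx : 0 < ‖F x‖)
    (ε : ℝ) (hε : 0 ≤ ε)
    (L : ℝ) (hL0 : 0 < L) (hL : L ≤ 2 * LF)
    (T : EuclideanSpace ℝ (Fin n))
    (hTmin : ∀ y, psi F F' x L ‖F x‖ T ≤ psi F F' x L ‖F x‖ y)
    (xp : EuclideanSpace ℝ (Fin n))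
    (hxpε : psi F F' x L ‖F x‖ xp - psi F F' x L ‖F x‖ T ≤ ε)
    (hub : ‖F xp‖ ≤ psi F F' x L ‖F x‖ xp) :
    ((‖F x‖ ≤ μ / (4 * LF) →
        ‖F xp‖ ≤ ε + ‖F x‖ / 2 + LF / μ * ‖F x‖ ^ 2 ∧
          ε + ‖F x‖ / 2 + LF / μ * ‖F x‖ ^ 2 ≤ ε + 3 / 4 * ‖F x‖) ∧
      (μ / (4 * LF) < ‖F x‖ → ‖F xp‖ ≤ ε + ‖F x‖ - μ / (16 * LF))) ∧
    (L = LF →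
      (‖F x‖ ≤ μ / (2 * LF) →
        ‖F xp‖ ≤ ε + ‖F x‖ / 2 + LF / (2 * μ) * ‖F x‖ ^ 2 ∧
          ε + ‖F x‖ / 2 + LF / (2 * μ) * ‖F x‖ ^ 2 ≤ ε + 3 / 4 * ‖F x‖) ∧
      (μ / (2 * LF) < ‖F x‖ → ‖F xp‖ ≤ ε + ‖F x‖ - μ / (8 * LF))) := by
  set f : ℝ := ‖F x‖ with hf
  -- obtain v with F'x (F'x* v) = F x
  have hinner : ∀ u : EuclideanSpace ℝ (Fin m),
      inner ℝ (F' x ((ContinuousLinearMap.adjoint (F' x)) u)) u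
        = ‖(ContinuousLinearMap.adjoint (F' x)) u‖ ^ 2 := by
    intro u
    rw [← ContinuousLinearMap.adjoint_inner_right, real_inner_self_eq_norm_sq]
  obtain ⟨v, hv⟩ : ∃ v, F' x ((ContinuousLinearMap.adjoint (F' x)) v) = F x := by
    set A : EuclideanSpace ℝ (Fin m) →ₗ[ℝ] EuclideanSpace ℝ (Fin m) :=
      ((F' x).comp (ContinuousLinearMap.adjoint (F' x))).toLinearMap with hA
    have hinj : Function.Injective A := by
      rw [← LinearMap.ker_eq_bot, LinearMap.ker_eq_bot']
      intro u hu
      have h0 : inner ℝ (F' x ((ContinuousLinearMap.adjoint (F' x)) u)) u = (0:ℝ) := by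
        have : A u = 0 := hu
        simp only [hA, ContinuousLinearMap.coe_coe, ContinuousLinearMap.comp_apply] at this
        rw [this, inner_zero_left]
      have hple := hPL x u
      rw [hinner u] at h0
      have h2 : μ * ‖u‖ ^ 2 ≤ 0 := by rw [h0] at hple; exact hple
      by_contra h
      have hp : 0 < ‖u‖ := norm_pos_iff.mpr h
      nlinarith [mul_pos hp hp]
    have hsurj : Function.Surjective A := by
      rwa [← LinearMap.injective_iff_surjective]
    obtain ⟨v, hv⟩ := hsurj (F x)
    exact ⟨v, hv⟩
  set w : EuclideanSpace ℝ (Fin n) := (ContinuousLinearMap.adjoint (F' x)) v with hw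
  -- bound on ‖w‖²
  have hw2 : ‖w‖ ^ 2 = inner ℝ (F x) v := by
    rw [← hinner v, hv]
  have hwle : μ * ‖w‖ ^ 2 ≤ f ^ 2 := by
    have h1 : μ * ‖v‖ ^ 2 ≤ ‖w‖ ^ 2 := hPL x v
    have h2 : ‖w‖ ^ 2 ≤ f * ‖v‖ := by
      rw [hw2]; exact (real_inner_le_norm (F x) v)
    nlinarith [norm_nonneg v, sq_nonneg (f - μ * ‖v‖), norm_nonneg w, sq_nonneg ‖w‖]
  -- key inequality
  have key : ∀ t : ℝ, ‖F xp‖ ≤ ε + f / 2 + (1 - t) ^ 2 * f / 2 + L * t ^ 2 * f ^ 2 / (2 * μ) := by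
    intro t
    have hy := hTmin (x + (-t) • w)
    have hsub : (x + (-t) • w) - x = (-t) • w := by abel
    have hFlin : F x + F' x ((x + (-t) • w) - x) = (1 - t) • F x := by
      rw [hsub, map_smul, hv, sub_smul, one_smul]
      module
    have hψy : psi F F' x L f (x + (-t) • w)
        = f / 2 + ((1 - t) ^ 2 * f ^ 2) / (2 * f) + L / 2 * (t ^ 2 * ‖w‖ ^ 2) := by
      rw [psi, hFlin, hsub, norm_smul, norm_smul, Real.norm_eq_abs, Real.norm_eq_abs,
        mul_pow, mul_pow, sq_abs, sq_abs]
      ring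
    have hfrac : ((1 - t) ^ 2 * f ^ 2) / (2 * f) = (1 - t) ^ 2 * f / 2 := by
      field_simp
    have hlast : L / 2 * (t ^ 2 * ‖w‖ ^ 2) ≤ L * t ^ 2 * f ^ 2 / (2 * μ) := by
      have h1 : ‖w‖ ^ 2 ≤ f ^ 2 / μ := by
        rw [le_div_iff₀ hμ]; nlinarith
      have h2 : L * t ^ 2 * f ^ 2 / (2 * μ) = L / 2 * (t ^ 2 * (f ^ 2 / μ)) := by
        field_simp
      rw [h2]
      have := mul_le_mul_of_nonneg_left (mul_le_mul_of_nonneg_left h1 (sq_nonneg t))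
        (le_of_lt (half_pos hL0))
      linarith
    have hchain : ‖F xp‖ ≤ ε + psi F F' x L f (x + (-t) • w) := by
      have := hTmin (x + (-t) • w)
      linarith
    rw [hψy, hfrac] at hchain
    linarith
  have hf2 : 0 < f := hfx
  constructor
  · constructor
    · intro hsmall
      constructor
      · have hk := key 1
        have h1 : L * 1 ^ 2 * f ^ 2 / (2 * μ) ≤ LF / μ * f ^ 2 := by
          rw [div_le_iff₀ (by positivity)]
          have : LF / μ * f ^ 2 * (2 * μ) = 2 * LF * f ^ 2 := by field_simp
          rw [this]
          nlinarith [sq_nonneg f]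
        simp only [one_pow] at hk
        nlinarith
      · -- LF/μ * f² ≤ f/4 when f ≤ μ/(4LF)
        have hs : f * (4 * LF) ≤ μ := by
          rw [le_div_iff₀ (by positivity)] at hsmall; linarith
        have h1 : LF / μ * f ^ 2 ≤ f / 4 := by
          rw [div_mul_eq_mul_div, div_le_div_iff₀ hμ (by norm_num : (0:ℝ) < 4)]
          nlinarith
        linarith
    · intro hbig
      have hs : 0 < μ + L * f := by positivity
      have hk := key (μ / (μ + L * f))
      set t : ℝ := μ / (μ + L * f) with ht
      have heq : (1 - t) ^ 2 * f / 2 + L * t ^ 2 * f ^ 2 / (2 * μ)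
          = L * f ^ 2 / (2 * (μ + L * f)) := by
        rw [ht]; field_simp; ring
      have hfin : f / 2 + L * f ^ 2 / (2 * (μ + L * f)) ≤ f - μ / (16 * LF) := by
        have h1 : μ / (16 * LF) ≤ μ * f / (2 * (μ + L * f)) := by
          rw [div_le_div_iff₀ (by positivity) (by positivity)]
          have hbig' : μ < f * (4 * LF) := by
            rw [div_lt_iff₀ (by positivity)] at hbig; linarith
          nlinarith [mul_lt_mul_of_pos_left hbig' hμ,
            mul_le_mul_of_nonneg_left hL (mul_pos hμ hf2).le]
        have h2 : f / 2 - L * f ^ 2 / (2 * (μ + L * f)) = μ * f / (2 * (μ + L * f)) := by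
          field_simp; ring
        linarith
      linarith
  · intro hLE
    subst hLE
    constructor
    · intro hsmall
      constructor
      · have hk := key 1
        have h1 : ε + f / 2 + (1 - 1) ^ 2 * f / 2 + L * 1 ^ 2 * f ^ 2 / (2 * μ)
            = ε + f / 2 + L / (2 * μ) * f ^ 2 := by ring
        linarith
      · have h1 : L / (2 * μ) * f ^ 2 ≤ f / 4 := by
          have hs : f * (2 * L) ≤ μ := by
            rw [le_div_iff₀ (by positivity)] at hsmall; linarith
          rw [div_mul_eq_mul_div, div_le_div_iff₀ (by positivity) (by norm_num : (0:ℝ) < 4)]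
          nlinarith
        linarith
    · intro hbig
      have hs : 0 < μ + L * f := by positivity
      have hk := key (μ / (μ + L * f))
      set t : ℝ := μ / (μ + L * f) with ht
      have heq : (1 - t) ^ 2 * f / 2 + L * t ^ 2 * f ^ 2 / (2 * μ)
          = L * f ^ 2 / (2 * (μ + L * f)) := by
        rw [ht]; field_simp; ring
      have hfin : f / 2 + L * f ^ 2 / (2 * (μ + L * f)) ≤ f - μ / (8 * L) := by
        have h1 : μ / (8 * L) ≤ μ * f / (2 * (μ + L * f)) := by
          rw [div_le_div_iff₀ (by positivity) (by positivity)]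
          have hbig' : μ < f * (2 * L) := by
            rw [div_lt_iff₀ (by positivity)] at hbig; linarith
          nlinarith [mul_lt_mul_of_pos_left hbig' hμ]
        have h2 : f / 2 - L * f ^ 2 / (2 * (μ + L * f)) = μ * f / (2 * (μ + L * f)) := by
          field_simp; ring
        linarith
      linarith
end

section
/- Let 0 < L ≤ 2L_F, and let a sequence (x_k)_{k≥0} in E₁ and numbers (L_k)_{k≥0} satisfy, for all k ≥ 0: F̂(x_k) ≠ 0, L ≤ L_k ≤ 2L_F, x_{k+1} = T_{L_k, f₁(x_k)}(x_k), and f₁(x_{k+1}) ≤ ψ_{x_k, L_k, f₁(x_k)}(x_{k+1}). Then there exists x* ∈ E₁ with F̂(x*) = 0 and ‖x₀ − x*‖ ≤ 4·f₁(x₀)·√(2L_F/(μ·L)). (Theorem 4: existence of a solution within an explicit distance of the initial point.) -/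
open RealInnerProductSpace

section Aux
variable {n m : ℕ}
local notation "E₁" => EuclideanSpace ℝ (Fin n)
local notation "E₂" => EuclideanSpace ℝ (Fin m)


/-- spectral-type lemma: if `AA* ⪰ μ` then `‖A A* u‖² ≥ μ ‖A* u‖²`. -/
lemma spec_aux (A : E₁ →L[ℝ] E₂) (μ : ℝ) (hμ : 0 < μ)
    (hPL : ∀ u : E₂, μ * ‖u‖ ^ 2 ≤ ‖(ContinuousLinearMap.adjoint A) u‖ ^ 2) (u : E₂) :
    μ * ‖(ContinuousLinearMap.adjoint A) u‖ ^ 2 ≤ ‖A ((ContinuousLinearMap.adjoint A) u)‖ ^ 2 := by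
  set w := (ContinuousLinearMap.adjoint A) u with hw
  have h1 : μ * ‖u‖ ^ 2 ≤ ‖w‖ ^ 2 := hPL u
  have h2 : ‖w‖ ^ 2 = ⟪u, A w⟫ := by
    rw [← real_inner_self_eq_norm_sq]
    exact ContinuousLinearMap.adjoint_inner_left A w u
  have h3 : ⟪u, A w⟫ ≤ ‖u‖ * ‖A w‖ := real_inner_le_norm u (A w)
  have h4 : ‖w‖ ^ 2 ≤ ‖u‖ * ‖A w‖ := h2.le.trans h3
  rcases eq_or_ne w 0 with h | h
  · simp [h]
  · have hw2 : (0:ℝ) < ‖w‖ ^ 2 := pow_pos (norm_pos_iff.mpr h) 2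
    have h5 : (‖w‖ ^ 2) ^ 2 ≤ (‖u‖ * ‖A w‖) ^ 2 := pow_le_pow_left₀ (by positivity) h4 2
    have h6 : μ * (‖u‖ * ‖A w‖) ^ 2 = (μ * ‖u‖ ^ 2) * ‖A w‖ ^ 2 := by ring
    have h7 : μ * (‖w‖ ^ 2) ^ 2 ≤ ‖w‖ ^ 2 * ‖A w‖ ^ 2 := by
      calc μ * (‖w‖ ^ 2) ^ 2 ≤ μ * (‖u‖ * ‖A w‖) ^ 2 := by
            exact mul_le_mul_of_nonneg_left h5 hμ.le
        _ = (μ * ‖u‖ ^ 2) * ‖A w‖ ^ 2 := h6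
        _ ≤ ‖w‖ ^ 2 * ‖A w‖ ^ 2 := mul_le_mul_of_nonneg_right h1 (sq_nonneg _)
    have h8 : ‖w‖ ^ 2 * (μ * ‖w‖ ^ 2) ≤ ‖w‖ ^ 2 * ‖A w‖ ^ 2 := by nlinarith
    exact (mul_le_mul_iff_right₀ hw2).mp h8

/-- PL surjectivity: there is `w` with `A w = b` and `‖w‖² ≤ ‖b‖²/μ`. -/
lemma surj_aux (A : E₁ →L[ℝ] E₂) (μ : ℝ) (hμ : 0 < μ)
    (hPL : ∀ u : E₂, μ * ‖u‖ ^ 2 ≤ ‖(ContinuousLinearMap.adjoint A) u‖ ^ 2) (b : E₂) :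
    ∃ w : E₁, A w = b ∧ ‖w‖ ^ 2 ≤ ‖b‖ ^ 2 / μ := by
  set B : E₂ →L[ℝ] E₂ := A.comp (ContinuousLinearMap.adjoint A) with hB
  have hinj : Function.Injective B := by
    intro u v huv
    have h0 : B (u - v) = 0 := by rw [map_sub, huv, sub_self]
    have h1 : ‖(ContinuousLinearMap.adjoint A) (u - v)‖ ^ 2 = ⟪u - v, B (u - v)⟫ := by
      rw [← real_inner_self_eq_norm_sq]
      exact ContinuousLinearMap.adjoint_inner_left A ((ContinuousLinearMap.adjoint A) (u - v)) (u - v)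
    rw [h0, inner_zero_right] at h1
    have h2 := hPL (u - v)
    rw [h1] at h2
    have : ‖u - v‖ ^ 2 ≤ 0 := by nlinarith
    have : u - v = 0 := by
      have := norm_nonneg (u - v)
      have h4 : ‖u - v‖ = 0 := by nlinarith
      exact norm_eq_zero.mp h4
    exact sub_eq_zero.mp this
  have hsurj : Function.Surjective B :=
    (LinearMap.injective_iff_surjective (f := (B : E₂ →ₗ[ℝ] E₂))).mp hinj
  obtain ⟨v, hv⟩ := hsurj b
  refine ⟨(ContinuousLinearMap.adjoint A) v, hv, ?_⟩
  set w := (ContinuousLinearMap.adjoint A) v with hw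
  have h1 : ‖w‖ ^ 2 = ⟪v, b⟫ := by
    rw [← real_inner_self_eq_norm_sq]
    rw [ContinuousLinearMap.adjoint_inner_left A w v]
    have : A w = b := hv
    rw [this]
  have h2 : ⟪v, b⟫ ≤ ‖v‖ * ‖b‖ := real_inner_le_norm v b
  have h3 : μ * ‖v‖ ^ 2 ≤ ‖w‖ ^ 2 := hPL v
  rcases eq_or_ne v 0 with h | h
  · have : w = 0 := by rw [hw, h, map_zero]
    rw [this]
    simp
    positivity
  · have hv2 : 0 < ‖v‖ := norm_pos_iff.mpr h
    have h4 : μ * ‖v‖ ≤ ‖b‖ := by nlinarith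
    have h5 : ‖w‖ ^ 2 ≤ ‖v‖ * ‖b‖ := h1.le.trans h2
    rw [le_div_iff₀ hμ]
    nlinarith [norm_nonneg b]
set_option maxHeartbeats 1000000 in
lemma key_quad (A : E₁ →L[ℝ] E₂) (μ : ℝ) (hμ : 0 < μ)
    (hPL : ∀ u : E₂, μ * ‖u‖ ^ 2 ≤ ‖(ContinuousLinearMap.adjoint A) u‖ ^ 2)
    (b : E₂) (hb : b ≠ 0) (L' : ℝ) (hL' : 0 < L') (h : E₁)
    (hmin : ∀ z : E₁, ‖b + A h‖ ^ 2 + ‖b‖ * L' * ‖h‖ ^ 2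
      ≤ ‖b + A z‖ ^ 2 + ‖b‖ * L' * ‖z‖ ^ 2) :
    ‖h‖ * Real.sqrt μ
        ≤ 2 * (‖b‖ - (‖b‖ / 2 + ‖b + A h‖ ^ 2 / (2 * ‖b‖) + L' / 2 * ‖h‖ ^ 2)) ∧
    ‖b‖ / 2 + ‖b + A h‖ ^ 2 / (2 * ‖b‖) + L' / 2 * ‖h‖ ^ 2
        ≤ ‖b‖ - ‖b‖ * μ / (2 * (μ + L' * ‖b‖)) := by
  set T := ‖b‖ with hT
  have hTpos : 0 < T := norm_pos_iff.mpr hb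
  set r := b + A h with hr
  -- quadratic expansion of minimality
  have hquad : ∀ (v : E₁) (s : ℝ),
      0 ≤ 2 * s * (⟪r, A v⟫ + T * L' * ⟪h, v⟫) + s ^ 2 * (‖A v‖ ^ 2 + T * L' * ‖v‖ ^ 2) := by
    intro v s
    have h1 := hmin (h + s • v)
    rw [map_add, ContinuousLinearMap.map_smul, ← add_assoc, ← hr] at h1
    rw [norm_add_sq_real r (s • A v), norm_add_sq_real h (s • v),
      real_inner_smul_right, real_inner_smul_right, norm_smul, norm_smul] at h1
    simp only [Real.norm_eq_abs, mul_pow, sq_abs] at h1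
    nlinarith [h1]
  -- first order condition
  have foc : ∀ v : E₁, ⟪r, A v⟫ + T * L' * ⟪h, v⟫ = 0 := by
    intro v
    set c := ⟪r, A v⟫ + T * L' * ⟪h, v⟫ with hc
    set d := ‖A v‖ ^ 2 + T * L' * ‖v‖ ^ 2 with hd
    have hd0 : 0 ≤ d := by positivity
    have hd1 : (0:ℝ) < d + 1 := by linarith
    have h1 := hquad v (-c / (d + 1))
    have e : 2 * (-c / (d + 1)) * c + (-c / (d + 1)) ^ 2 * d
        = -(c ^ 2 * (d + 2)) / (d + 1) ^ 2 := by
      field_simp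
      ring
    rw [e] at h1
    have h3 : 0 ≤ -(c ^ 2 * (d + 2)) := by
      have h4 := mul_nonneg h1 (le_of_lt (pow_pos hd1 2))
      rwa [div_mul_cancel₀ _ (by positivity : ((d:ℝ) + 1) ^ 2 ≠ 0)] at h4
    have h5 : c ^ 2 = 0 := le_antisymm (by nlinarith) (sq_nonneg c)
    exact (pow_eq_zero_iff two_ne_zero).mp h5
  -- adjoint equation
  have hadj : (ContinuousLinearMap.adjoint A) r = (-(T * L')) • h := by
    apply ext_inner_right ℝ
    intro v
    rw [ContinuousLinearMap.adjoint_inner_left A v r, real_inner_smul_left]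
    have := foc v
    linarith [foc v]
  -- μ‖h‖² ≤ ‖A h‖²
  have hAh : μ * ‖h‖ ^ 2 ≤ ‖A h‖ ^ 2 := by
    have hs := spec_aux A μ hμ hPL r
    rw [hadj, ContinuousLinearMap.map_smul, norm_smul, norm_smul] at hs
    simp only [Real.norm_eq_abs, mul_pow, sq_abs, neg_mul, neg_neg] at hs
    have hc2 : (0:ℝ) < (T * L') ^ 2 := by positivity
    have := (mul_le_mul_iff_right₀ hc2).mp (by nlinarith : (T*L')^2 * (μ * ‖h‖^2) ≤ (T*L')^2 * ‖A h‖^2)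
    linarith
  -- energy identity
  have hinner : ⟪r, A h⟫ = -(T * L') * ‖h‖ ^ 2 := by
    have := foc h
    rw [real_inner_self_eq_norm_sq] at this
    linarith
  have hid : T ^ 2 = ‖r‖ ^ 2 + 2 * (T * L') * ‖h‖ ^ 2 + ‖A h‖ ^ 2 := by
    have e1 : b = r - A h := by rw [hr]; abel
    have e2 : T ^ 2 = ‖r - A h‖ ^ 2 := by rw [hT, ← e1]
    rw [norm_sub_sq_real, hinner] at e2
    linarith
  -- decrease via PL test point
  set P := T / 2 + ‖r‖ ^ 2 / (2 * T) + L' / 2 * ‖h‖ ^ 2 with hP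
  have hdec : P ≤ T - T * μ / (2 * (μ + L' * T)) := by
    obtain ⟨w₀, hw1, hw2⟩ := surj_aux A μ hμ hPL b
    set t : ℝ := μ / (μ + L' * T) with ht
    have htpos : 0 < μ + L' * T := by positivity
    have ht0 : 0 ≤ t := by positivity
    have h1 := hmin ((-t) • w₀)
    rw [ContinuousLinearMap.map_smul, hw1] at h1
    have e3 : b + (-t) • b = (1 - t) • b := by
      rw [sub_smul, one_smul, neg_smul, ← sub_eq_add_neg]
    rw [e3] at h1
    rw [norm_smul, norm_smul] at h1
    simp only [Real.norm_eq_abs, mul_pow, sq_abs, neg_sq] at h1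
    rw [← hT] at h1
    have hw2' : ‖w₀‖ ^ 2 ≤ T ^ 2 / μ := by rw [hT]; exact hw2
    have hw3 : t ^ 2 * ‖w₀‖ ^ 2 ≤ t ^ 2 * (T ^ 2 / μ) :=
      mul_le_mul_of_nonneg_left hw2' (sq_nonneg t)
    have hgoal : ‖r‖ ^ 2 + T * L' * ‖h‖ ^ 2
        ≤ (1 - t) ^ 2 * T ^ 2 + T * L' * (t ^ 2 * (T ^ 2 / μ)) := by
      nlinarith [h1, mul_le_mul_of_nonneg_left hw3 (by positivity : (0:ℝ) ≤ T * L')]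
    -- convert to bound on P
    rw [hP]
    have key : (1 - t) ^ 2 * T ^ 2 + T * L' * (t ^ 2 * (T ^ 2 / μ))
        = T ^ 2 - 2 * T * (T * μ / (2 * (μ + L' * T))) := by
      rw [ht]
      field_simp
      ring
    rw [key] at hgoal
    have h2T : (0:ℝ) < 2 * T := by positivity
    rw [show T / 2 + ‖r‖ ^ 2 / (2 * T) + L' / 2 * ‖h‖ ^ 2
        = ‖r‖ ^ 2 / (2 * T) + (T / 2 + L' / 2 * ‖h‖ ^ 2) from by ring,
      ← le_sub_iff_add_le, div_le_iff₀ h2T]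
    nlinarith [hgoal]
  have hPval : T - P = L' / 2 * ‖h‖ ^ 2 + ‖A h‖ ^ 2 / (2 * T) := by
    rw [hP]
    have e0 : ‖r‖ ^ 2 = T ^ 2 - 2 * (T * L') * ‖h‖ ^ 2 - ‖A h‖ ^ 2 := by linarith
    rw [e0]
    field_simp
    ring
  have hden : (0:ℝ) < μ + L' * T := by positivity
  constructor
  · -- step bound
    have hD1 : ‖h‖ ^ 2 * (μ + T * L') ≤ 2 * T * (T - P) := by
      have e5 : 2 * T * (T - P) = T * L' * ‖h‖ ^ 2 + ‖A h‖ ^ 2 := by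
        rw [hPval]
        field_simp
      rw [e5]
      nlinarith [hAh]
    have hD2 : T * μ ≤ 2 * (T - P) * (μ + L' * T) := by
      have h6 : T * μ / (2 * (μ + L' * T)) ≤ T - P := by linarith [hdec]
      rw [div_le_iff₀ (by positivity : (0:ℝ) < 2 * (μ + L' * T))] at h6
      linarith
    have hDpos : 0 < T - P := by nlinarith [hD2, mul_pos hTpos hμ, hden]
    have hμs : μ * ‖h‖ ^ 2 ≤ 4 * (T - P) ^ 2 := by
      have hprod := mul_le_mul hD1 hD2 (by positivity)
        (mul_nonneg (by positivity : (0:ℝ) ≤ 2 * T) hDpos.le)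
      nlinarith [hprod, mul_pos hTpos hden]
    have hsq : (‖h‖ * Real.sqrt μ) ^ 2 ≤ (2 * (T - P)) ^ 2 := by
      rw [mul_pow, Real.sq_sqrt hμ.le]
      nlinarith [hμs]
    have hfin : ‖h‖ * Real.sqrt μ ≤ 2 * (T - P) := by
      nlinarith [hsq, mul_nonneg (norm_nonneg h) (Real.sqrt_nonneg μ), hDpos]
    calc ‖h‖ * Real.sqrt μ ≤ 2 * (T - P) := hfin
      _ = 2 * (T - (T / 2 + ‖r‖ ^ 2 / (2 * T) + L' / 2 * ‖h‖ ^ 2)) := by rw [hP]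
  · exact hdec
end Aux

/-- **Theorem 4.** Existence of a solution of `F̂(x) = 0` within an explicit distance of the
initial point, for the exact normalized-squares iteration under the PL condition.
`T L τ x` is characterized as the minimizer of `ψ_{x,L,τ}` over `E₁`. -/
theorem solution_within_explicit_distance
    {n m : ℕ}
    (F : EuclideanSpace ℝ (Fin n) → EuclideanSpace ℝ (Fin m))
    (F' : EuclideanSpace ℝ (Fin n) →
      EuclideanSpace ℝ (Fin n) →L[ℝ] EuclideanSpace ℝ (Fin m))
    (hF : ∀ x, HasFDerivAt F (F' x) x)
    (LF : ℝ) (hLF : 0 < LF)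
    (hLip : ∀ x y, ‖F' y - F' x‖ ≤ LF * ‖y - x‖)
    (μ : ℝ) (hμ : 0 < μ)
    (hPL : ∀ (x : EuclideanSpace ℝ (Fin n)) (u : EuclideanSpace ℝ (Fin m)),
      μ * ‖u‖ ^ 2 ≤ ‖(ContinuousLinearMap.adjoint (F' x)) u‖ ^ 2)
    (T : ℝ → ℝ → EuclideanSpace ℝ (Fin n) → EuclideanSpace ℝ (Fin n))
    (hT : ∀ L τ x, 0 < L → 0 < τ → ∀ y, psi F F' x L τ (T L τ x) ≤ psi F F' x L τ y)
    (L : ℝ) (hL0 : 0 < L) (hL : L ≤ 2 * LF)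
    (x : ℕ → EuclideanSpace ℝ (Fin n)) (Lk : ℕ → ℝ)
    (hne : ∀ k, F (x k) ≠ 0)
    (hLk : ∀ k, L ≤ Lk k ∧ Lk k ≤ 2 * LF)
    (hstep : ∀ k, x (k + 1) = T (Lk k) ‖F (x k)‖ (x k))
    (hub : ∀ k, ‖F (x (k + 1))‖ ≤ psi F F' (x k) (Lk k) ‖F (x k)‖ (x (k + 1))) :
    ∃ xstar : EuclideanSpace ℝ (Fin n),
      F xstar = 0 ∧ ‖x 0 - xstar‖ ≤ 4 * ‖F (x 0)‖ * Real.sqrt (2 * LF / (μ * L)) := by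
  have hτpos : ∀ k, (0:ℝ) < ‖F (x k)‖ := fun k => norm_pos_iff.mpr (hne k)
  have hLkpos : ∀ k, 0 < Lk k := fun k => lt_of_lt_of_le hL0 (hLk k).1
  have hsμ : 0 < Real.sqrt μ := Real.sqrt_pos.mpr hμ
  -- per-step key facts
  have hkey : ∀ k,
      ‖x (k+1) - x k‖ * Real.sqrt μ ≤ 2 * (‖F (x k)‖ - ‖F (x (k+1))‖) ∧
      ‖F (x (k+1))‖ ≤ ‖F (x k)‖ - ‖F (x k)‖ * μ / (2 * (μ + Lk k * ‖F (x k)‖)) := by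
    intro k
    have hTne : ‖F (x k)‖ ≠ 0 := ne_of_gt (hτpos k)
    have hmin0 : ∀ y, psi F F' (x k) (Lk k) ‖F (x k)‖ (x (k+1))
        ≤ psi F F' (x k) (Lk k) ‖F (x k)‖ y := by
      intro y
      rw [hstep k]
      exact hT (Lk k) ‖F (x k)‖ (x k) (hLkpos k) (hτpos k) y
    have hminz : ∀ z : EuclideanSpace ℝ (Fin n),
        ‖F (x k) + F' (x k) (x (k+1) - x k)‖ ^ 2 + ‖F (x k)‖ * Lk k * ‖x (k+1) - x k‖ ^ 2
        ≤ ‖F (x k) + F' (x k) z‖ ^ 2 + ‖F (x k)‖ * Lk k * ‖z‖ ^ 2 := by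
      intro z
      have h1 := hmin0 (x k + z)
      simp only [psi, add_sub_cancel_left] at h1
      have h2T : (0:ℝ) < 2 * ‖F (x k)‖ := by positivity
      have h4 : (‖F (x k) + F' (x k) (x (k+1) - x k)‖ ^ 2 - ‖F (x k) + F' (x k) z‖ ^ 2)
            / (2 * ‖F (x k)‖)
          ≤ Lk k / 2 * ‖z‖ ^ 2 - Lk k / 2 * ‖x (k+1) - x k‖ ^ 2 := by
        rw [sub_div]
        linarith
      rw [div_le_iff₀ h2T] at h4
      nlinarith [h4]
    obtain ⟨c1, c2⟩ := key_quad (F' (x k)) μ hμ (hPL (x k)) (F (x k)) (hne k)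
      (Lk k) (hLkpos k) (x (k+1) - x k) hminz
    have hubk : ‖F (x (k+1))‖ ≤ ‖F (x k)‖ / 2
        + ‖F (x k) + F' (x k) (x (k+1) - x k)‖ ^ 2 / (2 * ‖F (x k)‖)
        + Lk k / 2 * ‖x (k+1) - x k‖ ^ 2 := by
      have := hub k
      simpa only [psi] using this
    exact ⟨by linarith, by linarith⟩
  -- monotonicity and geometric decay
  have hmono : ∀ k, ‖F (x (k+1))‖ ≤ ‖F (x k)‖ := by
    intro k
    have h2 := (hkey k).2
    have hp : 0 < ‖F (x k)‖ * μ / (2 * (μ + Lk k * ‖F (x k)‖)) := by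
      have := hLkpos k
      have := hτpos k
      positivity
    linarith
  have hle0 : ∀ k, ‖F (x k)‖ ≤ ‖F (x 0)‖ := by
    intro k
    induction k with
    | zero => exact le_refl _
    | succ k ih => exact (hmono k).trans ih
  set τ0 := ‖F (x 0)‖ with hτ0
  have hτ0pos : 0 < τ0 := hτpos 0
  set ρ : ℝ := 1 - μ / (2 * (μ + 2 * LF * τ0)) with hρ
  have hpos2 : (0:ℝ) < μ + 2 * LF * τ0 := by positivity
  have hfrac0 : 0 < μ / (2 * (μ + 2 * LF * τ0)) := by positivity
  have hfrac1 : μ / (2 * (μ + 2 * LF * τ0)) ≤ 1 := by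
    rw [div_le_one (by positivity)]
    nlinarith [mul_pos hLF hτ0pos]
  have hρ0 : 0 ≤ ρ := by rw [hρ]; linarith
  have hρ1 : ρ < 1 := by rw [hρ]; linarith
  have hgeo : ∀ k, ‖F (x (k+1))‖ ≤ ρ * ‖F (x k)‖ := by
    intro k
    have h2 := (hkey k).2
    have hA : Lk k * ‖F (x k)‖ ≤ 2 * LF * τ0 :=
      mul_le_mul (hLk k).2 (hle0 k) (norm_nonneg _) (by linarith)
    have hd1 : (0:ℝ) < 2 * (μ + Lk k * ‖F (x k)‖) := by
      have := hLkpos k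
      have := hτpos k
      positivity
    have h5 : ‖F (x k)‖ * μ / (2 * (μ + 2 * LF * τ0))
        ≤ ‖F (x k)‖ * μ / (2 * (μ + Lk k * ‖F (x k)‖)) := by
      apply div_le_div_of_nonneg_left (by positivity) hd1 (by linarith)
    have he : ρ * ‖F (x k)‖
        = ‖F (x k)‖ - ‖F (x k)‖ * μ / (2 * (μ + 2 * LF * τ0)) := by
      rw [hρ]; ring
    rw [he]
    linarith
  have hgeok : ∀ k, ‖F (x k)‖ ≤ τ0 * ρ ^ k := by
    intro k
    induction k with
    | zero => simp [hτ0]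
    | succ k ih =>
      calc ‖F (x (k+1))‖ ≤ ρ * ‖F (x k)‖ := hgeo k
        _ ≤ ρ * (τ0 * ρ ^ k) := mul_le_mul_of_nonneg_left ih hρ0
        _ = τ0 * ρ ^ (k+1) := by ring
  -- Cauchy sequence
  have hstepb : ∀ k, dist (x k) (x (k+1)) ≤ (2 / Real.sqrt μ * τ0) * ρ ^ k := by
    intro k
    have h1 := (hkey k).1
    rw [dist_eq_norm, norm_sub_rev]
    have h2 : ‖x (k+1) - x k‖ ≤ 2 * ‖F (x k)‖ / Real.sqrt μ := by
      rw [le_div_iff₀ hsμ]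
      have := norm_nonneg (F (x (k+1)))
      linarith
    have h3 := mul_le_mul_of_nonneg_left (hgeok k)
      (by positivity : (0:ℝ) ≤ 2 / Real.sqrt μ)
    calc ‖x (k+1) - x k‖ ≤ 2 * ‖F (x k)‖ / Real.sqrt μ := h2
      _ = 2 / Real.sqrt μ * ‖F (x k)‖ := by ring
      _ ≤ 2 / Real.sqrt μ * (τ0 * ρ ^ k) := h3
      _ = (2 / Real.sqrt μ * τ0) * ρ ^ k := by ring
  have hcauchy : CauchySeq x := cauchySeq_of_le_geometric ρ (2 / Real.sqrt μ * τ0) hρ1 hstepb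
  obtain ⟨xstar, hxstar⟩ := cauchySeq_tendsto_of_complete hcauchy
  refine ⟨xstar, ?_, ?_⟩
  · -- F xstar = 0
    have hFcont : Continuous F := by
      apply continuous_iff_continuousAt.mpr
      intro y
      exact (hF y).continuousAt
    have h1 : Filter.Tendsto (fun k => F (x k)) Filter.atTop (nhds (F xstar)) :=
      (hFcont.tendsto xstar).comp hxstar
    have h2 : Filter.Tendsto (fun k => F (x k)) Filter.atTop (nhds 0) := by
      apply squeeze_zero_norm (fun k => hgeok k)
      have := tendsto_pow_atTop_nhds_zero_of_lt_one hρ0 hρ1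
      simpa using this.const_mul τ0
    exact tendsto_nhds_unique h1 h2
  · -- distance bound
    have hdist : ∀ N, ‖x 0 - x N‖ ≤ (2 / Real.sqrt μ) * (τ0 - ‖F (x N)‖) := by
      intro N
      induction N with
      | zero => simp [hτ0]
      | succ N ih =>
        have h3 : ‖x 0 - x (N+1)‖ ≤ ‖x 0 - x N‖ + ‖x (N+1) - x N‖ := by
          have := dist_triangle (x 0) (x N) (x (N+1))
          rw [dist_eq_norm, dist_eq_norm, dist_eq_norm] at this
          rw [norm_sub_rev (x N) (x (N+1))] at this
          exact this
        have h4 : ‖x (N+1) - x N‖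
            ≤ (2 / Real.sqrt μ) * (‖F (x N)‖ - ‖F (x (N+1))‖) := by
          have h1 := (hkey N).1
          rw [show (2 / Real.sqrt μ) * (‖F (x N)‖ - ‖F (x (N+1))‖)
              = 2 * (‖F (x N)‖ - ‖F (x (N+1))‖) / Real.sqrt μ from by ring,
            le_div_iff₀ hsμ]
          linarith
        linarith
    have hbound : ∀ N, ‖x 0 - x N‖ ≤ (2 / Real.sqrt μ) * τ0 := by
      intro N
      refine (hdist N).trans ?_
      have h5 : (0:ℝ) ≤ 2 / Real.sqrt μ := by positivity
      nlinarith [norm_nonneg (F (x N)), h5]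
    have htend : Filter.Tendsto (fun N => ‖x 0 - x N‖) Filter.atTop
        (nhds ‖x 0 - xstar‖) := (hxstar.const_sub (x 0)).norm
    have hfinal : ‖x 0 - xstar‖ ≤ (2 / Real.sqrt μ) * τ0 := le_of_tendsto' htend hbound
    -- constant comparison
    have hinv : (μ⁻¹ : ℝ) ≤ 2 * LF / (μ * L) := by
      rw [show (μ⁻¹ : ℝ) = 1 / μ from (one_div μ).symm,
        div_le_div_iff₀ hμ (by positivity)]
      nlinarith
    have h2 : Real.sqrt μ⁻¹ ≤ Real.sqrt (2 * LF / (μ * L)) := Real.sqrt_le_sqrt hinv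
    have h3 : (Real.sqrt μ)⁻¹ = Real.sqrt μ⁻¹ := (Real.sqrt_inv μ).symm
    have h4 : 2 / Real.sqrt μ ≤ 4 * Real.sqrt (2 * LF / (μ * L)) := by
      rw [div_eq_mul_inv, h3]
      nlinarith [h2, Real.sqrt_nonneg (μ⁻¹ : ℝ)]
    have h6 := mul_le_mul_of_nonneg_right h4 hτ0pos.le
    calc ‖x 0 - xstar‖ ≤ (2 / Real.sqrt μ) * τ0 := hfinal
      _ ≤ (4 * Real.sqrt (2 * LF / (μ * L))) * τ0 := h6
      _ = 4 * τ0 * Real.sqrt (2 * LF / (μ * L)) := by ring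
end

section
/- Let k ≥ 1 be an integer, and let points x₀, …, x_k ∈ E₁ and numbers τ_i > 0, L_i ∈ (0, 2L_F], η_i ∈ ℝ (0 ≤ i < k) satisfy, for all 0 ≤ i < k: x_{i+1} = x_i − η_i·(F̂'(x_i)*F̂'(x_i) + τ_iL_i·I)⁻¹F̂'(x_i)*F̂(x_i) and f₁(x_{i+1}) ≤ ψ_{x_i,L_i,τ_i}(x_{i+1}). Let η ∈ (0,2) satisfy η(2−η) ≤ η_i(2−η_i) for all 0 ≤ i < k. Then min_{0≤i<k} ‖∇f₂(x_i)‖² ≤ ( 8·(2L_F·max_{0≤i<k} τ_i + M_F²) / (η(2−η)·k) )·Σ_{i=0}^{k−1} ( (τ_i − f₁(x_i))²/2 + τ_i·(f₁(x_i) − f₁(x_{i+1})) ). (Theorem 6: gradient convergence for the explicitly scaled Gauss–Newton step.) -/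
open ContinuousLinearMap RealInnerProductSpace in
lemma aux_norm_g' {n m : ℕ}
    (A : EuclideanSpace ℝ (Fin n) →L[ℝ] EuclideanSpace ℝ (Fin m))
    (d : EuclideanSpace ℝ (Fin n)) (c M : ℝ) (hc : 0 < c) (hM : ‖A‖ ≤ M) :
    ‖adjoint A (A d) + c • d‖ ^ 2 ≤ (M ^ 2 + c) * (‖A d‖ ^ 2 + c * ‖d‖ ^ 2) := by
  have hMnn : (0:ℝ) ≤ M := le_trans (norm_nonneg _) hM
  have hAn : ‖adjoint A‖ = ‖A‖ := LinearIsometryEquiv.norm_map adjoint A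
  have h1 : ‖adjoint A (A d)‖ ≤ M * ‖A d‖ := by
    calc ‖adjoint A (A d)‖ ≤ ‖adjoint A‖ * ‖A d‖ := le_opNorm _ _
      _ ≤ M * ‖A d‖ := by rw [hAn]; exact mul_le_mul_of_nonneg_right hM (norm_nonneg _)
  have h2 : ‖A d‖ ≤ M * ‖d‖ :=
    le_trans (le_opNorm _ _) (mul_le_mul_of_nonneg_right hM (norm_nonneg _))
  have e1 : ‖adjoint A (A d)‖ ^ 2 ≤ M ^ 2 * ‖A d‖ ^ 2 := by
    nlinarith [norm_nonneg (adjoint A (A d)), norm_nonneg (A d)]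
  have e2 : ‖A d‖ ^ 2 ≤ M ^ 2 * ‖d‖ ^ 2 := by nlinarith [norm_nonneg (A d), norm_nonneg d]
  have h3 : ‖adjoint A (A d) + c • d‖ ^ 2
      = ‖adjoint A (A d)‖ ^ 2 + 2 * (c * ‖A d‖ ^ 2) + c ^ 2 * ‖d‖ ^ 2 := by
    rw [norm_add_sq_real, real_inner_smul_right, adjoint_inner_left,
      real_inner_self_eq_norm_sq, norm_smul, Real.norm_eq_abs, mul_pow, sq_abs]
  rw [h3]
  nlinarith [mul_le_mul_of_nonneg_left e2 hc.le]

open ContinuousLinearMap RealInnerProductSpace in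
lemma key_step' {n m : ℕ}
    (A : EuclideanSpace ℝ (Fin n) →L[ℝ] EuclideanSpace ℝ (Fin m))
    (F₀ : EuclideanSpace ℝ (Fin m)) (τ L t η : ℝ) (d : EuclideanSpace ℝ (Fin n))
    (hτ : 0 < τ) (hL : 0 < L)
    (hd : adjoint A (A d) + (τ * L) • d = adjoint A F₀)
    (f' : ℝ)
    (hub : f' ≤ τ / 2 + ‖F₀ - t • (A d)‖ ^ 2 / (2 * τ) + L / 2 * ‖t • d‖ ^ 2)
    (hηt : η * (2 - η) ≤ t * (2 - t)) :
    η * (2 - η) / 2 * (‖A d‖ ^ 2 + τ * L * ‖d‖ ^ 2)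
      ≤ (τ - ‖F₀‖) ^ 2 / 2 + τ * (‖F₀‖ - f') := by
  have hq : ⟪F₀, A d⟫ = ‖A d‖ ^ 2 + τ * L * ‖d‖ ^ 2 := by
    have := congrArg (fun v => ⟪v, d⟫) hd
    simp only [inner_add_left, real_inner_smul_left, adjoint_inner_left,
      real_inner_self_eq_norm_sq] at this
    exact this.symm
  have hexp : ‖F₀ - t • (A d)‖ ^ 2
      = ‖F₀‖ ^ 2 - 2 * t * (‖A d‖ ^ 2 + τ * L * ‖d‖ ^ 2) + t ^ 2 * ‖A d‖ ^ 2 := by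
    rw [norm_sub_sq_real, real_inner_smul_right, hq, norm_smul, Real.norm_eq_abs,
      mul_pow, sq_abs]; ring
  have hqnn : (0:ℝ) ≤ ‖A d‖ ^ 2 + τ * L * ‖d‖ ^ 2 := by positivity
  have hnd : ‖t • d‖ ^ 2 = t ^ 2 * ‖d‖ ^ 2 := by
    rw [norm_smul, Real.norm_eq_abs, mul_pow, sq_abs]
  rw [hexp, hnd] at hub
  have h2τ : (0:ℝ) < 2 * τ := by linarith
  have hX : (f' - τ / 2 - L / 2 * (t ^ 2 * ‖d‖ ^ 2)) * (2 * τ)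
      ≤ ‖F₀‖ ^ 2 - 2 * t * (‖A d‖ ^ 2 + τ * L * ‖d‖ ^ 2) + t ^ 2 * ‖A d‖ ^ 2 := by
    rw [← le_div_iff₀ h2τ]; linarith
  nlinarith [mul_le_mul_of_nonneg_right hηt hqnn]

lemma combine_ineq' (C e q Si g2 : ℝ) (hepos : 0 < e) (hCpos : 0 < C)
    (hkey : e / 2 * q ≤ Si) (hgq : g2 ≤ C * q) :
    4 * g2 ≤ 8 * C / e * Si := by
  rw [div_mul_eq_mul_div, le_div_iff₀ hepos]
  nlinarith [mul_le_mul_of_nonneg_left hkey hCpos.le]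

lemma final_div' (a b e kk : ℝ) (hepos : 0 < e) (hk : 0 < kk)
    (h : kk * a ≤ 8 * b / e) : a ≤ 8 * b / (e * kk) := by
  rw [le_div_iff₀ (by positivity)]
  calc a * (e * kk) = (kk * a) * e := by ring
    _ ≤ (8 * b / e) * e := by nlinarith
    _ = 8 * b := by field_simp

/-- **Theorem 6.** Gradient convergence for the explicitly scaled Gauss–Newton step;
`∇f₂(x) = 2 F̂'(x)* F̂(x)`, the step being `x_{i+1} = x_i − η_i (F̂'(x_i)*F̂'(x_i) + τ_iL_i I)⁻¹
F̂'(x_i)* F̂(x_i)` (encoded by vectors `d i`). -/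
theorem gradient_convergence_scaled_step
    {n m : ℕ}
    (F : EuclideanSpace ℝ (Fin n) → EuclideanSpace ℝ (Fin m))
    (F' : EuclideanSpace ℝ (Fin n) →
      EuclideanSpace ℝ (Fin n) →L[ℝ] EuclideanSpace ℝ (Fin m))
    (hF : ∀ x, HasFDerivAt F (F' x) x)
    (LF : ℝ) (hLF : 0 < LF)
    (hLip : ∀ x y, ‖F' y - F' x‖ ≤ LF * ‖y - x‖)
    (MF : ℝ) (hMF : 0 < MF) (hMFb : ∀ x, ‖F' x‖ ≤ MF)
    (k : ℕ) (hk : 1 ≤ k)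
    (x : ℕ → EuclideanSpace ℝ (Fin n))
    (τk Lk ηk : ℕ → ℝ) (d : ℕ → EuclideanSpace ℝ (Fin n))
    (hτk : ∀ i < k, 0 < τk i)
    (hLk : ∀ i < k, 0 < Lk i ∧ Lk i ≤ 2 * LF)
    (hd : ∀ i < k, (ContinuousLinearMap.adjoint (F' (x i))) (F' (x i) (d i))
        + (τk i * Lk i) • d i = (ContinuousLinearMap.adjoint (F' (x i))) (F (x i)))
    (hstep : ∀ i < k, x (i + 1) = x i - ηk i • d i)
    (hub : ∀ i < k, ‖F (x (i + 1))‖ ≤ psi F F' (x i) (Lk i) (τk i) (x (i + 1)))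
    (η : ℝ) (hη : η ∈ Set.Ioo (0 : ℝ) 2)
    (hηk : ∀ i < k, η * (2 - η) ≤ ηk i * (2 - ηk i)) :
    (Finset.range k).inf' (Finset.nonempty_range_iff.mpr (Nat.one_le_iff_ne_zero.mp hk))
        (fun i => ‖(2 : ℝ) • (ContinuousLinearMap.adjoint (F' (x i))) (F (x i))‖ ^ 2)
      ≤ 8 * (2 * LF * (Finset.range k).sup'
              (Finset.nonempty_range_iff.mpr (Nat.one_le_iff_ne_zero.mp hk)) τk + MF ^ 2)
          / (η * (2 - η) * (k : ℝ))
        * ∑ i ∈ Finset.range k,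
            ((τk i - ‖F (x i)‖) ^ 2 / 2 + τk i * (‖F (x i)‖ - ‖F (x (i + 1))‖)) := by
  obtain ⟨hη0, hη2⟩ := hη
  have hne := Finset.nonempty_range_iff.mpr (Nat.one_le_iff_ne_zero.mp hk)
  have hepos : (0:ℝ) < η * (2 - η) := by nlinarith
  have hTpos : 0 < (Finset.range k).sup' hne τk :=
    lt_of_lt_of_le (hτk 0 hk) (Finset.le_sup' τk (Finset.mem_range.mpr hk))
  have hCpos : (0:ℝ) < 2 * LF * (Finset.range k).sup' hne τk + MF ^ 2 := by positivity
  have hkpos : (0:ℝ) < (k:ℝ) := by exact_mod_cast hk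
  have main : ∀ i ∈ Finset.range k,
      ‖(2:ℝ) • (ContinuousLinearMap.adjoint (F' (x i))) (F (x i))‖ ^ 2
        ≤ 8 * (2 * LF * (Finset.range k).sup' hne τk + MF ^ 2) / (η * (2 - η))
          * ((τk i - ‖F (x i)‖) ^ 2 / 2 + τk i * (‖F (x i)‖ - ‖F (x (i + 1))‖)) := by
    intro i hi
    have hik := Finset.mem_range.mp hi
    have hτi := hτk i hik
    obtain ⟨hLi, hLiu⟩ := hLk i hik
    have hci : 0 < τk i * Lk i := by positivity
    have hpsi : psi F F' (x i) (Lk i) (τk i) (x (i + 1))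
        = τk i / 2 + ‖F (x i) - ηk i • (F' (x i) (d i))‖ ^ 2 / (2 * τk i)
          + Lk i / 2 * ‖ηk i • d i‖ ^ 2 := by
      rw [psi, hstep i hik, sub_sub_cancel_left, map_neg, map_smul, ← sub_eq_add_neg, norm_neg]
    have hub' := hub i hik
    rw [hpsi] at hub'
    have hkey := key_step' (F' (x i)) (F (x i)) (τk i) (Lk i) (ηk i) η (d i) hτi hLi
      (hd i hik) (‖F (x (i + 1))‖) hub' (hηk i hik)
    have hgb := aux_norm_g' (F' (x i)) (d i) (τk i * Lk i) MF hci (hMFb (x i))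
    rw [hd i hik] at hgb
    have hqnn : (0:ℝ) ≤ ‖F' (x i) (d i)‖ ^ 2 + τk i * Lk i * ‖d i‖ ^ 2 := by positivity
    have hMC : MF ^ 2 + τk i * Lk i ≤ 2 * LF * (Finset.range k).sup' hne τk + MF ^ 2 := by
      have h1 : τk i ≤ (Finset.range k).sup' hne τk := Finset.le_sup' τk hi
      nlinarith
    have hgq : ‖(ContinuousLinearMap.adjoint (F' (x i))) (F (x i))‖ ^ 2
        ≤ (2 * LF * (Finset.range k).sup' hne τk + MF ^ 2)
          * (‖F' (x i) (d i)‖ ^ 2 + τk i * Lk i * ‖d i‖ ^ 2) :=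
      le_trans hgb (mul_le_mul_of_nonneg_right hMC hqnn)
    have h4 : ‖(2:ℝ) • (ContinuousLinearMap.adjoint (F' (x i))) (F (x i))‖ ^ 2
        = 4 * ‖(ContinuousLinearMap.adjoint (F' (x i))) (F (x i))‖ ^ 2 := by
      rw [norm_smul]; norm_num; ring
    rw [h4]
    exact combine_ineq' _ _ _ _ _ hepos hCpos hkey hgq
  have hsum : ∑ i ∈ Finset.range k,
        ‖(2:ℝ) • (ContinuousLinearMap.adjoint (F' (x i))) (F (x i))‖ ^ 2
      ≤ 8 * (2 * LF * (Finset.range k).sup' hne τk + MF ^ 2) / (η * (2 - η))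
        * ∑ i ∈ Finset.range k,
            ((τk i - ‖F (x i)‖) ^ 2 / 2 + τk i * (‖F (x i)‖ - ‖F (x (i + 1))‖)) := by
    rw [Finset.mul_sum]
    exact Finset.sum_le_sum main
  have hinf : (k:ℝ) * (Finset.range k).inf' hne
        (fun i => ‖(2:ℝ) • (ContinuousLinearMap.adjoint (F' (x i))) (F (x i))‖ ^ 2)
      ≤ ∑ i ∈ Finset.range k,
          ‖(2:ℝ) • (ContinuousLinearMap.adjoint (F' (x i))) (F (x i))‖ ^ 2 := by
    calc (k:ℝ) * (Finset.range k).inf' hne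
          (fun i => ‖(2:ℝ) • (ContinuousLinearMap.adjoint (F' (x i))) (F (x i))‖ ^ 2)
        = ∑ _i ∈ Finset.range k, (Finset.range k).inf' hne
            (fun i => ‖(2:ℝ) • (ContinuousLinearMap.adjoint (F' (x i))) (F (x i))‖ ^ 2) := by
          rw [Finset.sum_const, Finset.card_range, nsmul_eq_mul]
      _ ≤ ∑ i ∈ Finset.range k,
            ‖(2:ℝ) • (ContinuousLinearMap.adjoint (F' (x i))) (F (x i))‖ ^ 2 :=
          Finset.sum_le_sum fun i hi => Finset.inf'_le _ hi
  have hrw : 8 * (2 * LF * (Finset.range k).sup' hne τk + MF ^ 2) / (η * (2 - η) * (k:ℝ))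
        * ∑ i ∈ Finset.range k,
            ((τk i - ‖F (x i)‖) ^ 2 / 2 + τk i * (‖F (x i)‖ - ‖F (x (i + 1))‖))
      = 8 * ((2 * LF * (Finset.range k).sup' hne τk + MF ^ 2)
          * ∑ i ∈ Finset.range k,
              ((τk i - ‖F (x i)‖) ^ 2 / 2 + τk i * (‖F (x i)‖ - ‖F (x (i + 1))‖)))
        / (η * (2 - η) * (k:ℝ)) := by ring
  rw [hrw]
  apply final_div' _ _ _ _ hepos hkpos
  calc (k:ℝ) * (Finset.range k).inf' hne
        (fun i => ‖(2:ℝ) • (ContinuousLinearMap.adjoint (F' (x i))) (F (x i))‖ ^ 2)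
      ≤ ∑ i ∈ Finset.range k,
          ‖(2:ℝ) • (ContinuousLinearMap.adjoint (F' (x i))) (F (x i))‖ ^ 2 := hinf
    _ ≤ 8 * (2 * LF * (Finset.range k).sup' hne τk + MF ^ 2) / (η * (2 - η))
        * ∑ i ∈ Finset.range k,
            ((τk i - ‖F (x i)‖) ^ 2 / 2 + τk i * (‖F (x i)‖ - ‖F (x (i + 1))‖)) := hsum
    _ = 8 * ((2 * LF * (Finset.range k).sup' hne τk + MF ^ 2)
          * ∑ i ∈ Finset.range k,
              ((τk i - ‖F (x i)‖) ^ 2 / 2 + τk i * (‖F (x i)‖ - ‖F (x (i + 1))‖)))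
        / (η * (2 - η)) := by ring
end

section
/- Let (x_k)_{k≥0} ⊆ E₁ and numbers L_k > 0, η_k ∈ (0,2), τ_k > 0, c_k, α_k satisfy for all k ≥ 0: f₁(x_k) > 0, x_{k+1} = x_k − η_k·(F̂'(x_k)*F̂'(x_k) + τ_kL_k·I)⁻¹F̂'(x_k)*F̂(x_k), f₁(x_{k+1}) ≤ ψ_{x_k,L_k,τ_k}(x_{k+1}), τ_k = c_k·f₁(x_k), α_k ∈ [ 1/2 + (L_k·f₁(x_k) + (1−η_k)²μ)/(2(L_k·f₁(x_k) + μ)), 1 ), and c_k ∈ [ (L_k·f₁(x_k) + (1−η_k)²μ)/((2α_k − 1)(L_k·f₁(x_k) + μ)), α_k − 1/2 − μ/(2L_k·f₁(x_k)) + √( α_k² + α_k·(μ/(L_k·f₁(x_k)) − 1) + (1/4)·(μ/(L_k·f₁(x_k)) + 1)² − (1−η_k)²μ/(L_k·f₁(x_k)) ) ]. Then for every k ≥ 0, f₁(x_k) ≤ f₁(x₀)·∏_{i=0}^{k−1} α_i, where the empty product equals 1. (Theorem 7: globally linear convergence of the normalized-squares method with τ_k proportional to f₁(x_k).) -/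
lemma key_ineq (l μ e α c : ℝ) (hl : 0 < l) (hμ : 0 < μ) (he0 : 0 ≤ e)
    (hα1 : α ≤ 1) (hc0 : 0 < c)
    (hA : 0 ≤ c * ((2*α-1)*(l+μ)) - (l + e*μ))
    (hB : 0 ≤ (2*α-e)*μ + (2*α-1)*l*c - μ*c - l*c^2) :
    (1 + c^2 - 2*c*α)*(μ + c*l) ≤ (1-e)*μ := by
  rcases le_total c 1 with h | h
  · have h2 : (0:ℝ) ≤ c*μ + l*(1 + c^2 - c*(2*α-1)) := by
      nlinarith [mul_nonneg hl.le (sq_nonneg (c-1)), mul_pos hl hc0,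
        mul_nonneg (mul_nonneg hl.le hc0.le) (sub_nonneg.2 hα1), mul_pos hμ hc0]
    nlinarith [mul_nonneg (sub_nonneg.2 h) h2]
  · have h2 : (0:ℝ) ≤ e*μ + c*l := by positivity
    nlinarith [mul_nonneg hc0.le hB, mul_nonneg (sub_nonneg.2 h) h2]

lemma sqrt_bound (l μ e α c : ℝ) (hl : 0 < l) (hμ : 0 < μ) (he0 : 0 ≤ e) (he1 : e ≤ 1)
    (hα : 1/2 ≤ α) (hc0 : 0 < c)
    (hcu : c ≤ α - 1/2 - μ/(2*l) + Real.sqrt (α^2 + α*(μ/l - 1) + 1/4*(μ/l + 1)^2 - e*μ/l)) :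
    0 ≤ (2*α-e)*μ + (2*α-1)*l*c - μ*c - l*c^2 := by
  set γ : ℝ := α - 1/2 - μ/(2*l) with hγ
  clear_value γ
  have hδ : (0:ℝ) ≤ (2*α-e)*μ/l := by
    apply div_nonneg _ hl.le
    nlinarith
  have hrad : α^2 + α*(μ/l - 1) + 1/4*(μ/l + 1)^2 - e*μ/l = γ^2 + (2*α-e)*μ/l := by
    rw [hγ]
    field_simp
    ring
  rw [hrad] at hcu
  have hs0 : 0 ≤ Real.sqrt (γ^2 + (2*α-e)*μ/l) := Real.sqrt_nonneg _
  have hs2 : (Real.sqrt (γ^2 + (2*α-e)*μ/l))^2 = γ^2 + (2*α-e)*μ/l :=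
    Real.sq_sqrt (by positivity)
  have hgoal : (2*α-e)*μ + (2*α-1)*l*c - μ*c - l*c^2
      = l * ((2*α-e)*μ/l + 2*γ*c - c^2) := by
    rw [hγ]
    field_simp
    ring
  rw [hgoal]
  apply mul_nonneg hl.le
  rcases le_total γ c with h | h
  · have h6 : (c-γ)^2 ≤ (Real.sqrt (γ^2 + (2*α-e)*μ/l))^2 :=
      pow_le_pow_left₀ (by linarith) (by linarith) 2
    rw [hs2] at h6
    nlinarith [h6]
  · nlinarith [hδ, mul_nonneg hc0.le (by linarith : (0:ℝ) ≤ 2*γ - c)]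

lemma step2 (μ L τ c α η U p q f1 : ℝ)
    (hμ : 0 < μ) (hL : 0 < L) (hf : 0 < f1) (hc0 : 0 < c) (hτ : τ = c * f1)
    (hη0 : 0 < η) (hη2 : η < 2)
    (hU : 0 ≤ U) (hp : 0 ≤ p) (hq : 0 ≤ q)
    (hG : f1^2 = U + 2*(τ*L*p) + q)
    (hqb : μ*q ≤ (τ*L)^2*p) (hUp : μ*p ≤ U)
    (hkey : (1 + c^2 - 2*c*α)*(μ + c*(L*f1)) ≤ (1-(1-η)^2)*μ) :
    τ/2 + (f1^2 - 2*η*(U + τ*L*p) + η^2*U)/(2*τ) + L/2*(η^2*p) ≤ α*f1 := by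
  subst hτ
  have ht : 0 < c*f1*L := by positivity
  have key2 : (1 + c^2 - 2*c*α)*f1^2 ≤ (2*η - η^2)*(U + c*f1*L*p) := by
    rw [hG]
    have htp : 0 ≤ U + c*f1*L*p := add_nonneg hU (mul_nonneg ht.le hp)
    have hG0 : (0:ℝ) ≤ U + 2*(c*f1*L*p) + q := by positivity
    rcases le_or_gt (1 + c^2 - 2*c*α) 0 with hβ | hβ
    · have h1 : (0:ℝ) ≤ 2*η - η^2 := by nlinarith
      nlinarith [mul_nonneg h1 htp, mul_nonneg (neg_nonneg.2 hβ) hG0]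
    · have h2 := mul_le_mul_of_nonneg_right hkey htp
      have h3 := mul_le_mul_of_nonneg_left hqb hβ.le
      have h4 : 0 ≤ (1+c^2-2*c*α)*((c*f1*L)*(U - μ*p)) :=
        mul_nonneg hβ.le (mul_nonneg ht.le (sub_nonneg.2 hUp))
      nlinarith [h2, h3, h4, hμ]
  have h5 : (f1^2 - 2*η*(U + c*f1*L*p) + η^2*U)/(2*(c*f1)) ≤ α*f1 - c*f1/2 - L/2*(η^2*p) := by
    rw [div_le_iff₀ (by positivity : (0:ℝ) < 2*(c*f1))]
    nlinarith [key2]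
  linarith

set_option maxHeartbeats 1000000 in
lemma per_step
    {n m : ℕ}
    (F : EuclideanSpace ℝ (Fin n) → EuclideanSpace ℝ (Fin m))
    (F' : EuclideanSpace ℝ (Fin n) →
      EuclideanSpace ℝ (Fin n) →L[ℝ] EuclideanSpace ℝ (Fin m))
    (μ : ℝ) (hμ : 0 < μ)
    (hPL : ∀ (x : EuclideanSpace ℝ (Fin n)) (u : EuclideanSpace ℝ (Fin m)),
      μ * ‖u‖ ^ 2 ≤ ‖(ContinuousLinearMap.adjoint (F' x)) u‖ ^ 2)
    (xk : EuclideanSpace ℝ (Fin n)) (xk1 : EuclideanSpace ℝ (Fin n))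
    (L η τ c α : ℝ) (dd : EuclideanSpace ℝ (Fin n))
    (hf : 0 < ‖F xk‖) (hL : 0 < L) (hη : η ∈ Set.Ioo (0:ℝ) 2) (hτ0 : 0 < τ)
    (hd : (ContinuousLinearMap.adjoint (F' xk)) (F' xk dd)
        + (τ * L) • dd = (ContinuousLinearMap.adjoint (F' xk)) (F xk))
    (hstep : xk1 = xk - η • dd)
    (hub : ‖F xk1‖ ≤ psi F F' xk L τ xk1)
    (hτc : τ = c * ‖F xk‖)
    (hα : α ∈ Set.Ico (1/2 + (L * ‖F xk‖ + (1 - η)^2 * μ) / (2 * (L * ‖F xk‖ + μ))) 1)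
    (hc : c ∈ Set.Icc
        ((L * ‖F xk‖ + (1 - η)^2 * μ) / ((2 * α - 1) * (L * ‖F xk‖ + μ)))
        (α - 1/2 - μ / (2 * L * ‖F xk‖)
          + Real.sqrt (α^2 + α * (μ / (L * ‖F xk‖) - 1)
            + 1/4 * (μ / (L * ‖F xk‖) + 1)^2 - (1 - η)^2 * μ / (L * ‖F xk‖)))) :
    ‖F xk1‖ ≤ α * ‖F xk‖ := by
  have hl : 0 < L * ‖F xk‖ := mul_pos hL hf
  have hc0 : 0 < c := by
    have h1 : 0 < c * ‖F xk‖ := hτc ▸ hτ0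
    rcases mul_pos_iff.1 h1 with h2 | h2
    · exact h2.1
    · linarith [h2.2, hf]
  have hα12 : 1/2 < α := by
    have h0 : 0 < (L * ‖F xk‖ + (1 - η)^2 * μ) / (2 * (L * ‖F xk‖ + μ)) := by positivity
    linarith [hα.1]
  have hD : 0 < 2*α - 1 := by linarith
  have he1 : (1 - η)^2 ≤ 1 := by nlinarith [hη.1, hη.2]
  -- lower bound on c gives hA0
  have hA0 : 0 ≤ c * ((2*α-1)*(L * ‖F xk‖ + μ)) - (L * ‖F xk‖ + (1 - η)^2 * μ) := by
    have h1 := hc.1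
    rw [div_le_iff₀ (by positivity)] at h1
    linarith
  -- upper bound on c gives hB0
  have hB0 : 0 ≤ (2*α-(1 - η)^2)*μ + (2*α-1)*(L * ‖F xk‖)*c - μ*c - (L * ‖F xk‖)*c^2 := by
    have h1 := hc.2
    rw [mul_assoc] at h1
    exact sqrt_bound (L * ‖F xk‖) μ ((1 - η)^2) α c hl hμ (sq_nonneg _) he1 hα12.le hc0 h1
  have hkey := key_ineq (L * ‖F xk‖) μ ((1 - η)^2) α c hl hμ (sq_nonneg _) hα.2.le hc0 hA0 hB0
  -- vector part
  set A := F' xk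
  set g := F xk
  set u := A dd with hu
  have hAr : (ContinuousLinearMap.adjoint A) (g - u) = (τ * L) • dd := by
    rw [map_sub, ← hd]; abel
  have hur : (inner ℝ u (g - u) : ℝ) = (τ*L) * ‖dd‖^2 := by
    calc (inner ℝ u (g - u) : ℝ) = inner ℝ (g - u) (A dd) := real_inner_comm _ _
      _ = inner ℝ ((ContinuousLinearMap.adjoint A) (g - u)) dd :=
          (ContinuousLinearMap.adjoint_inner_left _ _ _).symm
      _ = inner ℝ ((τ*L) • dd) dd := by rw [hAr]
      _ = (τ*L) * ‖dd‖^2 := by rw [real_inner_smul_left, real_inner_self_eq_norm_sq]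
  have ht : 0 < τ * L := mul_pos hτ0 hL
  have hqb : μ * ‖g - u‖^2 ≤ (τ*L)^2 * ‖dd‖^2 := by
    have h1 := hPL xk (g - u)
    rw [hAr, norm_smul] at h1
    simp only [Real.norm_eq_abs, mul_pow, sq_abs] at h1
    linarith
  have hUp : μ * ‖dd‖^2 ≤ ‖u‖^2 := by
    have hw : (ContinuousLinearMap.adjoint A) ((τ*L)⁻¹ • (g - u)) = dd := by
      rw [map_smul, hAr, smul_smul, inv_mul_cancel₀ ht.ne', one_smul]
    have hpl := hPL xk ((τ*L)⁻¹ • (g - u))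
    rw [hw] at hpl
    have hip : ‖dd‖^2 = inner ℝ ((τ*L)⁻¹ • (g - u)) (A dd) := by
      rw [← ContinuousLinearMap.adjoint_inner_left, hw, real_inner_self_eq_norm_sq]
    have hcs := real_inner_le_norm ((τ*L)⁻¹ • (g - u)) (A dd)
    rw [← hip] at hcs
    rcases eq_or_lt_of_le (norm_nonneg dd) with h0 | h0
    · rw [← h0]
      simpa using sq_nonneg ‖u‖
    · have hP2 : 0 < ‖dd‖^2 := by positivity
      have e1 : (‖dd‖^2)^2 ≤ (‖(τ*L)⁻¹ • (g - u)‖ * ‖u‖)^2 :=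
        pow_le_pow_left₀ (sq_nonneg _) hcs 2
      have e2 := mul_le_mul_of_nonneg_right hpl (sq_nonneg ‖u‖)
      nlinarith [e1, e2, hP2, hμ.le]
  have hGeq : ‖g‖^2 = ‖u‖^2 + 2*(τ*L*‖dd‖^2) + ‖g - u‖^2 := by
    have h1 := norm_add_sq_real u (g - u)
    simp only [add_sub_cancel] at h1
    rw [h1, hur]
    try ring
  have hNeq : ‖g - η • u‖^2 = ‖g‖^2 - 2*η*(‖u‖^2 + τ*L*‖dd‖^2) + η^2*‖u‖^2 := by
    have h1 := norm_sub_sq_real g (η • u)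
    have h2 : (inner ℝ g (η • u) : ℝ) = η * (‖u‖^2 + (τ*L)*‖dd‖^2) := by
      rw [real_inner_smul_right, real_inner_comm]
      have h3 : (inner ℝ u g : ℝ) = inner ℝ u (u + (g - u)) := by rw [add_sub_cancel]
      rw [h3, inner_add_right, real_inner_self_eq_norm_sq, hur]
    rw [h1, h2, norm_smul]
    simp only [Real.norm_eq_abs, mul_pow, sq_abs]
    ring
  have hψeq : psi F F' xk L τ xk1 = τ/2 + ‖g - η • u‖^2/(2*τ) + L/2*(η^2*‖dd‖^2) := by
    unfold psi
    have hxd : xk1 - xk = -(η • dd) := by rw [hstep]; abel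
    rw [hxd, map_neg, map_smul, norm_neg, norm_smul, ← sub_eq_add_neg]
    rw [Real.norm_eq_abs, abs_of_pos hη.1]
    ring
  calc ‖F xk1‖ ≤ psi F F' xk L τ xk1 := hub
    _ = τ/2 + ‖g - η • u‖^2/(2*τ) + L/2*(η^2*‖dd‖^2) := hψeq
    _ = τ/2 + (‖g‖^2 - 2*η*(‖u‖^2 + τ*L*‖dd‖^2) + η^2*‖u‖^2)/(2*τ) + L/2*(η^2*‖dd‖^2) := by
        rw [hNeq]
    _ ≤ α * ‖g‖ :=
        step2 μ L τ c α η (‖u‖^2) (‖dd‖^2) (‖g - u‖^2) ‖g‖ hμ hL hf hc0 hτc hη.1 hη.2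
          (sq_nonneg _) (sq_nonneg _) (sq_nonneg _) hGeq hqb hUp hkey

/-- **Theorem 7.** Globally linear convergence of the normalized-squares method with
`τ_k` proportional to `f₁(x_k)`; the step `x_{k+1} = x_k − η_k (F̂'(x_k)*F̂'(x_k) + τ_kL_k I)⁻¹
F̂'(x_k)* F̂(x_k)` is encoded through vectors `d k`. -/
theorem globally_linear_convergence
    {n m : ℕ}
    (F : EuclideanSpace ℝ (Fin n) → EuclideanSpace ℝ (Fin m))
    (F' : EuclideanSpace ℝ (Fin n) →
      EuclideanSpace ℝ (Fin n) →L[ℝ] EuclideanSpace ℝ (Fin m))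
    (hF : ∀ x, HasFDerivAt F (F' x) x)
    (LF : ℝ) (hLF : 0 < LF)
    (hLip : ∀ x y, ‖F' y - F' x‖ ≤ LF * ‖y - x‖)
    (μ : ℝ) (hμ : 0 < μ)
    (hPL : ∀ (x : EuclideanSpace ℝ (Fin n)) (u : EuclideanSpace ℝ (Fin m)),
      μ * ‖u‖ ^ 2 ≤ ‖(ContinuousLinearMap.adjoint (F' x)) u‖ ^ 2)
    (x : ℕ → EuclideanSpace ℝ (Fin n))
    (Lk ηk τk ck αk : ℕ → ℝ) (d : ℕ → EuclideanSpace ℝ (Fin n))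
    (hfx : ∀ k, 0 < ‖F (x k)‖)
    (hLk : ∀ k, 0 < Lk k)
    (hηk : ∀ k, ηk k ∈ Set.Ioo (0 : ℝ) 2)
    (hτk : ∀ k, 0 < τk k)
    (hd : ∀ k, (ContinuousLinearMap.adjoint (F' (x k))) (F' (x k) (d k))
        + (τk k * Lk k) • d k = (ContinuousLinearMap.adjoint (F' (x k))) (F (x k)))
    (hstep : ∀ k, x (k + 1) = x k - ηk k • d k)
    (hub : ∀ k, ‖F (x (k + 1))‖ ≤ psi F F' (x k) (Lk k) (τk k) (x (k + 1)))
    (hτc : ∀ k, τk k = ck k * ‖F (x k)‖)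
    (hα : ∀ k, αk k ∈ Set.Ico
        (1 / 2 + (Lk k * ‖F (x k)‖ + (1 - ηk k) ^ 2 * μ)
          / (2 * (Lk k * ‖F (x k)‖ + μ))) 1)
    (hc : ∀ k, ck k ∈ Set.Icc
        ((Lk k * ‖F (x k)‖ + (1 - ηk k) ^ 2 * μ)
          / ((2 * αk k - 1) * (Lk k * ‖F (x k)‖ + μ)))
        (αk k - 1 / 2 - μ / (2 * Lk k * ‖F (x k)‖)
          + Real.sqrt ((αk k) ^ 2 + αk k * (μ / (Lk k * ‖F (x k)‖) - 1)
            + 1 / 4 * (μ / (Lk k * ‖F (x k)‖) + 1) ^ 2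
            - (1 - ηk k) ^ 2 * μ / (Lk k * ‖F (x k)‖)))) :
    ∀ k, ‖F (x k)‖ ≤ ‖F (x 0)‖ * ∏ i ∈ Finset.range k, αk i := by
  have step : ∀ k, ‖F (x (k+1))‖ ≤ αk k * ‖F (x k)‖ := fun k =>
    per_step F F' μ hμ hPL (x k) (x (k+1)) (Lk k) (ηk k) (τk k) (ck k) (αk k) (d k)
      (hfx k) (hLk k) (hηk k) (hτk k) (hd k) (hstep k) (hub k) (hτc k) (hα k) (hc k)
  intro k
  induction k with
  | zero => simp
  | succ k ih =>
    have h1 : 0 < Lk k * ‖F (x k)‖ := mul_pos (hLk k) (hfx k)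
    have hα0 : 0 ≤ αk k := by
      have h0 : (0:ℝ) ≤ (Lk k * ‖F (x k)‖ + (1 - ηk k)^2*μ)/(2*(Lk k*‖F (x k)‖+μ)) :=
        div_nonneg (by nlinarith [sq_nonneg (1 - ηk k)]) (by linarith)
      linarith [(hα k).1]
    calc ‖F (x (k+1))‖ ≤ αk k * ‖F (x k)‖ := step k
      _ ≤ αk k * (‖F (x 0)‖ * ∏ i ∈ Finset.range k, αk i) := mul_le_mul_of_nonneg_left ih hα0
      _ = ‖F (x 0)‖ * ∏ i ∈ Finset.range (k+1), αk i := by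
          rw [Finset.prod_range_succ]; ring
end

section
/- Let L ∈ (0, L_F], ε ≥ 0, let k ≥ 1 be an integer and r > 0. Suppose points x₀, …, x_k ∈ E₁ and numbers L₀, …, L_{k−1} and τ₀*, …, τ_{k−1}* > 0 satisfy, for every 0 ≤ i < k: L ≤ L_i ≤ 2L_F, ψ_{x_i,L_i,τ_i*}(x_{i+1}) ≤ ε + inf_{y ∈ E₁}( φ(x_i,y) + (L_i/2)·‖y − x_i‖² ), f₁(x_i) ≥ ψ_{x_i,L_i,τ_i*}(x_{i+1}), and f₁(x_{i+1}) ≤ ψ_{x_i,L_i,τ_i*}(x_{i+1}). Then (8L_F²/L)·( ε + (f₁(x₀) − f₁(x_k))/k ) ≥ min_{0≤i<k} ‖2L_F·(S_{2L_F}(x_i) − x_i)‖², and L_F·( ε + (f₁(x₀) − f₁(x_k))/k ) ≥ min_{0≤i<k} 2·(L_F·r)²·κ( Δ̃_r(x_i)/(2L_F·r²) ). (Theorem 8: global sublinear convergence with adaptively chosen τ.) -/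
/-- `Δ̃_r(x) = f₁(x) − inf {φ(x,y) : ‖y − x‖ ≤ r}`. -/
noncomputable def DeltaTilde {n m : ℕ}
    (F : EuclideanSpace ℝ (Fin n) → EuclideanSpace ℝ (Fin m))
    (F' : EuclideanSpace ℝ (Fin n) →
      EuclideanSpace ℝ (Fin n) →L[ℝ] EuclideanSpace ℝ (Fin m))
    (r : ℝ) (x : EuclideanSpace ℝ (Fin n)) : ℝ :=
  ‖F x‖ - sInf ((fun y => ‖F x + F' x (y - x)‖) '' Metric.closedBall x r)

section aux
variable {E G : Type*} [NormedAddCommGroup E] [NormedSpace ℝ E]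
  [NormedAddCommGroup G] [NormedSpace ℝ G]

lemma convex_aux (v : G) (T : E →L[ℝ] G) (x y : E) {t : ℝ} (ht0 : 0 ≤ t) (ht1 : t ≤ 1) :
    ‖v + T (x + t • (y - x) - x)‖ ≤ (1 - t) * ‖v‖ + t * ‖v + T (y - x)‖ := by
  have h1 : x + t • (y - x) - x = t • (y - x) := by abel
  rw [h1, map_smul]
  have h2 : v + t • T (y - x) = (1 - t) • v + t • (v + T (y - x)) := by module
  rw [h2]
  calc ‖(1-t) • v + t • (v + T (y-x))‖ ≤ ‖(1-t) • v‖ + ‖t • (v + T (y-x))‖ := norm_add_le _ _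
    _ = (1-t) * ‖v‖ + t * ‖v + T (y-x)‖ := by
        rw [norm_smul, norm_smul, Real.norm_eq_abs, Real.norm_eq_abs,
          abs_of_nonneg (by linarith), abs_of_nonneg ht0]

lemma bdd_range (v : G) (T : E →L[ℝ] G) (x : E) {a : ℝ} (ha : 0 ≤ a) :
    BddBelow (Set.range fun y => ‖v + T (y - x)‖ + a * ‖y - x‖ ^ 2) := by
  refine ⟨0, ?_⟩; rintro z ⟨y, rfl⟩; positivity

lemma strong_conv (v : G) (T : E →L[ℝ] G) (x s : E) {M : ℝ} (hM : 0 < M)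
    (hmin : ∀ y, ‖v + T (s - x)‖ + M / 2 * ‖s - x‖ ^ 2
      ≤ ‖v + T (y - x)‖ + M / 2 * ‖y - x‖ ^ 2) :
    ‖v + T (s - x)‖ + M * ‖s - x‖ ^ 2 ≤ ‖v‖ := by
  set d := ‖s - x‖ with hd
  have key : ∀ t : ℝ, 0 < t → t ≤ 1 →
      ‖v + T (s - x)‖ + M * d ^ 2 ≤ ‖v‖ + M / 2 * t * d ^ 2 := by
    intro t ht0 ht1
    have h1 := hmin (x + (1 - t) • (s - x))
    have h2 := convex_aux v T x s (t := 1 - t) (by linarith) (by linarith)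
    have h3 : ‖x + (1 - t) • (s - x) - x‖ = (1 - t) * d := by
      rw [show x + (1 - t) • (s - x) - x = (1 - t) • (s - x) by abel, norm_smul,
        Real.norm_eq_abs, abs_of_nonneg (by linarith)]
    rw [h3] at h1
    have h4 : t * (‖v + T (s - x)‖ + M * d ^ 2) ≤ t * (‖v‖ + M / 2 * t * d ^ 2) := by
      nlinarith [h1, h2, sq_nonneg d]
    exact le_of_mul_le_mul_left h4 ht0
  refine le_of_forall_pos_le_add fun δ hδ => ?_
  have hpos : (0:ℝ) < M / 2 * d ^ 2 + 1 := by positivity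
  set t : ℝ := min 1 (δ / (M / 2 * d ^ 2 + 1)) with htdef
  have ht0 : 0 < t := lt_min one_pos (div_pos hδ hpos)
  have ht1 : t ≤ 1 := min_le_left _ _
  have h5 : t * (M / 2 * d ^ 2 + 1) ≤ δ := by
    have := min_le_right (1:ℝ) (δ / (M / 2 * d ^ 2 + 1))
    calc t * (M / 2 * d ^ 2 + 1) ≤ (δ / (M / 2 * d ^ 2 + 1)) * (M / 2 * d ^ 2 + 1) := by
          exact mul_le_mul_of_nonneg_right this hpos.le
      _ = δ := by field_simp
  have h6 := key t ht0 ht1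
  nlinarith [sq_nonneg d, ht0]

lemma theta_bound (v : G) (T : E →L[ℝ] G) (x : E) {LF θ r : ℝ} (hLF : 0 < LF) (hr : 0 < r)
    (hθ0 : 0 ≤ θ) (hθ1 : θ ≤ 1) :
    sInf (Set.range fun y => ‖v + T (y - x)‖ + LF * ‖y - x‖ ^ 2)
      ≤ ‖v‖ - θ * (‖v‖ - sInf ((fun y => ‖v + T (y - x)‖) '' Metric.closedBall x r))
        + LF * r ^ 2 * θ ^ 2 := by
  refine le_of_forall_pos_le_add fun δ hδ => ?_
  obtain ⟨z, hz, hzlt⟩ := Real.lt_sInf_add_pos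
    (s := (fun y => ‖v + T (y - x)‖) '' Metric.closedBall x r)
    ⟨‖v‖, x, Metric.mem_closedBall_self hr.le, by simp⟩ hδ
  obtain ⟨y, hyball, rfl⟩ := hz
  have hyr : ‖y - x‖ ≤ r := by
    rwa [← dist_eq_norm, ← Metric.mem_closedBall]
  have h1 : sInf (Set.range fun y => ‖v + T (y - x)‖ + LF * ‖y - x‖ ^ 2)
      ≤ ‖v + T (x + θ • (y - x) - x)‖ + LF * ‖x + θ • (y - x) - x‖ ^ 2 :=
    csInf_le (bdd_range v T x hLF.le) ⟨x + θ • (y - x), rfl⟩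
  have h2 := convex_aux v T x y hθ0 hθ1
  have h3 : ‖x + θ • (y - x) - x‖ = θ * ‖y - x‖ := by
    rw [show x + θ • (y - x) - x = θ • (y - x) by abel, norm_smul,
      Real.norm_eq_abs, abs_of_nonneg hθ0]
  rw [h3] at h1
  have h4 : LF * (θ * ‖y - x‖) ^ 2 ≤ LF * r ^ 2 * θ ^ 2 := by
    have h5 : ‖y - x‖ ^ 2 ≤ r ^ 2 := pow_le_pow_left₀ (norm_nonneg _) hyr 2
    nlinarith [sq_nonneg θ, mul_le_mul_of_nonneg_left h5 (by positivity : (0:ℝ) ≤ LF * θ ^ 2)]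
  nlinarith [norm_nonneg (v + T (y - x))]

lemma sInf_mono_coeff (v : G) (T : E →L[ℝ] G) (x : E) {a b : ℝ} (ha : 0 ≤ a) (hab : a ≤ b) :
    sInf (Set.range fun y => ‖v + T (y - x)‖ + a * ‖y - x‖ ^ 2)
      ≤ sInf (Set.range fun y => ‖v + T (y - x)‖ + b * ‖y - x‖ ^ 2) := by
  refine le_csInf ⟨_, Set.mem_range_self x⟩ ?_
  rintro z ⟨y, rfl⟩
  calc sInf (Set.range fun y => ‖v + T (y - x)‖ + a * ‖y - x‖ ^ 2)
      ≤ ‖v + T (y - x)‖ + a * ‖y - x‖ ^ 2 := csInf_le (bdd_range v T x ha) ⟨y, rfl⟩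
    _ ≤ ‖v + T (y - x)‖ + b * ‖y - x‖ ^ 2 := by nlinarith [sq_nonneg ‖y - x‖]

lemma prox_bound (v : G) (T : E →L[ℝ] G) (x s : E) {LF : ℝ} (hLF : 0 < LF)
    (hmin : ∀ y, ‖v + T (s - x)‖ + 2 * LF / 2 * ‖s - x‖ ^ 2
      ≤ ‖v + T (y - x)‖ + 2 * LF / 2 * ‖y - x‖ ^ 2) :
    ‖(2 * LF) • (s - x)‖ ^ 2
      ≤ 4 * LF * (‖v‖ - sInf (Set.range fun y => ‖v + T (y - x)‖ + LF * ‖y - x‖ ^ 2)) := by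
  have h1 := strong_conv v T x s (M := 2 * LF) (by positivity) hmin
  have h2 : sInf (Set.range fun y => ‖v + T (y - x)‖ + LF * ‖y - x‖ ^ 2)
      ≤ ‖v + T (s - x)‖ + LF * ‖s - x‖ ^ 2 := csInf_le (bdd_range v T x hLF.le) ⟨s, rfl⟩
  have h3 : ‖(2 * LF) • (s - x)‖ = 2 * LF * ‖s - x‖ := by
    rw [norm_smul, Real.norm_eq_abs, abs_of_nonneg (by positivity)]
  rw [h3]
  nlinarith [sq_nonneg ‖s - x‖]

lemma kappa_bound (v : G) (T : E →L[ℝ] G) (x : E) {LF r : ℝ} (hLF : 0 < LF) (hr : 0 < r) :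
    2 * LF * r ^ 2 * kappa ((‖v‖ -
        sInf ((fun y => ‖v + T (y - x)‖) '' Metric.closedBall x r)) / (2 * LF * r ^ 2))
      ≤ ‖v‖ - sInf (Set.range fun y => ‖v + T (y - x)‖ + LF * ‖y - x‖ ^ 2) := by
  set I := sInf ((fun y => ‖v + T (y - x)‖) '' Metric.closedBall x r) with hI
  set a := ‖v‖ - I with ha
  have hc : (0:ℝ) < 2 * LF * r ^ 2 := by positivity
  have ha0 : 0 ≤ a := by
    have hle : I ≤ ‖v‖ := by
      refine csInf_le ⟨0, ?_⟩ ⟨x, Metric.mem_closedBall_self hr.le, by simp⟩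
      rintro z ⟨y, -, rfl⟩; exact norm_nonneg _
    rw [ha]; linarith
  by_cases hcase : a ≤ 2 * LF * r ^ 2
  · have hθ1 : a / (2 * LF * r ^ 2) ≤ 1 := (div_le_one hc).mpr hcase
    have hθ0 : 0 ≤ a / (2 * LF * r ^ 2) := div_nonneg ha0 hc.le
    have h := theta_bound v T x (θ := a / (2 * LF * r ^ 2)) hLF hr hθ0 hθ1
    rw [← hI, ← ha] at h
    rw [kappa, if_pos hθ1]
    have heq : 2 * LF * r ^ 2 * ((a / (2 * LF * r ^ 2)) ^ 2 / 2)
        = a / (2 * LF * r ^ 2) * a - LF * r ^ 2 * (a / (2 * LF * r ^ 2)) ^ 2 := by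
      field_simp; ring
    rw [heq]; linarith
  · have hθ : (1:ℝ) < a / (2 * LF * r ^ 2) := (one_lt_div hc).mpr (not_le.mp hcase)
    have h := theta_bound v T x (θ := 1) hLF hr zero_le_one le_rfl
    rw [← hI, ← ha] at h
    rw [kappa, if_neg (not_le.mpr hθ)]
    have heq : 2 * LF * r ^ 2 * (a / (2 * LF * r ^ 2) - 1 / 2) = a - LF * r ^ 2 := by
      field_simp
    rw [heq]; nlinarith

end aux

/-- **Theorem 8.** Global sublinear convergence with adaptively chosen `τ`.
`S L x` is characterized as the minimizer over `y` of `φ(x,y) + (L/2)‖y − x‖²`. -/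
theorem global_sublinear_convergence_adaptive_tau
    {n m : ℕ}
    (F : EuclideanSpace ℝ (Fin n) → EuclideanSpace ℝ (Fin m))
    (F' : EuclideanSpace ℝ (Fin n) →
      EuclideanSpace ℝ (Fin n) →L[ℝ] EuclideanSpace ℝ (Fin m))
    (hF : ∀ x, HasFDerivAt F (F' x) x)
    (LF : ℝ) (hLF : 0 < LF)
    (hLip : ∀ x y, ‖F' y - F' x‖ ≤ LF * ‖y - x‖)
    (S : ℝ → EuclideanSpace ℝ (Fin n) → EuclideanSpace ℝ (Fin n))
    (hS : ∀ (L : ℝ) (x : EuclideanSpace ℝ (Fin n)), 0 < L → ∀ y,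
      ‖F x + F' x (S L x - x)‖ + L / 2 * ‖S L x - x‖ ^ 2
        ≤ ‖F x + F' x (y - x)‖ + L / 2 * ‖y - x‖ ^ 2)
    (L ε : ℝ) (hL0 : 0 < L) (hLLF : L ≤ LF) (hε : 0 ≤ ε)
    (k : ℕ) (hk : 1 ≤ k) (r : ℝ) (hr : 0 < r)
    (x : ℕ → EuclideanSpace ℝ (Fin n)) (Lk τs : ℕ → ℝ)
    (hτs : ∀ i < k, 0 < τs i)
    (hLk : ∀ i < k, L ≤ Lk i ∧ Lk i ≤ 2 * LF)
    (hstep : ∀ i < k, psi F F' (x i) (Lk i) (τs i) (x (i + 1))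
        ≤ ε + sInf (Set.range fun y =>
            ‖F (x i) + F' (x i) (y - x i)‖ + Lk i / 2 * ‖y - x i‖ ^ 2))
    (hmono : ∀ i < k, psi F F' (x i) (Lk i) (τs i) (x (i + 1)) ≤ ‖F (x i)‖)
    (hub : ∀ i < k, ‖F (x (i + 1))‖ ≤ psi F F' (x i) (Lk i) (τs i) (x (i + 1))) :
    (Finset.range k).inf' (Finset.nonempty_range_iff.mpr (Nat.one_le_iff_ne_zero.mp hk))
        (fun i => ‖(2 * LF) • (S (2 * LF) (x i) - x i)‖ ^ 2)
      ≤ 8 * LF ^ 2 / L * (ε + (‖F (x 0)‖ - ‖F (x k)‖) / (k : ℝ))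
    ∧ (Finset.range k).inf' (Finset.nonempty_range_iff.mpr (Nat.one_le_iff_ne_zero.mp hk))
        (fun i => 2 * (LF * r) ^ 2 * kappa (DeltaTilde F F' r (x i) / (2 * LF * r ^ 2)))
      ≤ LF * (ε + (‖F (x 0)‖ - ‖F (x k)‖) / (k : ℝ)) := by
  have hne := Finset.nonempty_range_iff.mpr (Nat.one_le_iff_ne_zero.mp hk)
  have hk0 : (0:ℝ) < (k : ℝ) := by exact_mod_cast hk
  have hkne : (k : ℝ) ≠ 0 := hk0.ne'
  set Dlt : ℕ → ℝ := fun i => ‖F (x i)‖ - sInf (Set.range fun y =>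
    ‖F (x i) + F' (x i) (y - x i)‖ + Lk i / 2 * ‖y - x i‖ ^ 2) with hDlt
  have hLk0 : ∀ i < k, (0:ℝ) ≤ Lk i / 2 := fun i hi => by linarith [(hLk i hi).1]
  have hD_nonneg : ∀ i < k, 0 ≤ Dlt i := by
    intro i hi
    have h1 : sInf (Set.range fun y =>
        ‖F (x i) + F' (x i) (y - x i)‖ + Lk i / 2 * ‖y - x i‖ ^ 2) ≤ ‖F (x i)‖ := by
      have := csInf_le (bdd_range (F (x i)) (F' (x i)) (x i) (hLk0 i hi))
        (Set.mem_range_self (x i))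
      simpa using this
    simp only [hDlt]; linarith
  have hDle : ∀ i < k, Dlt i ≤ ε + (‖F (x i)‖ - ‖F (x (i + 1))‖) := by
    intro i hi
    have h1 := hstep i hi
    have h2 := hub i hi
    simp only [hDlt]; linarith
  have hsum : ∑ i ∈ Finset.range k, Dlt i ≤ k * ε + (‖F (x 0)‖ - ‖F (x k)‖) := by
    calc ∑ i ∈ Finset.range k, Dlt i
        ≤ ∑ i ∈ Finset.range k, (ε + (‖F (x i)‖ - ‖F (x (i + 1))‖)) :=
          Finset.sum_le_sum fun i hi => hDle i (Finset.mem_range.mp hi)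
      _ = k * ε + (‖F (x 0)‖ - ‖F (x k)‖) := by
          rw [Finset.sum_add_distrib, Finset.sum_const, Finset.card_range,
            Finset.sum_range_sub' (fun i => ‖F (x i)‖), nsmul_eq_mul]
  have havg : 0 ≤ ε + (‖F (x 0)‖ - ‖F (x k)‖) / (k : ℝ) := by
    have h0 : 0 ≤ ∑ i ∈ Finset.range k, Dlt i :=
      Finset.sum_nonneg fun i hi => hD_nonneg i (Finset.mem_range.mp hi)
    have h1 : 0 ≤ (k : ℝ) * ε + (‖F (x 0)‖ - ‖F (x k)‖) := le_trans h0 hsum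
    have h2 : ε + (‖F (x 0)‖ - ‖F (x k)‖) / (k : ℝ)
        = ((k : ℝ) * ε + (‖F (x 0)‖ - ‖F (x k)‖)) / (k : ℝ) := by
      field_simp
    rw [h2]; exact div_nonneg h1 hk0.le
  have hDhat : ∀ i < k, ‖F (x i)‖ - sInf (Set.range fun y =>
      ‖F (x i) + F' (x i) (y - x i)‖ + LF * ‖y - x i‖ ^ 2) ≤ Dlt i := by
    intro i hi
    have h1 := sInf_mono_coeff (F (x i)) (F' (x i)) (x i) (hLk0 i hi)
      (by linarith [(hLk i hi).2] : Lk i / 2 ≤ LF)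
    simp only [hDlt]; linarith
  have hA : ∀ i < k, ‖(2 * LF) • (S (2 * LF) (x i) - x i)‖ ^ 2 ≤ 4 * LF * Dlt i := by
    intro i hi
    have h1 := prox_bound (F (x i)) (F' (x i)) (x i) (S (2 * LF) (x i)) hLF
      (hS (2 * LF) (x i) (by positivity))
    have h2 := mul_le_mul_of_nonneg_left (hDhat i hi) (by positivity : (0:ℝ) ≤ 4 * LF)
    linarith
  have hB : ∀ i < k, 2 * (LF * r) ^ 2 * kappa (DeltaTilde F F' r (x i) / (2 * LF * r ^ 2))
      ≤ LF * Dlt i := by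
    intro i hi
    have h1 := kappa_bound (F (x i)) (F' (x i)) (x i) hLF hr
    have h2 := mul_le_mul_of_nonneg_left (le_trans h1 (hDhat i hi)) hLF.le
    have h3 : DeltaTilde F F' r (x i) = ‖F (x i)‖ -
        sInf ((fun y => ‖F (x i) + F' (x i) (y - x i)‖) '' Metric.closedBall (x i) r) := rfl
    rw [h3]
    nlinarith [h2]
  have hrw : ε + (‖F (x 0)‖ - ‖F (x k)‖) / (k : ℝ)
      = ((k : ℝ) * ε + (‖F (x 0)‖ - ‖F (x k)‖)) / (k : ℝ) := by
    field_simp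
  constructor
  · set Q := (Finset.range k).inf'
      (Finset.nonempty_range_iff.mpr (Nat.one_le_iff_ne_zero.mp hk))
      (fun i => ‖(2 * LF) • (S (2 * LF) (x i) - x i)‖ ^ 2) with hQ
    have hks : (k : ℝ) * Q ≤ ∑ j ∈ Finset.range k, 4 * LF * Dlt j := by
      have := Finset.card_nsmul_le_sum (Finset.range k) (fun j => 4 * LF * Dlt j) Q
        (fun j hj => le_trans (Finset.inf'_le _ hj) (hA j (Finset.mem_range.mp hj)))
      simpa [Finset.card_range, nsmul_eq_mul] using this
    have hsum2 : ∑ j ∈ Finset.range k, 4 * LF * Dlt j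
        ≤ 4 * LF * ((k : ℝ) * ε + (‖F (x 0)‖ - ‖F (x k)‖)) := by
      rw [← Finset.mul_sum]
      exact mul_le_mul_of_nonneg_left hsum (by positivity)
    have hQle : Q ≤ 4 * LF * (ε + (‖F (x 0)‖ - ‖F (x k)‖) / (k : ℝ)) := by
      rw [hrw, ← mul_div_assoc, le_div_iff₀ hk0]
      nlinarith [hks, hsum2]
    have hcoef : 4 * LF ≤ 8 * LF ^ 2 / L := by
      rw [le_div_iff₀ hL0]; nlinarith
    calc Q ≤ 4 * LF * (ε + (‖F (x 0)‖ - ‖F (x k)‖) / (k : ℝ)) := hQle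
      _ ≤ 8 * LF ^ 2 / L * (ε + (‖F (x 0)‖ - ‖F (x k)‖) / (k : ℝ)) :=
        mul_le_mul_of_nonneg_right hcoef havg
  · set Q := (Finset.range k).inf'
      (Finset.nonempty_range_iff.mpr (Nat.one_le_iff_ne_zero.mp hk))
      (fun i => 2 * (LF * r) ^ 2 * kappa (DeltaTilde F F' r (x i) / (2 * LF * r ^ 2))) with hQ
    have hks : (k : ℝ) * Q ≤ ∑ j ∈ Finset.range k, LF * Dlt j := by
      have := Finset.card_nsmul_le_sum (Finset.range k) (fun j => LF * Dlt j) Q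
        (fun j hj => le_trans (Finset.inf'_le _ hj) (hB j (Finset.mem_range.mp hj)))
      simpa [Finset.card_range, nsmul_eq_mul] using this
    have hsum2 : ∑ j ∈ Finset.range k, LF * Dlt j
        ≤ LF * ((k : ℝ) * ε + (‖F (x 0)‖ - ‖F (x k)‖)) := by
      rw [← Finset.mul_sum]
      exact mul_le_mul_of_nonneg_left hsum hLF.le
    rw [hrw, ← mul_div_assoc, le_div_iff₀ hk0]
    nlinarith [hks, hsum2]
end
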